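/- arXiv:1401.3801 — 17 statements merged into one kernel-verified Lean document; each statement's English description precedes it below -/
import Mathlib

section
/- Let X be a nonempty finite set, M : X × X → ℝ a matrix with nonnegative entries, λ > 0 a real number, and v : X → ℝ a vector with v(x) ≥ 1 for all x satisfying Σ_{x∈X} M(x, x̄) v(x) = λ v(x̄) for every x̄ ∈ X (i.e., v is an eigenvector of the transpose of M with eigenvalue λ). Then for every vector w : X → ℝ with w(x) ≥ 0 for all x and every natural number n, λ^n · (Σ_x v(x) w(x)) / (max_x v(x)) ≤ Σ_{x, x̄ ∈ X} (M^n)(x, x̄) w(x̄) ≤ λ^n · Σ_x v(x) w(x). -/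
private lemma aux_nn {X : Type*} [Fintype X] [DecidableEq X]
    (M : Matrix X X ℝ) (hM : ∀ x x', 0 ≤ M x x') (n : ℕ) :
    ∀ x x', 0 ≤ (M ^ n) x x' := by
  induction n with
  | zero =>
    intro x x'
    simp [pow_zero, Matrix.one_apply]
    positivity
  | succ k ih =>
    intro x x'
    rw [pow_succ, Matrix.mul_apply]
    exact Finset.sum_nonneg fun y _ => mul_nonneg (ih x y) (hM y x')

private lemma aux_pow {X : Type*} [Fintype X] [DecidableEq X]
    (M : Matrix X X ℝ) (lam : ℝ) (v : X → ℝ)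
    (heig : ∀ x', ∑ x, M x x' * v x = lam * v x') (n : ℕ) :
    ∀ x', ∑ x, (M ^ n) x x' * v x = lam ^ n * v x' := by
  induction n with
  | zero =>
    intro x'
    simp [Matrix.one_apply]
  | succ k ih =>
    intro x'
    have h1 : ∑ x, (M ^ (k+1)) x x' * v x
        = ∑ y, (∑ x, (M ^ k) x y * v x) * M y x' := by
      simp only [pow_succ, Matrix.mul_apply, Finset.sum_mul]
      rw [Finset.sum_comm]
      exact Finset.sum_congr rfl fun y _ => Finset.sum_congr rfl fun x _ => by ring
    rw [h1, Finset.sum_congr rfl fun y _ => by rw [ih y]]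
    have h2 : ∑ y, lam ^ k * v y * M y x' = lam ^ k * ∑ y, M y x' * v y := by
      rw [Finset.mul_sum]
      exact Finset.sum_congr rfl fun y _ => by ring
    rw [h2, heig, pow_succ]
    ring

/-- finite-length evaluation of the weighted sums `⟨u, Mⁿ w⟩`
via a positive eigenvector `v` of the transpose of `M`. -/
theorem stmt_0 {X : Type*} [Fintype X] [DecidableEq X] [Nonempty X]
    (M : Matrix X X ℝ) (hM : ∀ x x', 0 ≤ M x x')
    (lam : ℝ) (hlam : 0 < lam)
    (v : X → ℝ) (hv : ∀ x, 1 ≤ v x)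
    (heig : ∀ x', ∑ x, M x x' * v x = lam * v x')
    (w : X → ℝ) (hw : ∀ x, 0 ≤ w x) (n : ℕ) :
    lam ^ n * (∑ x, v x * w x) / (Finset.univ.sup' Finset.univ_nonempty v)
      ≤ ∑ x, ∑ x', (M ^ n) x x' * w x' ∧
    ∑ x, ∑ x', (M ^ n) x x' * w x' ≤ lam ^ n * ∑ x, v x * w x := by
  have hAnn : ∀ x x', 0 ≤ (M ^ n) x x' := aux_nn M hM n
  have hpow : ∀ x', ∑ x, (M ^ n) x x' * v x = lam ^ n * v x' := aux_pow M lam v heig n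
  set mv := Finset.univ.sup' Finset.univ_nonempty v with hmv
  have hle_mv : ∀ x, v x ≤ mv := fun x => Finset.le_sup' v (Finset.mem_univ x)
  have hmv_pos : 0 < mv := lt_of_lt_of_le one_pos (le_trans (hv (Classical.arbitrary X)) (hle_mv _))
  -- swap sums
  have hswap : ∑ x, ∑ x', (M ^ n) x x' * w x' = ∑ x', (∑ x, (M ^ n) x x') * w x' := by
    rw [Finset.sum_comm]
    simp [Finset.sum_mul]
  constructor
  · rw [div_le_iff₀ hmv_pos, hswap]
    have : lam ^ n * ∑ x, v x * w x = ∑ x', (∑ x, (M ^ n) x x' * v x) * w x' := by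
      simp only [hpow, Finset.mul_sum]
      apply Finset.sum_congr rfl
      intro x _
      ring
    rw [this, Finset.sum_mul]
    apply Finset.sum_le_sum
    intro x' _
    have h1 : ∑ x, (M ^ n) x x' * v x ≤ (∑ x, (M ^ n) x x') * mv := by
      rw [Finset.sum_mul]
      apply Finset.sum_le_sum
      intro x _
      exact mul_le_mul_of_nonneg_left (hle_mv x) (hAnn x x')
    calc (∑ x, (M ^ n) x x' * v x) * w x'
        ≤ ((∑ x, (M ^ n) x x') * mv) * w x' :=
          mul_le_mul_of_nonneg_right h1 (hw x')
      _ = (∑ x, (M ^ n) x x') * w x' * mv := by ring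
  · rw [hswap]
    have : lam ^ n * ∑ x, v x * w x = ∑ x', (∑ x, (M ^ n) x x' * v x) * w x' := by
      simp only [hpow, Finset.mul_sum]
      apply Finset.sum_congr rfl
      intro x _
      ring
    rw [this]
    apply Finset.sum_le_sum
    intro x' _
    apply mul_le_mul_of_nonneg_right ?_ (hw x')
    apply Finset.sum_le_sum
    intro x _
    nth_rewrite 1 [← mul_one ((M ^ n) x x')]
    exact mul_le_mul_of_nonneg_left (hv x) (hAnn x x')
end

section
/- Let X be a nonempty finite set, M : X × X → ℝ a matrix with nonnegative entries, λ > 0 a real number, and v : X → ℝ a vector with v(x) ≥ 1 for all x satisfying Σ_{x∈X} M(x, x̄) v(x) = λ v(x̄) for every x̄ ∈ X. Let w : X → ℝ be a vector with w(x) ≥ 0 for all x and Σ_x w(x) > 0. Then lim_{n→∞} (1/n) · log ( Σ_{x, x̄ ∈ X} (M^n)(x, x̄) w(x̄) ) = log λ. -/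
/-- the normalized logarithm of `⟨u, Mⁿ w⟩` converges to `log λ`,
where `λ` is a positive eigenvalue of the transpose of `M` with eigenvector `v ≥ 1`. -/
theorem stmt_1 {X : Type*} [Fintype X] [DecidableEq X] [Nonempty X]
    (M : Matrix X X ℝ) (hM : ∀ x x', 0 ≤ M x x')
    (lam : ℝ) (hlam : 0 < lam)
    (v : X → ℝ) (hv : ∀ x, 1 ≤ v x)
    (heig : ∀ x', ∑ x, M x x' * v x = lam * v x')
    (w : X → ℝ) (hw : ∀ x, 0 ≤ w x) (hwpos : 0 < ∑ x, w x) :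
    Filter.Tendsto
      (fun n : ℕ => (1 / (n : ℝ)) * Real.log (∑ x, ∑ x', (M ^ n) x x' * w x'))
      Filter.atTop (nhds (Real.log lam)) := by
  classical
  set V : ℝ := ∑ x, v x with hV
  have hv0 : ∀ x, (0:ℝ) ≤ v x := fun x => le_trans zero_le_one (hv x)
  have hVpos : 0 < V := by
    obtain ⟨x0⟩ := (inferInstance : Nonempty X)
    have := Finset.single_le_sum (f := v) (fun i _ => hv0 i) (Finset.mem_univ x0)
    linarith [hv x0]
  have hvV : ∀ x, v x ≤ V :=
    fun x => Finset.single_le_sum (f := v) (fun i _ => hv0 i) (Finset.mem_univ x)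
  have hpow_nonneg : ∀ n (x x' : X), 0 ≤ (M ^ n) x x' := by
    intro n
    induction n with
    | zero =>
      intro x x'
      simp only [pow_zero, Matrix.one_apply]
      split <;> norm_num
    | succ n ih =>
      intro x x'
      rw [pow_succ, Matrix.mul_apply]
      exact Finset.sum_nonneg fun y _ => mul_nonneg (ih x y) (hM y x')
  have hpow_eig : ∀ n (x' : X), ∑ x, (M ^ n) x x' * v x = lam ^ n * v x' := by
    intro n
    induction n with
    | zero =>
      intro x'
      simp [Matrix.one_apply, ite_mul]
    | succ n ih =>
      intro x'
      have : ∑ x, (M ^ (n+1)) x x' * v x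
          = ∑ y, M y x' * (∑ x, (M ^ n) x y * v x) := by
        simp only [pow_succ, Matrix.mul_apply, Finset.sum_mul, Finset.mul_sum]
        rw [Finset.sum_comm]
        apply Finset.sum_congr rfl
        intro y _
        apply Finset.sum_congr rfl
        intro x _
        ring
      rw [this]
      simp only [ih]
      have : ∑ y, M y x' * (lam ^ n * v y) = lam ^ n * ∑ y, M y x' * v y := by
        rw [Finset.mul_sum]
        apply Finset.sum_congr rfl
        intro y _
        ring
      rw [this, heig x']
      ring
  -- column sums bounds
  have hcol_lb : ∀ n (x' : X), lam ^ n / V ≤ ∑ x, (M ^ n) x x' := by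
    intro n x'
    have h1 : lam ^ n * v x' ≤ V * ∑ x, (M ^ n) x x' := by
      rw [← hpow_eig n x', Finset.mul_sum]
      apply Finset.sum_le_sum
      intro x _
      calc (M ^ n) x x' * v x ≤ (M ^ n) x x' * V :=
            mul_le_mul_of_nonneg_left (hvV x) (hpow_nonneg n x x')
        _ = V * (M ^ n) x x' := by ring
    have h2 : lam ^ n ≤ lam ^ n * v x' :=
      le_mul_of_one_le_right (le_of_lt (pow_pos hlam n)) (hv x')
    rw [div_le_iff₀ hVpos]
    calc lam ^ n ≤ lam ^ n * v x' := h2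
      _ ≤ V * ∑ x, (M ^ n) x x' := h1
      _ = (∑ x, (M ^ n) x x') * V := by ring
  have hcol_ub : ∀ n (x' : X), ∑ x, (M ^ n) x x' ≤ lam ^ n * v x' := by
    intro n x'
    rw [← hpow_eig n x']
    apply Finset.sum_le_sum
    intro x _
    exact le_mul_of_one_le_right (hpow_nonneg n x x') (hv x)
  set S : ℕ → ℝ := fun n => ∑ x, ∑ x', (M ^ n) x x' * w x' with hS
  have hSswap : ∀ n, S n = ∑ x', w x' * ∑ x, (M ^ n) x x' := by
    intro n
    rw [hS]
    simp only
    rw [Finset.sum_comm]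
    apply Finset.sum_congr rfl
    intro x' _
    rw [Finset.mul_sum]
    apply Finset.sum_congr rfl
    intro x _
    ring
  set c : ℝ := (∑ x, w x) / V with hc
  set C : ℝ := ∑ x', w x' * v x' with hCdef
  have hcpos : 0 < c := div_pos hwpos hVpos
  have hCpos : 0 < C := by
    have : (∑ x, w x) ≤ C := by
      apply Finset.sum_le_sum
      intro x _
      exact le_mul_of_one_le_right (hw x) (hv x)
    linarith
  have hSlb : ∀ n, lam ^ n * c ≤ S n := by
    intro n
    rw [hSswap n, hc]
    have : lam ^ n * ((∑ x, w x) / V) = ∑ x', w x' * (lam ^ n / V) := by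
      rw [← Finset.sum_mul]
      ring
    rw [this]
    apply Finset.sum_le_sum
    intro x' _
    exact mul_le_mul_of_nonneg_left (hcol_lb n x') (hw x')
  have hSub : ∀ n, S n ≤ lam ^ n * C := by
    intro n
    rw [hSswap n, hCdef, Finset.mul_sum]
    apply Finset.sum_le_sum
    intro x' _
    calc w x' * ∑ x, (M ^ n) x x' ≤ w x' * (lam ^ n * v x') :=
          mul_le_mul_of_nonneg_left (hcol_ub n x') (hw x')
      _ = lam ^ n * (w x' * v x') := by ring
  have hSpos : ∀ n, 0 < S n := fun n =>
    lt_of_lt_of_le (mul_pos (pow_pos hlam n) hcpos) (hSlb n)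
  -- squeeze
  have hlim_lb : Filter.Tendsto (fun n : ℕ => Real.log lam + (1 / (n:ℝ)) * Real.log c)
      Filter.atTop (nhds (Real.log lam)) := by
    have h0 : Filter.Tendsto (fun n : ℕ => (1 / (n:ℝ)) * Real.log c)
        Filter.atTop (nhds 0) := by
      have := tendsto_one_div_atTop_nhds_zero_nat.mul_const (Real.log c)
      simpa using this
    have := (tendsto_const_nhds (x := Real.log lam) (f := Filter.atTop (α := ℕ))).add h0
    simpa using this
  have hlim_ub : Filter.Tendsto (fun n : ℕ => Real.log lam + (1 / (n:ℝ)) * Real.log C)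
      Filter.atTop (nhds (Real.log lam)) := by
    have h0 : Filter.Tendsto (fun n : ℕ => (1 / (n:ℝ)) * Real.log C)
        Filter.atTop (nhds 0) := by
      have := tendsto_one_div_atTop_nhds_zero_nat.mul_const (Real.log C)
      simpa using this
    have := (tendsto_const_nhds (x := Real.log lam) (f := Filter.atTop (α := ℕ))).add h0
    simpa using this
  apply tendsto_of_tendsto_of_tendsto_of_le_of_le' hlim_lb hlim_ub
  · filter_upwards [Filter.eventually_ge_atTop 1] with n hn
    have hn0 : (n:ℝ) ≠ 0 := by positivity
    have hlog : Real.log (lam ^ n * c) ≤ Real.log (S n) :=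
      Real.log_le_log (mul_pos (pow_pos hlam n) hcpos) (hSlb n)
    rw [Real.log_mul (by positivity) (ne_of_gt hcpos), Real.log_pow] at hlog
    have : Real.log lam + (1 / (n:ℝ)) * Real.log c
        = (1 / (n:ℝ)) * ((n:ℝ) * Real.log lam + Real.log c) := by
      field_simp
    rw [this]
    have h1n : (0:ℝ) ≤ 1 / (n:ℝ) := by positivity
    exact mul_le_mul_of_nonneg_left (by exact_mod_cast hlog) h1n
  · filter_upwards [Filter.eventually_ge_atTop 1] with n hn
    have hn0 : (n:ℝ) ≠ 0 := by positivity
    have hlog : Real.log (S n) ≤ Real.log (lam ^ n * C) :=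
      Real.log_le_log (hSpos n) (hSub n)
    rw [Real.log_mul (by positivity) (ne_of_gt hCpos), Real.log_pow] at hlog
    have : Real.log lam + (1 / (n:ℝ)) * Real.log C
        = (1 / (n:ℝ)) * ((n:ℝ) * Real.log lam + Real.log C) := by
      field_simp
    rw [this]
    have h1n : (0:ℝ) ≤ 1 / (n:ℝ) := by positivity
    exact mul_le_mul_of_nonneg_left (by exact_mod_cast hlog) h1n
end

section
/- Let X be a nonempty finite set, W a transition matrix on X (W(x|x̄) ≥ 0 and Σ_x W(x|x̄) = 1 for every x̄), P a probability distribution on X, and g : X × X → ℝ, h : X → ℝ. For n ≥ 1 let Q_n be the probability distribution on X^{n+1} defined by Q_n(x_1, …, x_{n+1}) := P(x_1) · ∏_{i=1}^n W(x_{i+1}|x_i). Let θ ≥ 0, and suppose λ_θ > 0 and v_θ : X → ℝ with v_θ(x) ≥ 1 for all x satisfy Σ_x W(x|x̄) e^{θ g(x, x̄)} v_θ(x) = λ_θ v_θ(x̄) for every x̄ ∈ X. Set δ̄(θ) := log Σ_x v_θ(x) P(x) e^{θ h(x)}. Then for every a ∈ ℝ and every n ≥ 1, Q_n{ (x_1,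 …, x_{n+1}) : Σ_{i=1}^n g(x_{i+1}, x_i) + h(x_1) ≥ n a } ≤ exp( n log λ_θ + δ̄(θ) − n θ a ). -/
open scoped Classical

lemma stmt2_key {X : Type*} [Fintype X] (W : X → X → ℝ) (P : X → ℝ) (g : X → X → ℝ) (h : X → ℝ)
    (θ lam : ℝ) (v : X → ℝ)
    (heig : ∀ x', ∑ x, W x x' * Real.exp (θ * g x x') * v x = lam * v x') :
    ∀ n : ℕ, ∑ x : Fin (n+1) → X,
      P (x 0) * Real.exp (θ * h (x 0)) *
        (∏ i : Fin n, (W (x i.succ) (x i.castSucc) * Real.exp (θ * g (x i.succ) (x i.castSucc)))) *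
        v (x (Fin.last n))
      = lam ^ n * ∑ x : X, P x * Real.exp (θ * h x) * v x := by
  intro n
  induction n with
  | zero =>
      rw [← Equiv.sum_comp (Equiv.funUnique (Fin 1) X).symm]
      simp
  | succ n ih =>
      rw [← (Fin.snocEquiv (fun _ : Fin (n+2) => X)).sum_comp]
      rw [Fintype.sum_prod_type_right]
      have : ∀ p : Fin (n+1) → X, ∀ z : X,
          (fun x : Fin (n+2) → X => P (x 0) * Real.exp (θ * h (x 0)) *
            (∏ i : Fin (n+1), (W (x i.succ) (x i.castSucc) * Real.exp (θ * g (x i.succ) (x i.castSucc)))) *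
            v (x (Fin.last (n+1)))) (Fin.snocEquiv (fun _ : Fin (n+2) => X) (z, p))
          = P (p 0) * Real.exp (θ * h (p 0)) *
            (∏ i : Fin n, (W (p i.succ) (p i.castSucc) * Real.exp (θ * g (p i.succ) (p i.castSucc)))) *
            ((W z (p (Fin.last n)) * Real.exp (θ * g z (p (Fin.last n)))) * v z) := by
        intro p z
        have hsnoc : (Fin.snocEquiv (fun _ : Fin (n+2) => X) (z, p)) = Fin.snoc p z := rfl
        rw [hsnoc]
        beta_reduce
        rw [Fin.prod_univ_castSucc]
        have h0 : (Fin.snoc p z : Fin (n+2) → X) 0 = p 0 := by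
          have : (0 : Fin (n+2)) = Fin.castSucc 0 := rfl
          rw [this, Fin.snoc_castSucc]
        rw [h0]
        have hlast2 : (Fin.snoc p z : Fin (n+2) → X) (Fin.last (n+1)) = z := Fin.snoc_last _ _
        have hls : (Fin.snoc p z : Fin (n+2) → X) (Fin.last n).succ = z := by
          rw [Fin.succ_last]; exact Fin.snoc_last _ _
        have hlc : (Fin.snoc p z : Fin (n+2) → X) ((Fin.last n).castSucc) = p (Fin.last n) :=
          Fin.snoc_castSucc _ _ _
        rw [hlast2, hls, hlc]
        have hprod : ∀ j : Fin n,
            (W ((Fin.snoc p z : Fin (n+2) → X) (j.castSucc).succ) ((Fin.snoc p z : Fin (n+2) → X) (j.castSucc).castSucc)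
              * Real.exp (θ * g ((Fin.snoc p z : Fin (n+2) → X) (j.castSucc).succ) ((Fin.snoc p z : Fin (n+2) → X) (j.castSucc).castSucc)))
            = (W (p j.succ) (p j.castSucc) * Real.exp (θ * g (p j.succ) (p j.castSucc))) := by
          intro j
          rw [Fin.succ_castSucc, Fin.snoc_castSucc, Fin.snoc_castSucc]
        rw [Finset.prod_congr rfl (fun j _ => hprod j)]
        ring
      calc ∑ p : Fin (n+1) → X, ∑ z : X, _ = ∑ p : Fin (n+1) → X,
            lam * (P (p 0) * Real.exp (θ * h (p 0)) *
            (∏ i : Fin n, (W (p i.succ) (p i.castSucc) * Real.exp (θ * g (p i.succ) (p i.castSucc)))) *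
            v (p (Fin.last n))) := by
              refine Finset.sum_congr rfl (fun p _ => ?_)
              rw [Finset.sum_congr rfl (fun z _ => this p z)]
              rw [← Finset.mul_sum, heig]
              ring
        _ = lam ^ (n+1) * ∑ x : X, P x * Real.exp (θ * h x) * v x := by
              rw [← Finset.mul_sum, ih]; ring

/-- finite-length Chernoff-type upper bound on the upper tail
probability of the sample sum `∑ g(x_{i+1}, x_i) + h(x_1)` of a Markov chain. -/
theorem stmt_2 {X : Type*} [Fintype X] [Nonempty X]
    (W : X → X → ℝ) (hW0 : ∀ x x', 0 ≤ W x x') (hW1 : ∀ x', ∑ x, W x x' = 1)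
    (P : X → ℝ) (hP0 : ∀ x, 0 ≤ P x) (hP1 : ∑ x, P x = 1)
    (g : X → X → ℝ) (h : X → ℝ)
    (θ : ℝ) (hθ : 0 ≤ θ)
    (lam : ℝ) (hlam : 0 < lam)
    (v : X → ℝ) (hv : ∀ x, 1 ≤ v x)
    (heig : ∀ x', ∑ x, W x x' * Real.exp (θ * g x x') * v x = lam * v x')
    (a : ℝ) (n : ℕ) (hn : 1 ≤ n) :
    ∑ x ∈ Finset.univ.filter (fun x : Fin (n + 1) → X =>
        (n : ℝ) * a ≤ (∑ i : Fin n, g (x i.succ) (x i.castSucc)) + h (x 0)),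
      P (x 0) * ∏ i : Fin n, W (x i.succ) (x i.castSucc)
    ≤ Real.exp ((n : ℝ) * Real.log lam
        + Real.log (∑ x, v x * (P x * Real.exp (θ * h x)))
        - (n : ℝ) * θ * a) := by
  obtain ⟨x0, hx0⟩ : ∃ x, 0 < P x := by
    by_contra hc
    push_neg at hc
    have : ∑ x, P x ≤ 0 := Finset.sum_nonpos fun x _ => hc x
    rw [hP1] at this; linarith
  set Sg : ℝ := ∑ x, v x * (P x * Real.exp (θ * h x)) with hSg
  have hSgpos : 0 < Sg := by
    refine Finset.sum_pos' (fun x _ => ?_) ⟨x0, Finset.mem_univ x0, ?_⟩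
    · exact mul_nonneg (le_trans zero_le_one (hv x))
        (mul_nonneg (hP0 x) (Real.exp_pos _).le)
    · exact mul_pos (lt_of_lt_of_le one_pos (hv x0))
        (mul_pos hx0 (Real.exp_pos _))
  have hQ0 : ∀ x : Fin (n+1) → X, 0 ≤ P (x 0) * ∏ i : Fin n, W (x i.succ) (x i.castSucc) :=
    fun x => mul_nonneg (hP0 _) (Finset.prod_nonneg fun i _ => hW0 _ _)
  set c : ℝ := (n : ℝ) * θ * a with hc
  have step1 : ∑ x ∈ Finset.univ.filter (fun x : Fin (n + 1) → X =>
        (n : ℝ) * a ≤ (∑ i : Fin n, g (x i.succ) (x i.castSucc)) + h (x 0)),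
      P (x 0) * ∏ i : Fin n, W (x i.succ) (x i.castSucc)
      ≤ ∑ x : Fin (n+1) → X,
        (P (x 0) * ∏ i : Fin n, W (x i.succ) (x i.castSucc)) *
          (Real.exp (θ * ((∑ i : Fin n, g (x i.succ) (x i.castSucc)) + h (x 0)) - c) *
            v (x (Fin.last n))) := by
    refine le_trans (Finset.sum_le_sum (fun x hx => ?_))
      (Finset.sum_le_sum_of_subset_of_nonneg (Finset.filter_subset _ _)
        (fun x _ _ => mul_nonneg (hQ0 x)
          (mul_nonneg (Real.exp_pos _).le (le_trans zero_le_one (hv _)))))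
    rw [Finset.mem_filter] at hx
    have hx' := hx.2
    have h1 : (1:ℝ) ≤ Real.exp (θ * ((∑ i : Fin n, g (x i.succ) (x i.castSucc)) + h (x 0)) - c) := by
      refine Real.one_le_exp ?_
      have := mul_le_mul_of_nonneg_left hx' hθ
      rw [hc]; nlinarith
    refine le_mul_of_one_le_right (hQ0 x) ?_
    calc (1:ℝ) ≤ Real.exp _ := h1
      _ ≤ _ := le_mul_of_one_le_right (Real.exp_pos _).le (hv _)
  have step2 : ∑ x : Fin (n+1) → X,
        (P (x 0) * ∏ i : Fin n, W (x i.succ) (x i.castSucc)) *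
          (Real.exp (θ * ((∑ i : Fin n, g (x i.succ) (x i.castSucc)) + h (x 0)) - c) *
            v (x (Fin.last n)))
      = Real.exp (-c) * (lam ^ n * Sg) := by
    have termeq : ∀ x : Fin (n+1) → X,
        (P (x 0) * ∏ i : Fin n, W (x i.succ) (x i.castSucc)) *
          (Real.exp (θ * ((∑ i : Fin n, g (x i.succ) (x i.castSucc)) + h (x 0)) - c) *
            v (x (Fin.last n)))
        = Real.exp (-c) * (P (x 0) * Real.exp (θ * h (x 0)) *
            (∏ i : Fin n, (W (x i.succ) (x i.castSucc) *
              Real.exp (θ * g (x i.succ) (x i.castSucc)))) * v (x (Fin.last n))) := by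
      intro x
      rw [show θ * ((∑ i : Fin n, g (x i.succ) (x i.castSucc)) + h (x 0)) - c
          = (∑ i : Fin n, θ * g (x i.succ) (x i.castSucc)) + (θ * h (x 0) + -c) by
        rw [mul_add, Finset.mul_sum]; ring]
      rw [Real.exp_add, Real.exp_add, Real.exp_sum, Finset.prod_mul_distrib]
      ring
    rw [Finset.sum_congr rfl (fun x _ => termeq x), ← Finset.mul_sum,
      stmt2_key W P g h θ lam v heig n]
    congr 1
    congr 1
    exact Finset.sum_congr rfl fun x _ => by ring
  have hrhs : Real.exp ((n : ℝ) * Real.log lam + Real.log Sg - c)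
      = Real.exp (-c) * (lam ^ n * Sg) := by
    rw [sub_eq_add_neg, Real.exp_add, Real.exp_add, Real.exp_log hSgpos,
      Real.exp_nat_mul, Real.exp_log hlam]
    ring
  rw [hrhs]
  exact le_of_le_of_eq (le_trans step1 (le_of_eq step2)) rfl
end

section
/- Let P be a probability distribution on a nonempty finite set X and g : X → ℝ. Define φ(θ) := log Σ_x P(x) e^{θ g(x)}. (i) For every a ∈ ℝ and every θ ≥ 0: P{x : g(x) ≥ a} ≤ exp(φ(θ) − θ a); and for every θ ≤ 0: P{x : g(x) ≤ a} ≤ exp(φ(θ) − θ a). (ii) If moreover P(x) > 0 for all x, g is not constant, and θ_a ≥ 0 satisfies φ'(θ_a) = a, then sup_{θ ≥ 0} (θ a − φ(θ)) = θ_a a − φ(θ_a) = D(P_{θ_a} ‖ P), where P_θ(x) := P(x) e^{θ g(x) − φ(θ)} and D(Q‖R) := Σ_x Q(x) log(Q(x)/R(x)). -/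
open scoped Classical

/-- (i) Chernoff bound for the tail probabilities of `g` under `P`;
(ii) the Legendre transform `sup_{θ ≥ 0} (θa − φ(θ))` is attained at `θ_a` with
`φ'(θ_a) = a` and equals the relative entropy `D(P_{θ_a}‖P)` within the
exponential family generated by `g`. -/
theorem stmt_3 {X : Type*} [Fintype X] [Nonempty X]
    (P : X → ℝ) (hP0 : ∀ x, 0 ≤ P x) (hP1 : ∑ x, P x = 1)
    (g : X → ℝ)
    (φ : ℝ → ℝ) (hφ : ∀ θ, φ θ = Real.log (∑ x, P x * Real.exp (θ * g x))) :
    ((∀ a θ : ℝ, 0 ≤ θ →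
        ∑ x ∈ Finset.univ.filter (fun x => a ≤ g x), P x ≤ Real.exp (φ θ - θ * a)) ∧
     (∀ a θ : ℝ, θ ≤ 0 →
        ∑ x ∈ Finset.univ.filter (fun x => g x ≤ a), P x ≤ Real.exp (φ θ - θ * a))) ∧
    ((∀ x, 0 < P x) → (¬ ∃ c : ℝ, ∀ x, g x = c) →
      ∀ a θa : ℝ, 0 ≤ θa → HasDerivAt φ a θa →
        IsGreatest {y : ℝ | ∃ θ : ℝ, 0 ≤ θ ∧ y = θ * a - φ θ} (θa * a - φ θa) ∧
        θa * a - φ θa =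
          ∑ x, (P x * Real.exp (θa * g x - φ θa)) *
            Real.log ((P x * Real.exp (θa * g x - φ θa)) / P x)) := by
  have hSpos : ∀ θ : ℝ, 0 < ∑ x, P x * Real.exp (θ * g x) := by
    intro θ
    obtain ⟨x0, hx0⟩ : ∃ x, 0 < P x := by
      by_contra h
      push_neg at h
      have h0 : ∑ x, P x = 0 :=
        Finset.sum_eq_zero (fun x _ => le_antisymm (h x) (hP0 x))
      rw [h0] at hP1; norm_num at hP1
    exact Finset.sum_pos' (fun x _ => mul_nonneg (hP0 x) (Real.exp_pos _).le)
      ⟨x0, Finset.mem_univ _, mul_pos hx0 (Real.exp_pos _)⟩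
  have hexpφ : ∀ θ, Real.exp (φ θ) = ∑ x, P x * Real.exp (θ * g x) := fun θ => by
    rw [hφ]; exact Real.exp_log (hSpos θ)
  have key : ∀ (a θ : ℝ) (s : Finset X), (∀ x ∈ s, θ * a ≤ θ * g x) →
      ∑ x ∈ s, P x ≤ Real.exp (φ θ - θ * a) := by
    intro a θ s hs
    have h1 : ∑ x ∈ s, P x ≤ ∑ x ∈ s, P x * Real.exp (θ * g x - θ * a) := by
      refine Finset.sum_le_sum fun x hx => ?_
      exact le_mul_of_one_le_right (hP0 x)
        (Real.one_le_exp (by linarith [hs x hx]))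
    have h2 : ∑ x ∈ s, P x * Real.exp (θ * g x - θ * a)
        ≤ ∑ x, P x * Real.exp (θ * g x - θ * a) :=
      Finset.sum_le_sum_of_subset_of_nonneg (Finset.subset_univ s)
        (fun x _ _ => mul_nonneg (hP0 x) (Real.exp_pos _).le)
    have h3 : ∑ x, P x * Real.exp (θ * g x - θ * a) = Real.exp (φ θ - θ * a) := by
      rw [Real.exp_sub, hexpφ, Finset.sum_div]
      exact Finset.sum_congr rfl fun x _ => by
        rw [Real.exp_sub]; ring
    linarith
  refine ⟨⟨fun a θ hθ => key a θ _ fun x hx => by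
      have := (Finset.mem_filter.mp hx).2
      exact mul_le_mul_of_nonneg_left this hθ,
    fun a θ hθ => key a θ _ fun x hx => by
      have := (Finset.mem_filter.mp hx).2
      exact mul_le_mul_of_nonpos_left this hθ⟩, ?_⟩
  intro hPpos _ a θa hθa hderiv
  set S : ℝ := ∑ x, P x * Real.exp (θa * g x) with hS
  set T : ℝ := ∑ x, P x * (Real.exp (θa * g x) * g x) with hT
  have hSpos' : 0 < S := hSpos θa
  -- compute the derivative of φ at θa
  have hSd : HasDerivAt (fun θ : ℝ => ∑ x, P x * Real.exp (θ * g x)) T θa := by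
    refine HasDerivAt.fun_sum fun x _ => ?_
    have h : HasDerivAt (fun θ : ℝ => Real.exp (θ * g x))
        (Real.exp (θa * g x) * g x) θa := by
      simpa using ((hasDerivAt_id θa).mul_const (g x)).exp
    simpa [mul_assoc] using h.const_mul (P x)
  have hφd : HasDerivAt φ (T / S) θa := by
    have hfun : φ = fun θ => Real.log (∑ x, P x * Real.exp (θ * g x)) := funext hφ
    rw [hfun]
    exact hSd.log (ne_of_gt hSpos')
  have ha : a = T / S := hderiv.unique hφd
  have haS : T = a * S := by rw [ha]; field_simp
  -- Jensen: for every θ, (θ - θa) * a ≤ φ θ - φ θa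
  have jensen : ∀ θ : ℝ, (θ - θa) * a ≤ φ θ - φ θa := by
    intro θ
    have hw0 : ∀ x ∈ (Finset.univ : Finset X),
        0 ≤ P x * Real.exp (θa * g x) / S := fun x _ =>
      div_nonneg (mul_nonneg (hP0 x) (Real.exp_pos _).le) hSpos'.le
    have hw1 : ∑ x, P x * Real.exp (θa * g x) / S = 1 := by
      rw [← Finset.sum_div, ← hS, div_self (ne_of_gt hSpos')]
    have hJ := convexOn_exp.map_sum_le (t := Finset.univ)
      (w := fun x => P x * Real.exp (θa * g x) / S)
      (p := fun x => (θ - θa) * g x) hw0 hw1 (fun x _ => trivial)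
    simp only [smul_eq_mul] at hJ
    have hmean : ∑ x, P x * Real.exp (θa * g x) / S * ((θ - θa) * g x)
        = (θ - θa) * a := by
      have hx : ∀ x : X, P x * Real.exp (θa * g x) / S * ((θ - θa) * g x)
          = (θ - θa) / S * (P x * (Real.exp (θa * g x) * g x)) := fun x => by ring
      simp only [hx]
      rw [← Finset.mul_sum, ← hT, ha, div_mul_eq_mul_div, mul_div_assoc]
    have hratio : ∑ x, P x * Real.exp (θa * g x) / S * Real.exp ((θ - θa) * g x)
        = (∑ x, P x * Real.exp (θ * g x)) / S := by
      rw [Finset.sum_div]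
      refine Finset.sum_congr rfl fun x _ => ?_
      rw [div_mul_eq_mul_div, mul_assoc, ← Real.exp_add]
      ring_nf
    rw [hmean, hratio] at hJ
    have hlog := Real.log_le_log (Real.exp_pos _) hJ
    rw [Real.log_exp, Real.log_div (ne_of_gt (hSpos θ)) (ne_of_gt hSpos')] at hlog
    rw [hφ θ, hφ θa]
    exact hlog
  constructor
  · constructor
    · exact ⟨θa, hθa, rfl⟩
    · rintro y ⟨θ, hθ, rfl⟩
      have := jensen θ
      nlinarith [this]
  · -- relative entropy identity
    have hterm : ∀ x, (P x * Real.exp (θa * g x - φ θa)) *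
        Real.log ((P x * Real.exp (θa * g x - φ θa)) / P x)
        = (θa * (P x * (Real.exp (θa * g x) * g x)) - φ θa * (P x * Real.exp (θa * g x))) / S := by
      intro x
      have hPx : P x ≠ 0 := ne_of_gt (hPpos x)
      rw [mul_comm (P x) (Real.exp (θa * g x - φ θa)), mul_div_assoc,
        div_self hPx, mul_one, Real.log_exp]
      have hE : Real.exp (θa * g x - φ θa) = Real.exp (θa * g x) / S := by
        rw [Real.exp_sub, hexpφ]
      rw [hE]
      field_simp
    rw [Finset.sum_congr rfl (fun x _ => hterm x), ← Finset.sum_div,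
      Finset.sum_sub_distrib, ← Finset.mul_sum, ← Finset.mul_sum, ← hT, ← hS, haS]
    field_simp
end

section
/- Let P be a probability distribution on a nonempty finite set X and g : X → ℝ, and define φ(θ) := log Σ_x P(x) e^{θ g(x)}. Let a ∈ ℝ, s > 0, θ ∈ ℝ, and θ̄ ≤ 0 be such that c := θ̄ a − φ(θ + θ̄) + φ(θ) > 0. Then P{x : g(x) ≥ a} ≥ (1 − e^{−c})^{(1+s)/s} · exp( −(φ((1+s)θ) − (1+s)φ(θ)) / s ). -/
open scoped Classical

/-- converse (lower) bound on the upper tail probability, via the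
monotonicity of the Rényi relative entropy. -/
theorem stmt_4 {X : Type*} [Fintype X] [Nonempty X]
    (P : X → ℝ) (hP0 : ∀ x, 0 ≤ P x) (hP1 : ∑ x, P x = 1)
    (g : X → ℝ)
    (φ : ℝ → ℝ) (hφ : ∀ θ, φ θ = Real.log (∑ x, P x * Real.exp (θ * g x)))
    (a s θ θbar : ℝ) (hs : 0 < s) (hθbar : θbar ≤ 0)
    (c : ℝ) (hc : c = θbar * a - φ (θ + θbar) + φ θ) (hcpos : 0 < c) :
    (1 - Real.exp (-c)) ^ ((1 + s) / s) *
      Real.exp (-(φ ((1 + s) * θ) - (1 + s) * φ θ) / s)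
    ≤ ∑ x ∈ Finset.univ.filter (fun x => a ≤ g x), P x := by
  classical
  set A := Finset.univ.filter (fun x => a ≤ g x) with hA
  obtain ⟨x₀, hx₀⟩ : ∃ x, 0 < P x := by
    by_contra h
    push_neg at h
    have h0 : ∑ x, P x = 0 :=
      Finset.sum_eq_zero fun x _ => le_antisymm (h x) (hP0 x)
    rw [hP1] at h0; norm_num at h0
  have hpos : ∀ t : ℝ, 0 < ∑ x, P x * Real.exp (t * g x) := fun t =>
    Finset.sum_pos' (fun x _ => mul_nonneg (hP0 x) (Real.exp_pos _).le)
      ⟨x₀, Finset.mem_univ _, mul_pos hx₀ (Real.exp_pos _)⟩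
  have hexpφ : ∀ t : ℝ, Real.exp (φ t) = ∑ x, P x * Real.exp (t * g x) := fun t => by
    rw [hφ t, Real.exp_log (hpos t)]
  have hs1 : (0:ℝ) < 1 + s := by linarith
  set T := ∑ x ∈ A, P x with hT
  have hT0 : 0 ≤ T := Finset.sum_nonneg fun x _ => hP0 x
  set S1 := ∑ x ∈ A, P x * Real.exp (θ * g x) with hS1
  -- Chernoff bound for the tilted distribution
  have hchern : (1 - Real.exp (-c)) * Real.exp (φ θ) ≤ S1 := by
    have hsplit : S1 + ∑ x ∈ Finset.univ.filter (fun x => ¬ a ≤ g x),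
        P x * Real.exp (θ * g x) = Real.exp (φ θ) := by
      rw [hexpφ, hS1, hA]
      exact Finset.sum_filter_add_sum_filter_not _ _ _
    have hcomp : ∑ x ∈ Finset.univ.filter (fun x => ¬ a ≤ g x),
        P x * Real.exp (θ * g x) ≤ Real.exp (-c) * Real.exp (φ θ) := by
      have step1 : ∀ x ∈ Finset.univ.filter (fun x => ¬ a ≤ g x),
          P x * Real.exp (θ * g x)
            ≤ (P x * Real.exp ((θ + θbar) * g x)) * Real.exp (-(θbar * a)) := by
        intro x hx
        simp only [Finset.mem_filter] at hx
        have hga : g x ≤ a := (not_le.mp hx.2).le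
        have hmul : θbar * a ≤ θbar * g x := mul_le_mul_of_nonpos_left hga hθbar
        have hexp : θ * g x ≤ (θ + θbar) * g x + -(θbar * a) := by nlinarith
        calc P x * Real.exp (θ * g x)
            ≤ P x * Real.exp ((θ + θbar) * g x + -(θbar * a)) :=
              mul_le_mul_of_nonneg_left (Real.exp_le_exp.mpr hexp) (hP0 x)
          _ = (P x * Real.exp ((θ + θbar) * g x)) * Real.exp (-(θbar * a)) := by
              rw [Real.exp_add, mul_assoc]
      calc ∑ x ∈ Finset.univ.filter (fun x => ¬ a ≤ g x), P x * Real.exp (θ * g x)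
          ≤ ∑ x ∈ Finset.univ.filter (fun x => ¬ a ≤ g x),
              (P x * Real.exp ((θ + θbar) * g x)) * Real.exp (-(θbar * a)) :=
            Finset.sum_le_sum step1
        _ = (∑ x ∈ Finset.univ.filter (fun x => ¬ a ≤ g x),
              P x * Real.exp ((θ + θbar) * g x)) * Real.exp (-(θbar * a)) := by
            rw [Finset.sum_mul]
        _ ≤ (∑ x, P x * Real.exp ((θ + θbar) * g x)) * Real.exp (-(θbar * a)) := by
            apply mul_le_mul_of_nonneg_right _ (Real.exp_pos _).le
            exact Finset.sum_le_sum_of_subset_of_nonneg (Finset.filter_subset _ _)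
              (fun x _ _ => mul_nonneg (hP0 x) (Real.exp_pos _).le)
        _ = Real.exp (φ (θ + θbar)) * Real.exp (-(θbar * a)) := by rw [hexpφ]
        _ = Real.exp (-c) * Real.exp (φ θ) := by
            rw [← Real.exp_add, ← Real.exp_add]; congr 1; rw [hc]; ring
    linarith
  -- Hölder inequality
  have hhold := Real.inner_le_weight_mul_Lp_of_nonneg A (p := 1 + s) (by linarith)
    P (fun x => Real.exp (θ * g x)) hP0 (fun x => (Real.exp_pos _).le)
  have hrw : ∀ x : X, P x * Real.exp (θ * g x) ^ (1 + s)
      = P x * Real.exp ((1 + s) * θ * g x) := by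
    intro x
    rw [← Real.exp_log (Real.exp_pos (θ * g x)), Real.log_exp,
      ← Real.exp_mul]
    ring_nf
  simp only [hrw] at hhold
  have hsum2 : ∑ x ∈ A, P x * Real.exp ((1 + s) * θ * g x)
      ≤ Real.exp (φ ((1 + s) * θ)) := by
    rw [hexpφ]
    exact Finset.sum_le_sum_of_subset_of_nonneg (Finset.filter_subset _ _)
      (fun x _ _ => mul_nonneg (hP0 x) (Real.exp_pos _).le)
  have hmain : (1 - Real.exp (-c)) * Real.exp (φ θ)
      ≤ T ^ (s / (1 + s)) * Real.exp (φ ((1 + s) * θ) * (1 + s)⁻¹) := by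
    have h2 : (∑ x ∈ A, P x * Real.exp ((1 + s) * θ * g x)) ^ (1 + s)⁻¹
        ≤ Real.exp (φ ((1 + s) * θ)) ^ (1 + s)⁻¹ :=
      Real.rpow_le_rpow (Finset.sum_nonneg fun x _ =>
        mul_nonneg (hP0 x) (Real.exp_pos _).le) hsum2 (by positivity)
    have hexppow : Real.exp (φ ((1 + s) * θ)) ^ (1 + s)⁻¹
        = Real.exp (φ ((1 + s) * θ) * (1 + s)⁻¹) := by
      rw [← Real.exp_mul]
    have hexpo : 1 - (1 + s)⁻¹ = s / (1 + s) := by field_simp; ring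
    calc (1 - Real.exp (-c)) * Real.exp (φ θ) ≤ S1 := hchern
      _ ≤ T ^ (1 - (1 + s)⁻¹)
            * (∑ x ∈ A, P x * Real.exp ((1 + s) * θ * g x)) ^ (1 + s)⁻¹ := hhold
      _ ≤ T ^ (1 - (1 + s)⁻¹) * Real.exp (φ ((1 + s) * θ)) ^ (1 + s)⁻¹ := by
          apply mul_le_mul_of_nonneg_left h2 (Real.rpow_nonneg hT0 _)
      _ = T ^ (s / (1 + s)) * Real.exp (φ ((1 + s) * θ) * (1 + s)⁻¹) := by
          rw [hexpo, hexppow]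
  -- raise to power (1+s)/s and conclude
  set u := 1 - Real.exp (-c) with hu
  have hu0 : 0 < u := by
    have : Real.exp (-c) < 1 := Real.exp_lt_one_iff.mpr (by linarith)
    simpa [hu] using this
  have hK0 : 0 < u * Real.exp (φ θ) := mul_pos hu0 (Real.exp_pos _)
  set r := (1 + s) / s with hr
  have hr0 : 0 < r := div_pos hs1 hs
  have hpow := Real.rpow_le_rpow hK0.le hmain hr0.le
  have hrhs : (T ^ (s / (1 + s)) * Real.exp (φ ((1 + s) * θ) * (1 + s)⁻¹)) ^ r
      = T * Real.exp (φ ((1 + s) * θ) / s) := by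
    rw [Real.mul_rpow (Real.rpow_nonneg hT0 _) (Real.exp_pos _).le,
      ← Real.rpow_mul hT0, ← Real.exp_mul]
    congr 1
    · rw [show s / (1 + s) * r = 1 by rw [hr]; field_simp, Real.rpow_one]
    · congr 1; rw [hr]; field_simp
  have hlhs : (u * Real.exp (φ θ)) ^ r = u ^ r * Real.exp (φ θ * r) := by
    rw [Real.mul_rpow hu0.le (Real.exp_pos _).le, ← Real.exp_mul]
  rw [hrhs, hlhs] at hpow
  have hfin : u ^ r * Real.exp (φ θ * r) * Real.exp (-(φ ((1 + s) * θ) / s)) ≤ T := by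
    have hepos : (0:ℝ) < Real.exp (φ ((1 + s) * θ) / s) := Real.exp_pos _
    rw [mul_assoc, ← Real.exp_add]
    rw [show φ θ * r + -(φ ((1 + s) * θ) / s)
        = φ θ * r - φ ((1 + s) * θ) / s from by ring]
    have hpow' : u ^ r * Real.exp (φ θ * r) / Real.exp (φ ((1 + s) * θ) / s) ≤ T :=
      (div_le_iff₀ hepos).mpr hpow
    calc u ^ r * Real.exp (φ θ * r - φ ((1 + s) * θ) / s)
        = u ^ r * Real.exp (φ θ * r) / Real.exp (φ ((1 + s) * θ) / s) := by
          rw [Real.exp_sub]; ring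
      _ ≤ T := hpow'
  calc u ^ r * Real.exp (-(φ ((1 + s) * θ) - (1 + s) * φ θ) / s)
      = u ^ r * Real.exp (φ θ * r) * Real.exp (-(φ ((1 + s) * θ) / s)) := by
        rw [mul_assoc, ← Real.exp_add]; congr 2; rw [hr]; field_simp; ring
    _ ≤ T := hfin
end

section
/- Let P be a strictly positive probability distribution on a nonempty finite set X (P(x) > 0 for all x) and let g : X → ℝ be non-constant. Define φ(θ) := log Σ_x P(x) e^{θ g(x)} and the exponential family P_θ(x) := P(x) e^{θ g(x) − φ(θ)}. Define D(Q‖R) := Σ_x Q(x) log(Q(x)/R(x)) and D_{1+s}(Q‖R) := (1/s) log Σ_x Q(x)^{1+s} R(x)^{−s}. Let a ∈ ℝ with a > φ'(0), and suppose θ_a ∈ ℝ satisfies φ'(θ_a) = a. Then for every s > 0 and every θ > θ_a: P{x : g(x) ≥ a} ≥ (1 − e^{−D(P_{θ_a} ‖ P_θ)})^{(1+s)/s} · exp( −D_{1+s}(P_θ ‖ P) ). -/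
open scoped Classical

/-- information-geometric converse bound on the tail probability,
expressed with the relative entropy `D(P_{θ_a}‖P_θ)` and the relative Rényi
entropy `D_{1+s}(P_θ‖P)` along the exponential family `P_θ` generated by `g`. -/
theorem stmt_5 {X : Type*} [Fintype X] [Nonempty X]
    (P : X → ℝ) (hPpos : ∀ x, 0 < P x) (hP1 : ∑ x, P x = 1)
    (g : X → ℝ) (hg : ¬ ∃ c : ℝ, ∀ x, g x = c)
    (φ : ℝ → ℝ) (hφ : ∀ θ, φ θ = Real.log (∑ x, P x * Real.exp (θ * g x)))
    (Pθ : ℝ → X → ℝ) (hPθ : ∀ θ x, Pθ θ x = P x * Real.exp (θ * g x - φ θ))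
    (D : (X → ℝ) → (X → ℝ) → ℝ)
    (hD : ∀ Q R, D Q R = ∑ x, Q x * Real.log (Q x / R x))
    (D' : ℝ → (X → ℝ) → (X → ℝ) → ℝ)
    (hD' : ∀ s Q R, D' s Q R = (1 / s) * Real.log (∑ x, Q x ^ (1 + s) * R x ^ (-s)))
    (m : ℝ) (hm : HasDerivAt φ m 0)
    (a : ℝ) (ha : m < a)
    (θa : ℝ) (hθa : HasDerivAt φ a θa) :
    ∀ s : ℝ, 0 < s → ∀ θ : ℝ, θa < θ →
      (1 - Real.exp (-(D (Pθ θa) (Pθ θ)))) ^ ((1 + s) / s) *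
        Real.exp (-(D' s (Pθ θ) P))
      ≤ ∑ x ∈ Finset.univ.filter (fun x => a ≤ g x), P x := by
  intro s hs θ hθ
  have hZpos : ∀ t : ℝ, 0 < ∑ x, P x * Real.exp (t * g x) := fun t =>
    Finset.sum_pos (fun x _ => mul_pos (hPpos x) (Real.exp_pos _)) Finset.univ_nonempty
  have hexpφ : ∀ t, Real.exp (φ t) = ∑ x, P x * Real.exp (t * g x) := fun t => by
    rw [hφ t, Real.exp_log (hZpos t)]
  -- derivative of φ
  have hZd : ∀ t : ℝ, HasDerivAt (fun u => ∑ x, P x * Real.exp (u * g x))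
      (∑ x, P x * (Real.exp (t * g x) * g x)) t := by
    intro t
    apply HasDerivAt.fun_sum
    intro x _
    have h1 : HasDerivAt (fun u : ℝ => u * g x) (g x) t := by
      simpa using (hasDerivAt_id t).mul_const (g x)
    exact h1.exp.const_mul (P x)
  have hφd : ∀ t : ℝ, HasDerivAt φ
      ((∑ x, P x * (Real.exp (t * g x) * g x)) / ∑ x, P x * Real.exp (t * g x)) t := by
    intro t
    have h := (hZd t).log (ne_of_gt (hZpos t))
    have hfun : φ = fun u => Real.log (∑ x, P x * Real.exp (u * g x)) := funext fun u => hφ u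
    rw [hfun]
    exact h
  have hEa : ∑ x, P x * (Real.exp (θa * g x) * g x) = a * ∑ x, P x * Real.exp (θa * g x) := by
    have h := hθa.unique (hφd θa)
    rw [eq_div_iff (ne_of_gt (hZpos θa))] at h
    linarith [h]
  -- normalization of Pθ
  have hPθsum : ∀ t, ∑ x, Pθ t x = 1 := by
    intro t
    have h1 : ∑ x, Pθ t x = (∑ x, P x * Real.exp (t * g x)) / Real.exp (φ t) := by
      rw [Finset.sum_div]
      refine Finset.sum_congr rfl fun x _ => ?_
      rw [hPθ, Real.exp_sub]; ring
    rw [h1, hexpφ, div_self (ne_of_gt (hZpos t))]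
  -- mean of g under Pθa is a
  have hmean : ∑ x, Pθ θa x * g x = a := by
    have h1 : ∑ x, Pθ θa x * g x
        = (∑ x, P x * (Real.exp (θa * g x) * g x)) / Real.exp (φ θa) := by
      rw [Finset.sum_div]
      refine Finset.sum_congr rfl fun x _ => ?_
      rw [hPθ, Real.exp_sub]; ring
    rw [h1, hexpφ, hEa, mul_div_assoc, div_self (ne_of_gt (hZpos θa)), mul_one]
  set Dv : ℝ := (θa - θ) * a + (φ θ - φ θa) with hDvdef
  -- value of the relative entropy
  have hDval : D (Pθ θa) (Pθ θ) = Dv := by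
    rw [hD]
    have h1 : ∀ x, Pθ θa x * Real.log (Pθ θa x / Pθ θ x)
        = (θa - θ) * (Pθ θa x * g x) + (φ θ - φ θa) * Pθ θa x := by
      intro x
      have hr : Pθ θa x / Pθ θ x
          = Real.exp ((θa * g x - φ θa) - (θ * g x - φ θ)) := by
        rw [hPθ, hPθ, mul_div_mul_left _ _ (ne_of_gt (hPpos x)), ← Real.exp_sub]
      rw [hr, Real.log_exp]; ring
    rw [Finset.sum_congr rfl fun x _ => h1 x, Finset.sum_add_distrib,
      ← Finset.mul_sum, ← Finset.mul_sum, hmean, hPθsum, mul_one]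
  -- exp Dv ≥ 1
  have hDexp : ∑ x, Pθ θa x * Real.exp ((θ - θa) * (g x - a)) = Real.exp Dv := by
    have h1 : ∀ x, Pθ θa x * Real.exp ((θ - θa) * (g x - a))
        = (P x * Real.exp (θ * g x)) * Real.exp (-(φ θa) - (θ - θa) * a) := by
      intro x
      rw [hPθ, mul_assoc, ← Real.exp_add, mul_assoc, ← Real.exp_add]
      ring_nf
    rw [Finset.sum_congr rfl fun x _ => h1 x, ← Finset.sum_mul, ← hexpφ, ← Real.exp_add]
    congr 1
    rw [hDvdef]; ring
  have hone_le : 1 ≤ Real.exp Dv := by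
    rw [← hDexp]
    have hPθpos' : ∀ x, 0 < Pθ θa x := fun x => by
      rw [hPθ]; exact mul_pos (hPpos x) (Real.exp_pos _)
    have h2 : ∑ x, Pθ θa x * (1 + (θ - θa) * (g x - a))
        ≤ ∑ x, Pθ θa x * Real.exp ((θ - θa) * (g x - a)) := by
      refine Finset.sum_le_sum fun x _ => ?_
      exact mul_le_mul_of_nonneg_left
        (by linarith [Real.add_one_le_exp ((θ - θa) * (g x - a))]) (hPθpos' x).le
    refine le_trans (le_of_eq ?_) h2
    have h3 : ∑ x, Pθ θa x * (1 + (θ - θa) * (g x - a))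
        = (∑ x, Pθ θa x) + (θ - θa) * ((∑ x, Pθ θa x * g x) - a * ∑ x, Pθ θa x) := by
      rw [Finset.mul_sum, ← Finset.sum_sub_distrib, Finset.mul_sum, ← Finset.sum_add_distrib]
      refine Finset.sum_congr rfl fun x _ => ?_
      ring
    rw [h3, hPθsum, hmean]; ring
  have hexp_neg_le_one : Real.exp (-Dv) ≤ 1 := by
    rw [Real.exp_neg]
    exact inv_le_one_of_one_le₀ hone_le
  have hPθpos : ∀ t x, 0 < Pθ t x := by
    intro t x; rw [hPθ]; exact mul_pos (hPpos x) (Real.exp_pos _)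
  -- Chernoff bound on the complement
  have hchern : ∑ x, Pθ θ x * Real.exp ((θa - θ) * (g x - a)) = Real.exp (-Dv) := by
    have h1 : ∀ x, Pθ θ x * Real.exp ((θa - θ) * (g x - a))
        = (P x * Real.exp (θa * g x)) * Real.exp (-(φ θ) - (θa - θ) * a) := by
      intro x
      rw [hPθ, mul_assoc, ← Real.exp_add, mul_assoc, ← Real.exp_add]
      ring_nf
    rw [Finset.sum_congr rfl fun x _ => h1 x, ← Finset.sum_mul, ← hexpφ, ← Real.exp_add]
    congr 1
    rw [hDvdef]; ring
  have hcompl : ∑ x ∈ Finset.univ.filter (fun x => ¬ a ≤ g x), Pθ θ x ≤ Real.exp (-Dv) := by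
    rw [← hchern]
    calc ∑ x ∈ Finset.univ.filter (fun x => ¬ a ≤ g x), Pθ θ x
        ≤ ∑ x ∈ Finset.univ.filter (fun x => ¬ a ≤ g x),
            Pθ θ x * Real.exp ((θa - θ) * (g x - a)) := by
          refine Finset.sum_le_sum fun x hx => ?_
          have hxa : g x < a := by
            have := (Finset.mem_filter.mp hx).2
            exact lt_of_not_ge this
          have hnn : (0:ℝ) ≤ (θa - θ) * (g x - a) := by nlinarith
          nth_rewrite 1 [← mul_one (Pθ θ x)]
          exact mul_le_mul_of_nonneg_left (Real.one_le_exp hnn) (hPθpos θ x).le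
      _ ≤ ∑ x, Pθ θ x * Real.exp ((θa - θ) * (g x - a)) := by
          refine Finset.sum_le_sum_of_subset_of_nonneg (Finset.filter_subset _ _)
            fun x _ _ => (mul_pos (hPθpos θ x) (Real.exp_pos _)).le
  have htail : 1 - Real.exp (-Dv)
      ≤ ∑ x ∈ Finset.univ.filter (fun x => a ≤ g x), Pθ θ x := by
    have hsplit := Finset.sum_filter_add_sum_filter_not Finset.univ (fun x => a ≤ g x) (Pθ θ)
    rw [hPθsum θ] at hsplit
    linarith [hcompl]
  have hbase : 0 ≤ 1 - Real.exp (-Dv) := by linarith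
  -- Rényi quantity
  have hSpos : 0 < ∑ x, Pθ θ x ^ (1 + s) * P x ^ (-s) :=
    Finset.sum_pos (fun x _ => mul_pos (Real.rpow_pos_of_pos (hPθpos θ x) _)
      (Real.rpow_pos_of_pos (hPpos x) _)) Finset.univ_nonempty
  set S : ℝ := ∑ x, Pθ θ x ^ (1 + s) * P x ^ (-s) with hSdef
  have hexpD' : Real.exp (-(D' s (Pθ θ) P)) = S ^ (-(1/s)) := by
    rw [hD', Real.rpow_def_of_pos hSpos]
    congr 1; ring
  -- Hölder
  have hs1 : (0:ℝ) < 1 + s := by linarith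
  have hpq : Real.HolderConjugate (1 + s) ((1 + s) / s) := by
    refine Real.holderConjugate_iff.mpr ?_
    constructor
    · linarith
    · rw [inv_div]
      field_simp
  have hqpos : (0:ℝ) < (1 + s) / s := div_pos hs1 hs
  set T : ℝ := ∑ x ∈ Finset.univ.filter (fun x => a ≤ g x), P x with hTdef
  have hTnn : 0 ≤ T :=
    Finset.sum_nonneg fun x _ => (hPpos x).le
  have hholder : ∑ x ∈ Finset.univ.filter (fun x => a ≤ g x), Pθ θ x
      ≤ S ^ (1/(1 + s)) * T ^ (1/((1 + s)/s)) := by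
    have key := Real.inner_le_Lp_mul_Lq_of_nonneg
      (Finset.univ.filter (fun x => a ≤ g x)) hpq
      (f := fun x => Pθ θ x * P x ^ (-(1/((1 + s)/s))))
      (g := fun x => P x ^ (1/((1 + s)/s)))
      (fun x _ => (mul_pos (hPθpos θ x) (Real.rpow_pos_of_pos (hPpos x) _)).le)
      (fun x _ => (Real.rpow_pos_of_pos (hPpos x) _).le)
    have h1 : ∀ x : X, Pθ θ x * P x ^ (-(1/((1 + s)/s))) * P x ^ (1/((1 + s)/s)) = Pθ θ x := by
      intro x
      rw [mul_assoc, ← Real.rpow_add (hPpos x)]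
      simp
    have h2 : ∀ x : X, (Pθ θ x * P x ^ (-(1/((1 + s)/s)))) ^ (1 + s)
        = Pθ θ x ^ (1 + s) * P x ^ (-s) := by
      intro x
      rw [Real.mul_rpow (hPθpos θ x).le (Real.rpow_pos_of_pos (hPpos x) _).le,
        ← Real.rpow_mul (hPpos x).le]
      congr 1
      rw [one_div_div, neg_mul, div_mul_cancel₀ _ (ne_of_gt hs1)]
    have h3 : ∀ x : X, (P x ^ (1/((1 + s)/s))) ^ ((1 + s)/s) = P x := by
      intro x
      rw [← Real.rpow_mul (hPpos x).le, one_div_mul_cancel (ne_of_gt hqpos), Real.rpow_one]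
    rw [Finset.sum_congr rfl (fun x _ => h1 x), Finset.sum_congr rfl (fun x _ => h2 x),
      Finset.sum_congr rfl (fun x _ => h3 x)] at key
    refine le_trans key ?_
    refine mul_le_mul_of_nonneg_right ?_ (Real.rpow_nonneg hTnn _)
    refine Real.rpow_le_rpow ?_ ?_ (by positivity)
    · exact Finset.sum_nonneg fun x _ =>
        (mul_pos (Real.rpow_pos_of_pos (hPθpos θ x) _) (Real.rpow_pos_of_pos (hPpos x) _)).le
    · rw [hSdef]
      refine Finset.sum_le_sum_of_subset_of_nonneg (Finset.filter_subset _ _)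
        fun x _ _ => (mul_pos (Real.rpow_pos_of_pos (hPθpos θ x) _)
          (Real.rpow_pos_of_pos (hPpos x) _)).le
  -- raise Hölder to the power (1+s)/s
  have hPθA_nn : 0 ≤ ∑ x ∈ Finset.univ.filter (fun x => a ≤ g x), Pθ θ x :=
    Finset.sum_nonneg fun x _ => (hPθpos θ x).le
  have hpow : (∑ x ∈ Finset.univ.filter (fun x => a ≤ g x), Pθ θ x) ^ ((1 + s)/s)
      ≤ S ^ (1/s) * T := by
    have h := Real.rpow_le_rpow hPθA_nn hholder hqpos.le
    refine le_trans h (le_of_eq ?_)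
    rw [Real.mul_rpow (Real.rpow_nonneg hSpos.le _) (Real.rpow_nonneg hTnn _),
      ← Real.rpow_mul hSpos.le, ← Real.rpow_mul hTnn]
    rw [one_div_mul_cancel (ne_of_gt hqpos), Real.rpow_one]
    congr 2
    field_simp
  -- conclude
  rw [hDval, hexpD']
  calc (1 - Real.exp (-Dv)) ^ ((1 + s) / s) * S ^ (-(1/s))
      ≤ (∑ x ∈ Finset.univ.filter (fun x => a ≤ g x), Pθ θ x) ^ ((1 + s)/s) * S ^ (-(1/s)) := by
        refine mul_le_mul_of_nonneg_right ?_ (Real.rpow_nonneg hSpos.le _)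
        exact Real.rpow_le_rpow hbase htail hqpos.le
    _ ≤ S ^ (1/s) * T * S ^ (-(1/s)) := by
        refine mul_le_mul_of_nonneg_right hpow (Real.rpow_nonneg hSpos.le _)
    _ = T := by
        rw [mul_comm (S ^ (1/s)) T, mul_assoc, ← Real.rpow_add hSpos]
        simp
end

section
/- Let X and Y be nonempty finite sets, and let W, V : (X×Y) × (X×Y) → ℝ be transition matrices on X×Y with all entries strictly positive (Σ_{x,y} W(x,y|x',y') = 1 and Σ_{x,y} V(x,y|x',y') = 1 for every (x',y')). Assume W and V are non-hidden for X, i.e., W_X(x|x') := Σ_y W(x,y|x',y') does not depend on y', and likewise V_X(x|x') := Σ_y V(x,y|x',y') does not depend on y'. Let s > 0, λ ∈ ℝ, and b : X×Y → ℝ with b(x,y) > 0 for all (x,y) satisfy λ b(x,y) = Σ_{x',y'} W(x,y|x',y')^{1+s} V(x,y|x',y')^{−s} b(x',y') for all (x,y). Define c(x) := Σ_y b(x,y). Then for every x ∈ X: Σ_{x'} W_X(x|x')^{1+s} V_X(x|x')^{−s} c(x') ≤ λ c(x). -/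
/-- Reverse Hölder inequality for sums of positive reals. -/
lemma aux_rev_holder {ι : Type*} [Fintype ι] (a v : ι → ℝ)
    (ha : ∀ i, 0 < a i) (hv : ∀ i, 0 < v i) (s : ℝ) (hs : 0 < s) :
    (∑ i, a i) ^ (1 + s) * (∑ i, v i) ^ (-s) ≤ ∑ i, a i ^ (1 + s) * v i ^ (-s) := by
  rcases isEmpty_or_nonempty ι with h | h
  · simp [Real.zero_rpow (by positivity : (1 : ℝ) + s ≠ 0)]
  have hA : 0 < ∑ i, a i := Finset.sum_pos (fun i _ => ha i) Finset.univ_nonempty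
  have hT : 0 < ∑ i, v i := Finset.sum_pos (fun i _ => hv i) Finset.univ_nonempty
  set T := ∑ i, v i with hTdef
  set S := ∑ i, a i ^ (1 + s) * v i ^ (-s) with hSdef
  have hl : ∑ i, v i / T * (a i / v i) = (∑ i, a i) / T := by
    rw [Finset.sum_div]
    refine Finset.sum_congr rfl fun i _ => ?_
    rw [div_mul_div_comm, mul_comm T (v i)]
    exact mul_div_mul_left _ _ (hv i).ne'
  have hr : ∀ i, v i / T * (a i / v i) ^ (1 + s)
      = a i ^ (1 + s) * v i ^ (-s) / T := by
    intro i
    have h1 : (a i / v i) ^ (1 + s) = a i ^ (1 + s) * (v i ^ (1 + s))⁻¹ := by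
      rw [Real.div_rpow (ha i).le (hv i).le, div_eq_mul_inv]
    have h2 : v i * (v i ^ (1 + s))⁻¹ = v i ^ (-s) := by
      rw [Real.rpow_add (hv i), Real.rpow_one, Real.rpow_neg (hv i).le, mul_inv,
        ← mul_assoc, mul_inv_cancel₀ (hv i).ne', one_mul]
    calc v i / T * (a i / v i) ^ (1 + s)
        = v i * (v i ^ (1 + s))⁻¹ * a i ^ (1 + s) / T := by rw [h1]; ring
      _ = a i ^ (1 + s) * v i ^ (-s) / T := by rw [h2]; ring
  have key : ((∑ i, a i) / T) ^ (1 + s) ≤ S / T := by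
    have h := Real.rpow_arith_mean_le_arith_mean_rpow Finset.univ
      (fun i => v i / T) (fun i => a i / v i)
      (fun i _ => div_nonneg (hv i).le hT.le)
      (by rw [← Finset.sum_div]; field_simp; exact hTdef.symm)
      (fun i _ => div_nonneg (ha i).le (hv i).le) (by linarith : (1:ℝ) ≤ 1 + s)
    calc ((∑ i, a i) / T) ^ (1 + s)
        = (∑ i, v i / T * (a i / v i)) ^ (1 + s) := by rw [hl]
      _ ≤ ∑ i, v i / T * (a i / v i) ^ (1 + s) := h
      _ = S / T := by rw [hSdef, Finset.sum_div]; exact Finset.sum_congr rfl fun i _ => hr i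
  have h2 : (∑ i, a i) ^ (1 + s) * T ^ (-s) = ((∑ i, a i) / T) ^ (1 + s) * T := by
    have h1 : ((∑ i, a i) / T) ^ (1 + s) = (∑ i, a i) ^ (1 + s) * (T ^ (1 + s))⁻¹ := by
      rw [Real.div_rpow hA.le hT.le, div_eq_mul_inv]
    have h2 : (T ^ (1 + s))⁻¹ * T = T ^ (-s) := by
      rw [Real.rpow_add hT, Real.rpow_one, Real.rpow_neg hT.le, mul_inv,
        mul_right_comm, inv_mul_cancel₀ hT.ne', one_mul]
    rw [h1, mul_assoc, h2]
  rw [h2]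
  calc ((∑ i, a i) / T) ^ (1 + s) * T ≤ S / T * T :=
        mul_le_mul_of_nonneg_right key hT.le
    _ = S := div_mul_cancel₀ S hT.ne'

/-- key step of the information processing inequality for
transition matrices (positive order `1+s`, `s > 0`): summing the
Perron–Frobenius eigenvector equation over `Y` and applying the reverse Hölder
inequality yields a sub-eigenvector inequality for the marginal matrices. -/
theorem stmt_6 {X Y : Type*} [Fintype X] [Fintype Y] [Nonempty X] [Nonempty Y]
    (W V : X × Y → X × Y → ℝ)
    (hWpos : ∀ p p', 0 < W p p') (hVpos : ∀ p p', 0 < V p p')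
    (hW1 : ∀ p', ∑ p, W p p' = 1) (hV1 : ∀ p', ∑ p, V p p' = 1)
    (WX VX : X → X → ℝ)
    (hWX : ∀ x x' y', WX x x' = ∑ y, W (x, y) (x', y'))
    (hVX : ∀ x x' y', VX x x' = ∑ y, V (x, y) (x', y'))
    (s : ℝ) (hs : 0 < s)
    (lam : ℝ) (b : X × Y → ℝ) (hb : ∀ p, 0 < b p)
    (heig : ∀ p, lam * b p = ∑ p', W p p' ^ (1 + s) * V p p' ^ (-s) * b p')
    (c : X → ℝ) (hc : ∀ x, c x = ∑ y, b (x, y)) :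
    ∀ x, ∑ x', WX x x' ^ (1 + s) * VX x x' ^ (-s) * c x' ≤ lam * c x := by
  intro x
  have key : lam * c x
      = ∑ x', ∑ y', (∑ y, W (x, y) (x', y') ^ (1 + s) * V (x, y) (x', y') ^ (-s))
        * b (x', y') := by
    rw [hc, Finset.mul_sum]
    calc ∑ y, lam * b (x, y)
        = ∑ y, ∑ p', W (x, y) p' ^ (1 + s) * V (x, y) p' ^ (-s) * b p' := by
          exact Finset.sum_congr rfl fun y _ => heig (x, y)
      _ = ∑ p', ∑ y, W (x, y) p' ^ (1 + s) * V (x, y) p' ^ (-s) * b p' :=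
          Finset.sum_comm
      _ = ∑ x', ∑ y', ∑ y, W (x, y) (x', y') ^ (1 + s) * V (x, y) (x', y') ^ (-s)
            * b (x', y') := by rw [Fintype.sum_prod_type]
      _ = _ := by
          refine Finset.sum_congr rfl fun x' _ => Finset.sum_congr rfl fun y' _ => ?_
          rw [Finset.sum_mul]
  rw [key]
  have hlhs : ∑ x', WX x x' ^ (1 + s) * VX x x' ^ (-s) * c x'
      = ∑ x', ∑ y', WX x x' ^ (1 + s) * VX x x' ^ (-s) * b (x', y') := by
    refine Finset.sum_congr rfl fun x' _ => ?_
    rw [hc, Finset.mul_sum]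
  rw [hlhs]
  refine Finset.sum_le_sum fun x' _ => Finset.sum_le_sum fun y' _ => ?_
  have hrh := aux_rev_holder (fun y => W (x, y) (x', y')) (fun y => V (x, y) (x', y'))
    (fun y => hWpos _ _) (fun y => hVpos _ _) s hs
  rw [← hWX x x' y', ← hVX x x' y'] at hrh
  exact mul_le_mul_of_nonneg_right hrh (hb _).le
end

section
/- Let X and Y be nonempty finite sets, and let W, V : (X×Y) × (X×Y) → ℝ be transition matrices on X×Y with all entries strictly positive (Σ_{x,y} W(x,y|x',y') = 1 and Σ_{x,y} V(x,y|x',y') = 1 for every (x',y')). Assume W and V are non-hidden for X, i.e., W_X(x|x') := Σ_y W(x,y|x',y') does not depend on y', and likewise V_X(x|x') := Σ_y V(x,y|x',y') does not depend on y'. Let s ∈ (−1, 0), λ ∈ ℝ, and b : X×Y → ℝ with b(x,y) > 0 for all (x,y) satisfy λ b(x,y) = Σ_{x',y'} W(x,y|x',y')^{1+s} V(x,y|x',y')^{−s} b(x',y') for all (x,y). Define c(x) := Σ_y b(x,y). Then for every x ∈ X: Σ_{x'} W_X(x|x')^{1+s} V_X(x|x')^{−s} c(x') ≥ λ c(x).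 -/
open Finset

lemma holder_aux {Y : Type*} [Fintype Y] [Nonempty Y] (a b : Y → ℝ)
    (ha : ∀ y, 0 < a y) (hb : ∀ y, 0 < b y) (θ : ℝ) (hθ : 0 < θ) (hθ1 : θ < 1) :
    ∑ y, a y ^ θ * b y ^ (1 - θ) ≤ (∑ y, a y) ^ θ * (∑ y, b y) ^ (1 - θ) := by
  set A := ∑ y, a y with hA
  set B := ∑ y, b y with hB
  have hApos : 0 < A := Finset.sum_pos (fun y _ => ha y) univ_nonempty
  have hBpos : 0 < B := Finset.sum_pos (fun y _ => hb y) univ_nonempty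
  have key : ∀ y, a y ^ θ * b y ^ (1 - θ) ≤
      A ^ θ * B ^ (1 - θ) * (θ * (a y / A) + (1 - θ) * (b y / B)) := by
    intro y
    have h1 : (a y / A) ^ θ * (b y / B) ^ (1 - θ) ≤ θ * (a y / A) + (1 - θ) * (b y / B) :=
      Real.geom_mean_le_arith_mean2_weighted hθ.le (by linarith)
        (div_nonneg (ha y).le hApos.le) (div_nonneg (hb y).le hBpos.le) (by ring)
    have h2 : (a y / A) ^ θ * (b y / B) ^ (1 - θ) =
        a y ^ θ * b y ^ (1 - θ) / (A ^ θ * B ^ (1 - θ)) := by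
      rw [Real.div_rpow (ha y).le hApos.le, Real.div_rpow (hb y).le hBpos.le]
      field_simp
    rw [h2, div_le_iff₀ (by positivity)] at h1
    linarith [h1]
  calc ∑ y, a y ^ θ * b y ^ (1 - θ)
      ≤ ∑ y, A ^ θ * B ^ (1 - θ) * (θ * (a y / A) + (1 - θ) * (b y / B)) :=
        Finset.sum_le_sum fun y _ => key y
    _ = A ^ θ * B ^ (1 - θ) := by
        rw [← Finset.mul_sum, Finset.sum_add_distrib, ← Finset.mul_sum, ← Finset.mul_sum,
          ← Finset.sum_div, ← Finset.sum_div, ← hA, ← hB]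
        rw [div_self hApos.ne', div_self hBpos.ne']
        ring

/-- key step of the information processing inequality for
transition matrices (negative order `1+s`, `s ∈ (-1,0)`): summing the
Perron–Frobenius eigenvector equation over `Y` and applying the Hölder
inequality yields a super-eigenvector inequality for the marginal matrices. -/
theorem stmt_7 {X Y : Type*} [Fintype X] [Fintype Y] [Nonempty X] [Nonempty Y]
    (W V : X × Y → X × Y → ℝ)
    (hWpos : ∀ p p', 0 < W p p') (hVpos : ∀ p p', 0 < V p p')
    (hW1 : ∀ p', ∑ p, W p p' = 1) (hV1 : ∀ p', ∑ p, V p p' = 1)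
    (WX VX : X → X → ℝ)
    (hWX : ∀ x x' y', WX x x' = ∑ y, W (x, y) (x', y'))
    (hVX : ∀ x x' y', VX x x' = ∑ y, V (x, y) (x', y'))
    (s : ℝ) (hs : s ∈ Set.Ioo (-1 : ℝ) 0)
    (lam : ℝ) (b : X × Y → ℝ) (hb : ∀ p, 0 < b p)
    (heig : ∀ p, lam * b p = ∑ p', W p p' ^ (1 + s) * V p p' ^ (-s) * b p')
    (c : X → ℝ) (hc : ∀ x, c x = ∑ y, b (x, y)) :
    ∀ x, ∑ x', WX x x' ^ (1 + s) * VX x x' ^ (-s) * c x' ≥ lam * c x := by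
  obtain ⟨hs1, hs0⟩ := hs
  intro x
  have key : ∀ x' y', (∑ y, W (x, y) (x', y') ^ (1 + s) * V (x, y) (x', y') ^ (-s))
      ≤ WX x x' ^ (1 + s) * VX x x' ^ (-s) := by
    intro x' y'
    have := holder_aux (fun y => W (x, y) (x', y')) (fun y => V (x, y) (x', y'))
      (fun y => hWpos _ _) (fun y => hVpos _ _) (1 + s) (by linarith) (by linarith)
    have he : 1 - (1 + s) = -s := by ring
    rw [he] at this
    rwa [hWX x x' y', hVX x x' y']
  have hlam : lam * c x = ∑ x', ∑ y',
      (∑ y, W (x, y) (x', y') ^ (1 + s) * V (x, y) (x', y') ^ (-s)) * b (x', y') := by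
    rw [hc, Finset.mul_sum]
    calc ∑ y, lam * b (x, y)
        = ∑ y, ∑ p', W (x, y) p' ^ (1 + s) * V (x, y) p' ^ (-s) * b p' := by
          simp_rw [heig]
      _ = ∑ p' : X × Y, ∑ y, W (x, y) p' ^ (1 + s) * V (x, y) p' ^ (-s) * b p' :=
          Finset.sum_comm
      _ = ∑ x', ∑ y', ∑ y, W (x, y) (x', y') ^ (1 + s) * V (x, y) (x', y') ^ (-s) * b (x', y') :=
          Fintype.sum_prod_type _
      _ = _ := by
          congr 1; ext x'; congr 1; ext y'
          rw [Finset.sum_mul]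
  rw [ge_iff_le, hlam]
  apply Finset.sum_le_sum
  intro x' _
  calc ∑ y', (∑ y, W (x, y) (x', y') ^ (1 + s) * V (x, y) (x', y') ^ (-s)) * b (x', y')
      ≤ ∑ y', WX x x' ^ (1 + s) * VX x x' ^ (-s) * b (x', y') :=
        Finset.sum_le_sum fun y' _ => mul_le_mul_of_nonneg_right (key x' y') (hb _).le
    _ = WX x x' ^ (1 + s) * VX x x' ^ (-s) * c x' := by
        rw [← Finset.mul_sum, hc]
end

section
/- Let X be a nonempty finite set, W a transition matrix on X (W(x|x̄) ≥ 0 and Σ_x W(x|x̄) = 1 for every x̄), and π a strictly positive stationary distribution of W (π(x) > 0, Σ_x π(x) = 1, and Σ_{x̄} W(x|x̄) π(x̄) = π(x) for all x). Regard W as the matrix with entries W(x, x̄) := W(x|x̄) and let A be the matrix with entries A(x, x̄) := π(x). Assume W^n → A entrywise as n → ∞. Then the matrix I − (W − A) is invertible; set Z := (I − (W − A))^{−1}. Let g : X × X → ℝ, and for n ≥ 1 let Q_n be the distribution on X^{n+1} given by Q_n(x_1, …, x_{n+1}) := π(x_1) ∏_{i=1}^n W(x_{i+1}|x_i), and S_n(x_1,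 …, x_{n+1}) := Σ_{i=1}^n g(x_{i+1}, x_i). Then lim_{n→∞} (1/n) · ( E_{Q_n}[S_n^2] − (E_{Q_n}[S_n])^2 ) = V + 2 Σ_{u, u' ∈ X} g_*(u) (Z − A)(u, u') g^*(u'), where m := Σ_{x, x̄} W(x|x̄) π(x̄) g(x, x̄), V := Σ_{x, x̄} W(x|x̄) π(x̄) g(x, x̄)^2 − m^2, g_*(u) := Σ_x W(x|u) g(x, u), and g^*(u') := Σ_{x̄} W(u'|x̄) π(x̄) g(u', x̄). -/
open Finset Filter

section MarkovAux

set_option linter.unusedSectionVars false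

variable {X : Type*} [Fintype X] [DecidableEq X]

/-- Path measure of a Markov chain with initial distribution `π` and transition matrix `W`. -/
def Qpath (W : Matrix X X ℝ) (π : X → ℝ) (n : ℕ) (x : Fin (n + 1) → X) : ℝ :=
  π (x 0) * ∏ i : Fin n, W (x i.succ) (x i.castSucc)

lemma splitLast (W : Matrix X X ℝ) (π : X → ℝ) (n : ℕ) (G : X → (Fin (n + 1) → X) → ℝ) :
    ∑ x : Fin (n + 2) → X, Qpath W π (n + 1) x * G (x (Fin.last (n + 1))) (x ∘ Fin.castSucc)
    = ∑ y : Fin (n + 1) → X, Qpath W π n y * ∑ u, W u (y (Fin.last n)) * G u y := by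
  rw [← (Fin.snocEquiv (fun _ => X)).sum_comp]
  rw [Fintype.sum_prod_type]
  rw [Finset.sum_comm]
  refine Finset.sum_congr rfl fun y _ => ?_
  rw [Finset.mul_sum]
  refine Finset.sum_congr rfl fun u _ => ?_
  have hx : (Fin.snocEquiv (fun _ => X)) (u, y) = Fin.snoc y u := rfl
  rw [hx]
  have hcomp : (Fin.snoc y u : Fin (n+2) → X) ∘ Fin.castSucc = y := by
    funext i; simp
  have h0 : (Fin.snoc y u : Fin (n+2) → X) 0 = y 0 := by
    have := congrFun hcomp 0; simpa using this
  have hlast : (Fin.snoc y u : Fin (n+2) → X) (Fin.last (n+1)) = u := by simp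
  have hprod : ∏ i : Fin (n+1), W ((Fin.snoc y u : Fin (n+2) → X) i.succ)
      ((Fin.snoc y u : Fin (n+2) → X) i.castSucc)
      = (∏ i : Fin n, W (y i.succ) (y i.castSucc)) * W u (y (Fin.last n)) := by
    rw [Fin.prod_univ_castSucc]
    congr 1
    · refine Finset.prod_congr rfl fun i _ => ?_
      rw [Fin.succ_castSucc, Fin.snoc_castSucc, Fin.snoc_castSucc]
    · rw [Fin.succ_last, Fin.snoc_last, Fin.snoc_castSucc]
  rw [Qpath, Qpath, hcomp, h0, hlast, hprod]
  ring

lemma chopFirst (W : Matrix X X ℝ) (π : X → ℝ)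
    (hπstat : ∀ x, ∑ x', W x x' * π x' = π x)
    (n : ℕ) (f : (Fin (n + 1) → X) → ℝ) :
    ∑ x : Fin (n + 2) → X, Qpath W π (n + 1) x * f (x ∘ Fin.succ)
    = ∑ y : Fin (n + 1) → X, Qpath W π n y * f y := by
  rw [← (Fin.consEquiv (fun _ => X)).sum_comp]
  rw [Fintype.sum_prod_type]
  rw [Finset.sum_comm]
  refine Finset.sum_congr rfl fun y _ => ?_
  have key : ∀ u : X, Qpath W π (n+1) ((Fin.consEquiv (fun _ => X)) (u, y)) *
      f (((Fin.consEquiv (fun _ => X)) (u, y) : Fin (n+2) → X) ∘ Fin.succ)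
      = (π u * W (y 0) u) * ((∏ i : Fin n, W (y i.succ) (y i.castSucc)) * f y) := by
    intro u
    have hx : ((Fin.consEquiv (fun _ => X)) (u, y) : Fin (n+2) → X) = Fin.cons u y := rfl
    rw [hx]
    have hcomp : (Fin.cons u y : Fin (n+2) → X) ∘ Fin.succ = y := by
      funext i; simp
    have h0 : (Fin.cons u y : Fin (n+2) → X) 0 = u := by simp
    have hprod : ∏ i : Fin (n+1), W ((Fin.cons u y : Fin (n+2) → X) i.succ)
        ((Fin.cons u y : Fin (n+2) → X) i.castSucc)
        = W (y 0) u * ∏ i : Fin n, W (y i.succ) (y i.castSucc) := by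
      rw [Fin.prod_univ_succ]
      have h1 : W ((Fin.cons u y : Fin (n+2) → X) (0 : Fin (n+1)).succ)
          ((Fin.cons u y : Fin (n+2) → X) (0 : Fin (n+1)).castSucc) = W (y 0) u := by simp
      rw [h1]
      congr 1
    rw [Qpath, hcomp, h0, hprod]
    ring
  rw [Finset.sum_congr rfl (fun u _ => key u), ← Finset.sum_mul]
  rw [Finset.sum_congr rfl (fun u _ => mul_comm (π u) (W (y 0) u)), hπstat]
  rw [Qpath]; ring

lemma base2 (W : Matrix X X ℝ) (π : X → ℝ) (F : X → X → ℝ) :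
    ∑ x : Fin 2 → X, Qpath W π 1 x * F (x 1) (x 0)
    = ∑ u, ∑ v, F u v * W u v * π v := by
  rw [← (piFinTwoEquiv (fun _ => X)).symm.sum_comp]
  rw [Fintype.sum_prod_type]
  rw [Finset.sum_comm]
  refine Finset.sum_congr rfl fun u _ => Finset.sum_congr rfl fun v _ => ?_
  have h0 : ((piFinTwoEquiv (fun _ => X)).symm (v, u)) 0 = v := rfl
  have h1 : ((piFinTwoEquiv (fun _ => X)).symm (v, u)) 1 = u := rfl
  rw [Qpath, h0, h1, Fin.prod_univ_one]
  have hs : ((0 : Fin 1).succ : Fin 2) = 1 := rfl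
  have hc : ((0 : Fin 1).castSucc : Fin 2) = 0 := rfl
  rw [hs, hc, h0, h1]
  ring

end MarkovAux

section More
variable {X : Type*} [Fintype X] [DecidableEq X]
set_option linter.unusedSectionVars false

private lemma sum4 (t : X → X → X → X → ℝ) :
    ∑ a : X, ∑ v : X, ∑ w : X, ∑ u : X, t a v w u
    = ∑ u : X, ∑ v : X, ∑ w : X, ∑ a : X, t a v w u :=
  calc ∑ a : X, ∑ v : X, ∑ w : X, ∑ u : X, t a v w u
      = ∑ a : X, ∑ v : X, ∑ u : X, ∑ w : X, t a v w u :=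
        Finset.sum_congr rfl fun a _ => Finset.sum_congr rfl fun v _ => Finset.sum_comm
    _ = ∑ a : X, ∑ u : X, ∑ v : X, ∑ w : X, t a v w u :=
        Finset.sum_congr rfl fun a _ => Finset.sum_comm
    _ = ∑ u : X, ∑ a : X, ∑ v : X, ∑ w : X, t a v w u := Finset.sum_comm
    _ = ∑ u : X, ∑ v : X, ∑ a : X, ∑ w : X, t a v w u :=
        Finset.sum_congr rfl fun u _ => Finset.sum_comm
    _ = ∑ u : X, ∑ v : X, ∑ w : X, ∑ a : X, t a v w u :=
        Finset.sum_congr rfl fun u _ => Finset.sum_congr rfl fun v _ => Finset.sum_comm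

set_option maxHeartbeats 1000000 in
lemma three (W : Matrix X X ℝ) (π : X → ℝ) :
    ∀ (n : ℕ) (F : X → X → X → ℝ),
    ∑ x : Fin (n + 2) → X, Qpath W π (n + 1) x * F (x (Fin.last (n + 1))) (x 1) (x 0)
    = ∑ u, ∑ v, ∑ w, F u v w * (W ^ n) u v * W v w * π w := by
  intro n
  induction n with
  | zero =>
    intro F
    have h : ∑ x : Fin 2 → X, Qpath W π 1 x * F (x (Fin.last 1)) (x 1) (x 0)
        = ∑ u, ∑ v, F u u v * W u v * π v := base2 W π (fun a b => F a a b)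
    rw [h]
    refine Finset.sum_congr rfl fun u _ => ?_
    have hv : ∀ v : X, (∑ w, F u v w * (W ^ 0) u v * W v w * π w)
        = if u = v then ∑ w, F u v w * W v w * π w else 0 := by
      intro v
      rw [pow_zero, Matrix.one_apply]
      split_ifs with hv
      · subst hv; simp
      · simp
    rw [show (∑ v, ∑ w, F u v w * (W ^ 0) u v * W v w * π w)
        = ∑ v, if u = v then ∑ w, F u v w * W v w * π w else 0 from
        Finset.sum_congr rfl fun v _ => hv v, Finset.sum_ite_eq]
    simp
  | succ n ih =>
    intro F
    have key : ∀ x : Fin (n + 1 + 2) → X,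
        Qpath W π (n + 1 + 1) x * F (x (Fin.last (n + 1 + 1))) (x 1) (x 0)
        = Qpath W π (n + 1 + 1) x *
          (fun u (y : Fin (n + 1 + 1) → X) => F u (y 1) (y 0)) (x (Fin.last (n + 1 + 1)))
          (x ∘ Fin.castSucc) := by
      intro x
      have e1 : (((1 : Fin (n + 1 + 1)).castSucc : Fin (n + 1 + 2))) = 1 := by ext; simp
      have e0 : (((0 : Fin (n + 1 + 1)).castSucc : Fin (n + 1 + 2))) = 0 := by ext; simp
      simp only [Function.comp_apply, e1, e0]
    calc ∑ x : Fin (n + 1 + 2) → X, Qpath W π (n + 1 + 1) x * F (x (Fin.last (n + 1 + 1))) (x 1) (x 0)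
        = ∑ x : Fin (n + 1 + 2) → X, Qpath W π (n + 1 + 1) x *
            (fun u (y : Fin (n + 1 + 1) → X) => F u (y 1) (y 0)) (x (Fin.last (n + 1 + 1)))
            (x ∘ Fin.castSucc) := Finset.sum_congr rfl fun x _ => key x
      _ = ∑ y : Fin (n + 1 + 1) → X, Qpath W π (n + 1) y *
            ∑ u, W u (y (Fin.last (n + 1))) * F u (y 1) (y 0) := splitLast W π (n + 1) (fun u y => F u (y 1) (y 0))
      _ = ∑ a, ∑ v, ∑ w, (∑ u, W u a * F u v w) * (W ^ n) a v * W v w * π w :=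
          ih (fun a b c => ∑ u, W u a * F u b c)
      _ = ∑ a, ∑ v, ∑ w, ∑ u, W u a * F u v w * (W ^ n) a v * W v w * π w := by
          refine Finset.sum_congr rfl fun a _ => Finset.sum_congr rfl fun v _ =>
            Finset.sum_congr rfl fun w _ => ?_
          rw [Finset.sum_mul, Finset.sum_mul, Finset.sum_mul]
      _ = ∑ u, ∑ v, ∑ w, ∑ a, W u a * F u v w * (W ^ n) a v * W v w * π w := sum4 _
      _ = ∑ u, ∑ v, ∑ w, F u v w * (W ^ (n + 1)) u v * W v w * π w := by
          refine Finset.sum_congr rfl fun u _ => Finset.sum_congr rfl fun v _ =>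
            Finset.sum_congr rfl fun w _ => ?_
          rw [pow_succ', Matrix.mul_apply, Finset.mul_sum, Finset.sum_mul, Finset.sum_mul]
          refine Finset.sum_congr rfl fun a _ => ?_
          ring

set_option maxHeartbeats 1000000 in
lemma adj (W : Matrix X X ℝ) (π : X → ℝ)
    (hW1 : ∀ x', ∑ x, W x x' = 1) (hπstat : ∀ x, ∑ x', W x x' * π x' = π x) :
    ∀ (n : ℕ) (a : Fin n) (F : X → X → ℝ),
    ∑ x : Fin (n + 1) → X, Qpath W π n x * F (x a.succ) (x a.castSucc)
    = ∑ u, ∑ v, F u v * W u v * π v := by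
  intro n
  induction n with
  | zero => exact fun a => absurd a.isLt (by omega)
  | succ n ih =>
    intro a F
    by_cases hb : a.val < n
    · set a' : Fin n := ⟨a.val, hb⟩ with ha'
      have h1 : (a'.succ.castSucc : Fin (n + 1 + 1)) = a.succ := by
        apply Fin.ext; simp [ha']
      have h2 : (a'.castSucc.castSucc : Fin (n + 1 + 1)) = a.castSucc := by
        apply Fin.ext; simp [ha']
      calc ∑ x : Fin (n + 1 + 1) → X, Qpath W π (n + 1) x * F (x a.succ) (x a.castSucc)
          = ∑ x : Fin (n + 1 + 1) → X, Qpath W π (n + 1) x *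
              (fun (u : X) (y : Fin (n + 1) → X) => F (y a'.succ) (y a'.castSucc))
              (x (Fin.last (n + 1))) (x ∘ Fin.castSucc) := by
            refine Finset.sum_congr rfl fun x _ => ?_
            show Qpath W π (n + 1) x * F (x a.succ) (x a.castSucc)
              = Qpath W π (n + 1) x * F (x a'.succ.castSucc) (x a'.castSucc.castSucc)
            rw [h1, h2]
        _ = ∑ y : Fin (n + 1) → X, Qpath W π n y *
              ∑ u, W u (y (Fin.last n)) * F (y a'.succ) (y a'.castSucc) :=
            splitLast W π n (fun u y => F (y a'.succ) (y a'.castSucc))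
        _ = ∑ y : Fin (n + 1) → X, Qpath W π n y * F (y a'.succ) (y a'.castSucc) := by
            refine Finset.sum_congr rfl fun y _ => ?_
            rw [← Finset.sum_mul, hW1, one_mul]
        _ = ∑ u, ∑ v, F u v * W u v * π v := ih a' F
    · have ha : a.val = n := by omega
      cases n with
      | zero =>
        have haz : a = 0 := by apply Fin.ext; omega
        subst haz
        exact base2 W π F
      | succ k =>
        set a' : Fin (k + 1) := ⟨k, by omega⟩ with ha'
        have h1 : (a'.succ.succ : Fin (k + 1 + 1 + 1)) = a.succ := by
          apply Fin.ext; simp [ha', Fin.val_succ]; omega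
        have h2 : (a'.castSucc.succ : Fin (k + 1 + 1 + 1)) = a.castSucc := by
          apply Fin.ext; simp [ha']; omega
        calc ∑ x : Fin (k + 1 + 1 + 1) → X, Qpath W π (k + 1 + 1) x *
                F (x a.succ) (x a.castSucc)
            = ∑ x : Fin (k + 1 + 1 + 1) → X, Qpath W π (k + 1 + 1) x *
              (fun (y : Fin (k + 1 + 1) → X) => F (y a'.succ) (y a'.castSucc))
              (x ∘ Fin.succ) := by
              refine Finset.sum_congr rfl fun x _ => ?_
              show Qpath W π (k + 1 + 1) x * F (x a.succ) (x a.castSucc)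
                = Qpath W π (k + 1 + 1) x * F (x a'.succ.succ) (x a'.castSucc.succ)
              rw [h1, h2]
          _ = ∑ y : Fin (k + 1 + 1) → X, Qpath W π (k + 1) y *
                F (y a'.succ) (y a'.castSucc) :=
              chopFirst W π hπstat (k + 1) (fun y => F (y a'.succ) (y a'.castSucc))
          _ = ∑ u, ∑ v, F u v * W u v * π v := ih a' F

set_option maxHeartbeats 1600000 in
lemma pairLem (W : Matrix X X ℝ) (π : X → ℝ)
    (hW1 : ∀ x', ∑ x, W x x' = 1) (hπstat : ∀ x, ∑ x', W x x' * π x' = π x)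
    (g : X → X → ℝ) :
    ∀ (n : ℕ) (a b : Fin n), a.val < b.val →
    ∑ x : Fin (n + 1) → X, Qpath W π n x *
      (g (x a.succ) (x a.castSucc) * g (x b.succ) (x b.castSucc))
    = ∑ u, ∑ v, (∑ p, W p u * g p u) * (W ^ (b.val - a.val - 1)) u v *
        (∑ q, W v q * π q * g v q) := by
  intro n
  induction n with
  | zero => exact fun a => absurd a.isLt (by omega)
  | succ n ih =>
    intro a b hab
    by_cases hb : b.val < n
    · set a' : Fin n := ⟨a.val, by omega⟩ with ha'
      set b' : Fin n := ⟨b.val, hb⟩ with hb'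
      have h1 : (a'.succ.castSucc : Fin (n + 1 + 1)) = a.succ := by
        apply Fin.ext; simp [ha']
      have h2 : (a'.castSucc.castSucc : Fin (n + 1 + 1)) = a.castSucc := by
        apply Fin.ext; simp [ha']
      have h3 : (b'.succ.castSucc : Fin (n + 1 + 1)) = b.succ := by
        apply Fin.ext; simp [hb']
      have h4 : (b'.castSucc.castSucc : Fin (n + 1 + 1)) = b.castSucc := by
        apply Fin.ext; simp [hb']
      have hexp : b'.val - a'.val - 1 = b.val - a.val - 1 := rfl
      calc ∑ x : Fin (n + 1 + 1) → X, Qpath W π (n + 1) x *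
              (g (x a.succ) (x a.castSucc) * g (x b.succ) (x b.castSucc))
          = ∑ x : Fin (n + 1 + 1) → X, Qpath W π (n + 1) x *
              (fun (u : X) (y : Fin (n + 1) → X) =>
                g (y a'.succ) (y a'.castSucc) * g (y b'.succ) (y b'.castSucc))
              (x (Fin.last (n + 1))) (x ∘ Fin.castSucc) := by
            refine Finset.sum_congr rfl fun x _ => ?_
            show Qpath W π (n + 1) x *
                (g (x a.succ) (x a.castSucc) * g (x b.succ) (x b.castSucc))
              = Qpath W π (n + 1) x *
                (g (x a'.succ.castSucc) (x a'.castSucc.castSucc) *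
                  g (x b'.succ.castSucc) (x b'.castSucc.castSucc))
            rw [h1, h2, h3, h4]
        _ = ∑ y : Fin (n + 1) → X, Qpath W π n y *
              ∑ u, W u (y (Fin.last n)) *
                (g (y a'.succ) (y a'.castSucc) * g (y b'.succ) (y b'.castSucc)) :=
            splitLast W π n
              (fun u y => g (y a'.succ) (y a'.castSucc) * g (y b'.succ) (y b'.castSucc))
        _ = ∑ y : Fin (n + 1) → X, Qpath W π n y *
              (g (y a'.succ) (y a'.castSucc) * g (y b'.succ) (y b'.castSucc)) := by
            refine Finset.sum_congr rfl fun y _ => ?_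
            rw [← Finset.sum_mul, hW1, one_mul]
        _ = ∑ u, ∑ v, (∑ p, W p u * g p u) * (W ^ (b.val - a.val - 1)) u v *
              (∑ q, W v q * π q * g v q) := by rw [← hexp]; exact ih a' b' hab
    · have hbv : b.val = n := by omega
      by_cases haz : a.val = 0
      · -- a at the start, b at the end
        cases n with
        | zero => omega
        | succ k =>
          have ha1 : (((1 : Fin (k + 1 + 1)).castSucc) : Fin (k + 1 + 1 + 1)) = a.succ := by
            apply Fin.ext; simp only [Fin.coe_castSucc, Fin.val_succ, Fin.val_one, haz]
          have ha0 : (((0 : Fin (k + 1 + 1)).castSucc) : Fin (k + 1 + 1 + 1)) = a.castSucc := by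
            apply Fin.ext; simp; omega
          have hb1 : (Fin.last (k + 1 + 1) : Fin (k + 1 + 1 + 1)) = b.succ := by
            apply Fin.ext; simp; omega
          have hb0 : (((Fin.last (k + 1)).castSucc) : Fin (k + 1 + 1 + 1)) = b.castSucc := by
            apply Fin.ext; simp; omega
          have hexp : b.val - a.val - 1 = k := by omega
          rw [hexp]
          calc ∑ x : Fin (k + 1 + 1 + 1) → X, Qpath W π (k + 1 + 1) x *
                  (g (x a.succ) (x a.castSucc) * g (x b.succ) (x b.castSucc))
              = ∑ x : Fin (k + 1 + 1 + 1) → X, Qpath W π (k + 1 + 1) x *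
                  (fun (u : X) (y : Fin (k + 1 + 1) → X) =>
                    g (y 1) (y 0) * g u (y (Fin.last (k + 1))))
                  (x (Fin.last (k + 1 + 1))) (x ∘ Fin.castSucc) := by
                refine Finset.sum_congr rfl fun x _ => ?_
                show Qpath W π (k + 1 + 1) x *
                    (g (x a.succ) (x a.castSucc) * g (x b.succ) (x b.castSucc))
                  = Qpath W π (k + 1 + 1) x *
                    (g (x ((1 : Fin (k + 1 + 1)).castSucc)) (x ((0 : Fin (k + 1 + 1)).castSucc)) *
                      g (x (Fin.last (k + 1 + 1))) (x ((Fin.last (k + 1)).castSucc)))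
                rw [ha1, ha0, hb1, hb0]
            _ = ∑ y : Fin (k + 1 + 1) → X, Qpath W π (k + 1) y *
                  ∑ u, W u (y (Fin.last (k + 1))) *
                    (g (y 1) (y 0) * g u (y (Fin.last (k + 1)))) :=
                splitLast W π (k + 1)
                  (fun u y => g (y 1) (y 0) * g u (y (Fin.last (k + 1))))
            _ = ∑ y : Fin (k + 1 + 1) → X, Qpath W π (k + 1) y *
                  (fun (A B C : X) => (∑ u, W u A * g u A) * g B C)
                  (y (Fin.last (k + 1))) (y 1) (y 0) := by
                refine Finset.sum_congr rfl fun y _ => ?_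
                show Qpath W π (k + 1) y *
                    ∑ u, W u (y (Fin.last (k + 1))) *
                      (g (y 1) (y 0) * g u (y (Fin.last (k + 1))))
                  = Qpath W π (k + 1) y *
                    ((∑ u, W u (y (Fin.last (k + 1))) * g u (y (Fin.last (k + 1)))) *
                      g (y 1) (y 0))
                rw [Finset.sum_mul]
                congr 1
                refine Finset.sum_congr rfl fun u _ => ?_
                ring
            _ = ∑ u, ∑ v, ∑ w, ((∑ p, W p u * g p u) * g v w) * (W ^ k) u v * W v w * π w :=
                three W π k (fun A B C => (∑ u, W u A * g u A) * g B C)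
            _ = ∑ u, ∑ v, (∑ p, W p u * g p u) * (W ^ k) u v *
                  (∑ q, W v q * π q * g v q) := by
                refine Finset.sum_congr rfl fun u _ => Finset.sum_congr rfl fun v _ => ?_
                rw [Finset.mul_sum]
                refine Finset.sum_congr rfl fun w _ => ?_
                ring
      · -- a.val ≥ 1 : chop the first coordinate
        cases n with
        | zero => omega
        | succ k =>
          set a' : Fin (k + 1) := ⟨a.val - 1, by omega⟩ with ha'
          set b' : Fin (k + 1) := ⟨k, by omega⟩ with hb'
          have h1 : (a'.succ.succ : Fin (k + 1 + 1 + 1)) = a.succ := by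
            apply Fin.ext; simp [ha']; omega
          have h2 : (a'.castSucc.succ : Fin (k + 1 + 1 + 1)) = a.castSucc := by
            apply Fin.ext; simp [ha']; omega
          have h3 : (b'.succ.succ : Fin (k + 1 + 1 + 1)) = b.succ := by
            apply Fin.ext; simp [hb']; omega
          have h4 : (b'.castSucc.succ : Fin (k + 1 + 1 + 1)) = b.castSucc := by
            apply Fin.ext; simp [hb']; omega
          have hexp : b'.val - a'.val - 1 = b.val - a.val - 1 := by
            simp [ha', hb']; omega
          calc ∑ x : Fin (k + 1 + 1 + 1) → X, Qpath W π (k + 1 + 1) x *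
                  (g (x a.succ) (x a.castSucc) * g (x b.succ) (x b.castSucc))
              = ∑ x : Fin (k + 1 + 1 + 1) → X, Qpath W π (k + 1 + 1) x *
                  (fun (y : Fin (k + 1 + 1) → X) =>
                    g (y a'.succ) (y a'.castSucc) * g (y b'.succ) (y b'.castSucc))
                  (x ∘ Fin.succ) := by
                refine Finset.sum_congr rfl fun x _ => ?_
                show Qpath W π (k + 1 + 1) x *
                    (g (x a.succ) (x a.castSucc) * g (x b.succ) (x b.castSucc))
                  = Qpath W π (k + 1 + 1) x *
                    (g (x a'.succ.succ) (x a'.castSucc.succ) *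
                      g (x b'.succ.succ) (x b'.castSucc.succ))
                rw [h1, h2, h3, h4]
            _ = ∑ y : Fin (k + 1 + 1) → X, Qpath W π (k + 1) y *
                  (g (y a'.succ) (y a'.castSucc) * g (y b'.succ) (y b'.castSucc)) :=
                chopFirst W π hπstat (k + 1)
                  (fun y => g (y a'.succ) (y a'.castSucc) * g (y b'.succ) (y b'.castSucc))
            _ = ∑ u, ∑ v, (∑ p, W p u * g p u) * (W ^ (b.val - a.val - 1)) u v *
                  (∑ q, W v q * π q * g v q) := by
                rw [← hexp]
                exact ih a' b' (by simp [ha', hb']; omega)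

lemma E1lem (W : Matrix X X ℝ) (π : X → ℝ)
    (hW1 : ∀ x', ∑ x, W x x' = 1) (hπstat : ∀ x, ∑ x', W x x' * π x' = π x)
    (g : X → X → ℝ) (n : ℕ) :
    ∑ x : Fin (n + 1) → X, Qpath W π n x * (∑ i : Fin n, g (x i.succ) (x i.castSucc))
    = (n : ℝ) * ∑ u, ∑ v, g u v * W u v * π v := by
  calc ∑ x : Fin (n + 1) → X, Qpath W π n x * (∑ i : Fin n, g (x i.succ) (x i.castSucc))
      = ∑ x : Fin (n + 1) → X, ∑ i : Fin n, Qpath W π n x * g (x i.succ) (x i.castSucc) :=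
        Finset.sum_congr rfl fun x _ => Finset.mul_sum _ _ _
    _ = ∑ i : Fin n, ∑ x : Fin (n + 1) → X, Qpath W π n x * g (x i.succ) (x i.castSucc) :=
        Finset.sum_comm
    _ = ∑ _i : Fin n, ∑ u, ∑ v, g u v * W u v * π v :=
        Finset.sum_congr rfl fun i _ => adj W π hW1 hπstat n i g
    _ = (n : ℝ) * ∑ u, ∑ v, g u v * W u v * π v := by
        rw [Finset.sum_const, Finset.card_univ, Fintype.card_fin, nsmul_eq_mul]

lemma E2lem (W : Matrix X X ℝ) (π : X → ℝ)
    (hW1 : ∀ x', ∑ x, W x x' = 1) (hπstat : ∀ x, ∑ x', W x x' * π x' = π x)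
    (g : X → X → ℝ) (ψ : ℕ → ℝ)
    (hψ0 : ψ 0 = ∑ u, ∑ v, (g u v * g u v) * W u v * π v)
    (hψ : ∀ k, ψ (k + 1) = ∑ u, ∑ v, (∑ p, W p u * g p u) * (W ^ k) u v *
      (∑ q, W v q * π q * g v q)) (n : ℕ) :
    ∑ x : Fin (n + 1) → X, Qpath W π n x * (∑ i : Fin n, g (x i.succ) (x i.castSucc)) ^ 2
    = ∑ i ∈ Finset.range n, ∑ j ∈ Finset.range n, ψ (Nat.dist i j) := by
  have hpair : ∀ i j : Fin n, ∑ x : Fin (n + 1) → X, Qpath W π n x *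
      (g (x i.succ) (x i.castSucc) * g (x j.succ) (x j.castSucc))
      = ψ (Nat.dist i.val j.val) := by
    intro i j
    rcases lt_trichotomy i.val j.val with h | h | h
    · have hd : Nat.dist i.val j.val = (j.val - i.val - 1) + 1 := by
        rw [Nat.dist_eq_sub_of_le h.le]; omega
      rw [hd, hψ, ← pairLem W π hW1 hπstat g n i j h]
    · have hij : i = j := Fin.ext h
      subst hij
      rw [Nat.dist_self, hψ0, ← adj W π hW1 hπstat n i (fun u v => g u v * g u v)]
    · have hd : Nat.dist i.val j.val = (i.val - j.val - 1) + 1 := by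
        rw [Nat.dist_comm, Nat.dist_eq_sub_of_le h.le]; omega
      rw [hd, hψ, ← pairLem W π hW1 hπstat g n j i h]
      refine Finset.sum_congr rfl fun x _ => by ring
  calc ∑ x : Fin (n + 1) → X, Qpath W π n x * (∑ i : Fin n, g (x i.succ) (x i.castSucc)) ^ 2
      = ∑ x : Fin (n + 1) → X, ∑ i : Fin n, ∑ j : Fin n,
          Qpath W π n x * (g (x i.succ) (x i.castSucc) * g (x j.succ) (x j.castSucc)) := by
        refine Finset.sum_congr rfl fun x _ => ?_
        rw [sq, Finset.sum_mul_sum, Finset.mul_sum]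
        refine Finset.sum_congr rfl fun i _ => ?_
        rw [Finset.mul_sum]
    _ = ∑ i : Fin n, ∑ j : Fin n, ∑ x : Fin (n + 1) → X,
          Qpath W π n x * (g (x i.succ) (x i.castSucc) * g (x j.succ) (x j.castSucc)) := by
        rw [Finset.sum_comm]
        exact Finset.sum_congr rfl fun i _ => Finset.sum_comm
    _ = ∑ i : Fin n, ∑ j : Fin n, ψ (Nat.dist i.val j.val) :=
        Finset.sum_congr rfl fun i _ => Finset.sum_congr rfl fun j _ => hpair i j
    _ = ∑ i ∈ Finset.range n, ∑ j ∈ Finset.range n, ψ (Nat.dist i j) := by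
        rw [Fin.sum_univ_eq_sum_range (fun i => ∑ j : Fin n, ψ (Nat.dist i j.val))]
        exact Finset.sum_congr rfl fun i _ =>
          Fin.sum_univ_eq_sum_range (fun j => ψ (Nat.dist i j)) n

lemma cntLem (ψ : ℕ → ℝ) : ∀ n : ℕ,
    ∑ i ∈ Finset.range n, ∑ j ∈ Finset.range n, ψ (Nat.dist i j)
    = (n : ℝ) * ψ 0 + 2 * ∑ l ∈ Finset.range n, ∑ k ∈ Finset.range l, ψ (k + 1) := by
  intro n
  induction n with
  | zero => simp
  | succ n ih =>
    have hrefl : ∑ i ∈ Finset.range n, ψ (n - i) = ∑ k ∈ Finset.range n, ψ (k + 1) := by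
      rw [← Finset.sum_range_reflect (fun k => ψ (k + 1)) n]
      refine Finset.sum_congr rfl fun i hi => ?_
      rw [Finset.mem_range] at hi
      congr 1
      omega
    have hdn : ∀ i ∈ Finset.range n, ψ (Nat.dist i n) = ψ (n - i) := by
      intro i hi
      rw [Finset.mem_range] at hi
      rw [Nat.dist_eq_sub_of_le hi.le]
    have hdn' : ∀ j ∈ Finset.range n, ψ (Nat.dist n j) = ψ (n - j) := by
      intro j hj
      rw [Nat.dist_comm]
      exact hdn j hj
    calc ∑ i ∈ Finset.range (n + 1), ∑ j ∈ Finset.range (n + 1), ψ (Nat.dist i j)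
        = ∑ i ∈ Finset.range (n + 1), ((∑ j ∈ Finset.range n, ψ (Nat.dist i j))
            + ψ (Nat.dist i n)) :=
          Finset.sum_congr rfl fun i _ => Finset.sum_range_succ _ n
      _ = (∑ i ∈ Finset.range n, ∑ j ∈ Finset.range n, ψ (Nat.dist i j))
            + ∑ i ∈ Finset.range n, ψ (Nat.dist i n)
            + ((∑ j ∈ Finset.range n, ψ (Nat.dist n j)) + ψ (Nat.dist n n)) := by
          rw [Finset.sum_range_succ, Finset.sum_add_distrib]
      _ = ((n : ℝ) * ψ 0 + 2 * ∑ l ∈ Finset.range n, ∑ k ∈ Finset.range l, ψ (k + 1))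
            + (∑ k ∈ Finset.range n, ψ (k + 1))
            + ((∑ k ∈ Finset.range n, ψ (k + 1)) + ψ 0) := by
          rw [ih, Nat.dist_self,
            Finset.sum_congr rfl hdn, Finset.sum_congr rfl hdn', hrefl]
      _ = ((n : ℝ) + 1) * ψ 0 + 2 * ∑ l ∈ Finset.range (n + 1), ∑ k ∈ Finset.range l, ψ (k + 1) := by
          rw [Finset.sum_range_succ]
          ring
      _ = ((n + 1 : ℕ) : ℝ) * ψ 0 + 2 * ∑ l ∈ Finset.range (n + 1), ∑ k ∈ Finset.range l, ψ (k + 1) := by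
          push_cast
          ring
end More

lemma sqId : ∀ n : ℕ, ((n : ℝ)) ^ 2 = (n : ℝ) + 2 * ∑ l ∈ Finset.range n, (l : ℝ) := by
  intro n
  induction n with
  | zero => simp
  | succ n ihn =>
    rw [Finset.sum_range_succ]
    push_cast
    linear_combination ihn

open Matrix in
set_option maxHeartbeats 1600000 in
/-- the asymptotic variance per step of the sample sum
`S_n = ∑ g(x_{i+1}, x_i)` of a stationary Markov chain equals
`V + 2 g_*ᵀ (Z − A) g^*`, where `Z = (I − (W − A))⁻¹` is the fundamental
matrix of the chain (Kemeny–Snell). -/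
theorem stmt_8 {X : Type*} [Fintype X] [DecidableEq X] [Nonempty X]
    (W : Matrix X X ℝ) (hW0 : ∀ x x', 0 ≤ W x x') (hW1 : ∀ x', ∑ x, W x x' = 1)
    (π : X → ℝ) (hπpos : ∀ x, 0 < π x) (hπ1 : ∑ x, π x = 1)
    (hπstat : ∀ x, ∑ x', W x x' * π x' = π x)
    (A : Matrix X X ℝ) (hA : ∀ x x', A x x' = π x)
    (hconv : ∀ x x', Filter.Tendsto (fun n : ℕ => (W ^ n) x x') Filter.atTop (nhds (A x x')))
    (g : X → X → ℝ)
    (Q : (n : ℕ) → (Fin (n + 1) → X) → ℝ)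
    (hQ : ∀ n (x : Fin (n + 1) → X),
      Q n x = π (x 0) * ∏ i : Fin n, W (x i.succ) (x i.castSucc))
    (S : (n : ℕ) → (Fin (n + 1) → X) → ℝ)
    (hS : ∀ n (x : Fin (n + 1) → X),
      S n x = ∑ i : Fin n, g (x i.succ) (x i.castSucc))
    (m : ℝ) (hm : m = ∑ x, ∑ x', W x x' * π x' * g x x')
    (V : ℝ) (hV : V = (∑ x, ∑ x', W x x' * π x' * g x x' ^ 2) - m ^ 2)
    (gst : X → ℝ) (hgst : ∀ u, gst u = ∑ x, W x u * g x u)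
    (gss : X → ℝ) (hgss : ∀ u', gss u' = ∑ x', W u' x' * π x' * g u' x') :
    IsUnit (1 - (W - A)) ∧
    Filter.Tendsto
      (fun n : ℕ => (1 / (n : ℝ)) *
        ((∑ x : Fin (n + 1) → X, Q n x * S n x ^ 2) -
          (∑ x : Fin (n + 1) → X, Q n x * S n x) ^ 2))
      Filter.atTop
      (nhds (V + 2 * ∑ u, ∑ u', gst u * (Ring.inverse (1 - (W - A)) - A) u u' * gss u')) := by
  classical
  -- matrix algebra facts
  have hWA : W * A = A := by
    ext x y
    simp only [Matrix.mul_apply, hA]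
    exact hπstat x
  have hAW : A * W = A := by
    ext x y
    simp only [Matrix.mul_apply, hA]
    rw [← Finset.mul_sum, hW1, mul_one]
  have hAA : A * A = A := by
    ext x y
    simp only [Matrix.mul_apply, hA]
    rw [← Finset.mul_sum, hπ1, mul_one]
  have hWpowA : ∀ k : ℕ, W ^ k * A = A := by
    intro k
    induction k with
    | zero => rw [pow_zero, one_mul]
    | succ k ihk => rw [pow_succ, mul_assoc, hWA, ihk]
  have hBpow : ∀ k : ℕ, 1 ≤ k → (W - A) ^ k = W ^ k - A := by
    intro k hk
    induction k with
    | zero => omega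
    | succ k ihk =>
      rcases Nat.lt_or_ge k 1 with h1 | h1
      · interval_cases k
        simp [pow_one]
      · have hmul : (W ^ k - A) * (W - A) = W ^ k * W - W ^ k * A - A * W + A * A := by
          noncomm_ring
        rw [pow_succ, ihk h1, hmul, hWpowA, hAW, hAA, ← pow_succ]
        abel
  have hBto0 : ∀ x y : X,
      Filter.Tendsto (fun l : ℕ => ((W - A) ^ l) x y) Filter.atTop (nhds 0) := by
    intro x y
    have h1 : Filter.Tendsto (fun l : ℕ => (W ^ l) x y - A x y) Filter.atTop (nhds 0) := by
      have := (hconv x y).sub (tendsto_const_nhds (x := A x y))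
      simpa using this
    refine h1.congr' ?_
    filter_upwards [Filter.eventually_ge_atTop 1] with l hl
    rw [hBpow l hl, Matrix.sub_apply]
  have hu : IsUnit (1 - (W - A)) := by
    rw [Matrix.isUnit_iff_isUnit_det, isUnit_iff_ne_zero]
    intro hdet
    obtain ⟨v, hv0, hv⟩ := Matrix.exists_mulVec_eq_zero_iff.mpr hdet
    have hBv : (W - A) *ᵥ v = v := by
      have h2 := hv
      rw [Matrix.sub_mulVec, Matrix.one_mulVec, sub_eq_zero] at h2
      exact h2.symm
    have hfix : ∀ l : ℕ, ((W - A) ^ l) *ᵥ v = v := by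
      intro l
      induction l with
      | zero => rw [pow_zero, Matrix.one_mulVec]
      | succ l ihl => rw [pow_succ, ← Matrix.mulVec_mulVec, hBv, ihl]
    obtain ⟨x0, hx0⟩ := Function.ne_iff.mp hv0
    have hlim : Filter.Tendsto (fun l : ℕ => (((W - A) ^ l) *ᵥ v) x0)
        Filter.atTop (nhds 0) := by
      simp only [Matrix.mulVec, dotProduct]
      have := tendsto_finset_sum (Finset.univ : Finset X)
        (fun y _ => (hBto0 x0 y).mul_const (v y))
      simpa using this
    have hconst : Filter.Tendsto (fun _ : ℕ => v x0) Filter.atTop (nhds 0) := by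
      refine hlim.congr fun l => ?_
      rw [hfix l]
    exact hx0 (by simpa using (tendsto_nhds_unique hconst tendsto_const_nhds).symm)
  set Z := Ring.inverse (1 - (W - A)) with hZdef
  have hZl : Z * (1 - (W - A)) = 1 := Ring.inverse_mul_cancel _ hu
  have geo : ∀ l : ℕ, ∑ k ∈ Finset.range l, (W - A) ^ k = Z - Z * (W - A) ^ l := by
    intro l
    have h2 : (1 - (W - A)) * ∑ k ∈ Finset.range l, (W - A) ^ k = 1 - (W - A) ^ l := by
      have h3 := mul_geom_sum (W - A) l
      calc (1 - (W - A)) * ∑ k ∈ Finset.range l, (W - A) ^ k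
          = -(((W - A) - 1) * ∑ k ∈ Finset.range l, (W - A) ^ k) := by noncomm_ring
        _ = -((W - A) ^ l - 1) := by rw [h3]
        _ = 1 - (W - A) ^ l := by abel
    calc ∑ k ∈ Finset.range l, (W - A) ^ k
        = Z * ((1 - (W - A)) * ∑ k ∈ Finset.range l, (W - A) ^ k) := by
          rw [← mul_assoc, hZl, one_mul]
      _ = Z * (1 - (W - A) ^ l) := by rw [h2]
      _ = Z - Z * (W - A) ^ l := by rw [mul_sub, mul_one]
  set quad : Matrix X X ℝ → ℝ := fun M => ∑ u, ∑ v, gst u * M u v * gss v with hquad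
  have quad_sub : ∀ M N, quad (M - N) = quad M - quad N := by
    intro M N
    simp only [hquad, Matrix.sub_apply, mul_sub, sub_mul, Finset.sum_sub_distrib]
  have quad_add : ∀ M N, quad (M + N) = quad M + quad N := by
    intro M N
    simp only [hquad, Matrix.add_apply, mul_add, add_mul, Finset.sum_add_distrib]
  have quad_sum : ∀ (l : ℕ) (M : ℕ → Matrix X X ℝ),
      quad (∑ k ∈ Finset.range l, M k) = ∑ k ∈ Finset.range l, quad (M k) := by
    intro l M
    induction l with
    | zero => simp [hquad]
    | succ l ihl =>
      rw [Finset.sum_range_succ, Finset.sum_range_succ, quad_add, ihl]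
  set TT := ∑ u, ∑ u', gst u * (Z - A) u u' * gss u' with hTTdef
  have hqTT : quad (Z - A) = TT := rfl
  set T : ℕ → ℝ := fun l => ∑ k ∈ Finset.range l, quad (W ^ k - A) with hTdef
  have hMsum : ∀ l : ℕ, 1 ≤ l →
      ∑ k ∈ Finset.range l, (W ^ k - A) = (∑ k ∈ Finset.range l, (W - A) ^ k) - A := by
    intro l hl
    induction l with
    | zero => omega
    | succ l ihl =>
      rcases Nat.lt_or_ge l 1 with h1 | h1
      · interval_cases l
        simp
      · rw [Finset.sum_range_succ, Finset.sum_range_succ, ihl h1, hBpow l h1]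
        abel
  have hTl : ∀ l : ℕ, 1 ≤ l → T l = TT - quad (Z * (W - A) ^ l) := by
    intro l hl
    rw [hTdef]
    simp only
    rw [← quad_sum l (fun k => W ^ k - A), hMsum l hl, geo l]
    have h5 : (Z - Z * (W - A) ^ l) - A = (Z - A) - Z * (W - A) ^ l := by abel
    rw [h5, quad_sub, hqTT]
  have hq0 : Filter.Tendsto (fun l : ℕ => quad (Z * (W - A) ^ l)) Filter.atTop (nhds 0) := by
    have hterm : ∀ u v' : X, Filter.Tendsto
        (fun l : ℕ => gst u * (Z * (W - A) ^ l) u v' * gss v') Filter.atTop (nhds 0) := by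
      intro u v'
      have h1 : Filter.Tendsto (fun l : ℕ => (Z * (W - A) ^ l) u v') Filter.atTop (nhds 0) := by
        simp only [Matrix.mul_apply]
        have := tendsto_finset_sum (Finset.univ : Finset X)
          (fun w _ => ((hBto0 w v').const_mul (Z u w)))
        simpa using this
      have := (h1.const_mul (gst u)).mul_const (gss v')
      simpa using this
    have := tendsto_finset_sum (Finset.univ : Finset X)
      (fun u _ => tendsto_finset_sum (Finset.univ : Finset X) (fun v' _ => hterm u v'))
    simpa [hquad] using this
  have hT : Filter.Tendsto T Filter.atTop (nhds TT) := by
    have h := (tendsto_const_nhds (x := TT)).sub hq0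
    rw [sub_zero] at h
    refine h.congr' ?_
    filter_upwards [Filter.eventually_ge_atTop 1] with l hl
    exact (hTl l hl).symm
  have hC : Filter.Tendsto (fun n : ℕ => (n : ℝ)⁻¹ * ∑ l ∈ Finset.range n, T l)
      Filter.atTop (nhds TT) := hT.cesaro
  -- the finite-n identity
  have hkey : ∀ n : ℕ,
      (∑ x : Fin (n + 1) → X, Q n x * S n x ^ 2) -
        (∑ x : Fin (n + 1) → X, Q n x * S n x) ^ 2
      = (n : ℝ) * V + 2 * ∑ l ∈ Finset.range n, T l := by
    intro n
    set ψ : ℕ → ℝ := fun k => Nat.casesOn k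
      (∑ u, ∑ v, (g u v * g u v) * W u v * π v)
      (fun k' => ∑ u, ∑ v, (∑ p, W p u * g p u) * (W ^ k') u v *
        (∑ q, W v q * π q * g v q)) with hψdef
    have hψ0 : ψ 0 = ∑ u, ∑ v, (g u v * g u v) * W u v * π v := rfl
    have hψs : ∀ k, ψ (k + 1) = ∑ u, ∑ v, (∑ p, W p u * g p u) * (W ^ k) u v *
        (∑ q, W v q * π q * g v q) := fun k => rfl
    have hE2 : ∑ x : Fin (n + 1) → X, Q n x * S n x ^ 2
        = ∑ i ∈ Finset.range n, ∑ j ∈ Finset.range n, ψ (Nat.dist i j) := by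
      rw [show (∑ x : Fin (n + 1) → X, Q n x * S n x ^ 2)
          = ∑ x : Fin (n + 1) → X, Qpath W π n x *
            (∑ i : Fin n, g (x i.succ) (x i.castSucc)) ^ 2 from
        Finset.sum_congr rfl fun x _ => by rw [hQ, hS]; rfl]
      exact E2lem W π hW1 hπstat g ψ hψ0 hψs n
    have hE1 : ∑ x : Fin (n + 1) → X, Q n x * S n x = (n : ℝ) * m := by
      rw [show (∑ x : Fin (n + 1) → X, Q n x * S n x)
          = ∑ x : Fin (n + 1) → X, Qpath W π n x *
            (∑ i : Fin n, g (x i.succ) (x i.castSucc)) from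
        Finset.sum_congr rfl fun x _ => by rw [hQ, hS]; rfl]
      rw [E1lem W π hW1 hπstat g n]
      congr 1
      rw [hm]
      exact Finset.sum_congr rfl fun u _ => Finset.sum_congr rfl fun v _ => by ring
    rw [hE2, hE1, cntLem ψ n]
    have hψ0V : ψ 0 = V + m ^ 2 := by
      rw [show ψ 0 = ∑ x, ∑ x', W x x' * π x' * g x x' ^ 2 from
        Finset.sum_congr rfl fun u _ => Finset.sum_congr rfl fun v _ => by ring, hV]
      ring
    have hgstm : ∑ u, gst u * π u = m := by
      rw [hm]
      rw [Finset.sum_congr rfl (fun u (_ : u ∈ Finset.univ) => by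
        rw [hgst u, Finset.sum_mul])]
      exact Finset.sum_comm.trans
        (Finset.sum_congr rfl fun u _ => Finset.sum_congr rfl fun v _ => by ring)
    have hgssm : ∑ v, gss v = m := by
      rw [hm]
      exact Finset.sum_congr rfl fun v _ => by rw [hgss]
    have hquadA : quad A = m ^ 2 := by
      rw [hquad]
      simp only [hA]
      calc ∑ u, ∑ v, gst u * π u * gss v
          = ∑ u, gst u * π u * ∑ v, gss v :=
            Finset.sum_congr rfl fun u _ => (Finset.mul_sum _ _ _).symm
        _ = (∑ u, gst u * π u) * ∑ v, gss v := (Finset.sum_mul _ _ _).symm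
        _ = m ^ 2 := by rw [hgstm, hgssm]; ring
    have hψk : ∀ k, ψ (k + 1) = quad (W ^ k) := by
      intro k
      rw [hψs k, hquad]
      exact Finset.sum_congr rfl fun u _ => Finset.sum_congr rfl fun v _ => by
        rw [← hgst, ← hgss]
    have hek : ∀ k, quad (W ^ k - A) = ψ (k + 1) - m ^ 2 := by
      intro k
      rw [quad_sub, hψk, hquadA]
    have hTexp : ∀ l, T l = (∑ k ∈ Finset.range l, ψ (k + 1)) - (l : ℝ) * m ^ 2 := by
      intro l
      rw [hTdef]
      simp only
      rw [Finset.sum_congr rfl fun k _ => hek k, Finset.sum_sub_distrib,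
        Finset.sum_const, Finset.card_range, nsmul_eq_mul]
    have hsq : ((n : ℝ)) ^ 2 = (n : ℝ) + 2 * ∑ l ∈ Finset.range n, (l : ℝ) := sqId n
    rw [hψ0V, Finset.sum_congr rfl (fun l (_ : l ∈ Finset.range n) => hTexp l),
      Finset.sum_sub_distrib, ← Finset.sum_mul]
    linear_combination (-(m ^ 2)) * hsq
  refine ⟨hu, ?_⟩
  have hmain : Filter.Tendsto
      (fun n : ℕ => V + 2 * ((n : ℝ)⁻¹ * ∑ l ∈ Finset.range n, T l))
      Filter.atTop (nhds (V + 2 * TT)) := tendsto_const_nhds.add (hC.const_mul 2)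
  refine Filter.Tendsto.congr' ?_ hmain
  filter_upwards [Filter.eventually_ge_atTop 1] with n hn
  have hn0 : (n : ℝ) ≠ 0 := Nat.cast_ne_zero.mpr (by omega)
  rw [hkey n]
  field_simp
end

section
/- Let X be a nonempty finite set and let P0 and P1 be strictly positive probability distributions on X (P0(x) > 0 and P1(x) > 0 for all x). A test is a function T : X → [0,1], and for ε ∈ [0,1] define β_ε(P1‖P0) := inf { Σ_x P0(x)(1 − T(x)) : T a test with Σ_x P1(x) T(x) ≤ ε }. Then for every a ∈ ℝ and ε ∈ [0,1]: if P1{ x : log(P1(x)/P0(x)) < a } ≤ ε, then β_ε(P1‖P0) ≤ e^{−a}. -/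
open scoped Classical

/-- direct part of the finite-length hypothesis testing lemma:
if the alternative-hypothesis probability of the event
`{log(P1/P0) < a}` is at most `ε`, then the minimum second-kind error
probability `β_ε(P1‖P0)` is at most `e^{-a}`. -/
theorem stmt_9 {X : Type*} [Fintype X] [Nonempty X]
    (P0 P1 : X → ℝ) (hP0pos : ∀ x, 0 < P0 x) (hP1pos : ∀ x, 0 < P1 x)
    (hP0 : ∑ x, P0 x = 1) (hP1 : ∑ x, P1 x = 1)
    (a : ℝ) (ε : ℝ) (hε : ε ∈ Set.Icc (0 : ℝ) 1)
    (h : ∑ x ∈ Finset.univ.filter (fun x => Real.log (P1 x / P0 x) < a), P1 x ≤ ε) :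
    sInf {b : ℝ | ∃ T : X → ℝ, (∀ x, T x ∈ Set.Icc (0 : ℝ) 1) ∧
        (∑ x, P1 x * T x ≤ ε) ∧ b = ∑ x, P0 x * (1 - T x)}
      ≤ Real.exp (-a) := by
  set T : X → ℝ := fun x => if Real.log (P1 x / P0 x) < a then 1 else 0 with hT
  have hmem : (∑ x, P0 x * (1 - T x)) ∈ {b : ℝ | ∃ T : X → ℝ,
      (∀ x, T x ∈ Set.Icc (0 : ℝ) 1) ∧
      (∑ x, P1 x * T x ≤ ε) ∧ b = ∑ x, P0 x * (1 - T x)} := by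
    refine ⟨T, fun x => ?_, ?_, rfl⟩
    · by_cases hx : Real.log (P1 x / P0 x) < a <;> simp [hT, hx]
    · calc ∑ x, P1 x * T x
          = ∑ x ∈ Finset.univ.filter (fun x => Real.log (P1 x / P0 x) < a), P1 x := by
            rw [Finset.sum_filter]
            exact Finset.sum_congr rfl fun x _ => by
              by_cases hx : Real.log (P1 x / P0 x) < a <;> simp [hT, hx]
        _ ≤ ε := h
  have hbdd : BddBelow {b : ℝ | ∃ T : X → ℝ, (∀ x, T x ∈ Set.Icc (0 : ℝ) 1) ∧
      (∑ x, P1 x * T x ≤ ε) ∧ b = ∑ x, P0 x * (1 - T x)} := by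
    refine ⟨0, fun b hb => ?_⟩
    obtain ⟨S, hS, _, rfl⟩ := hb
    exact Finset.sum_nonneg fun x _ => mul_nonneg (hP0pos x).le
      (by linarith [(hS x).2])
  refine csInf_le_of_le hbdd hmem ?_
  calc ∑ x, P0 x * (1 - T x)
      ≤ ∑ x, Real.exp (-a) * P1 x := by
        refine Finset.sum_le_sum fun x _ => ?_
        by_cases hx : Real.log (P1 x / P0 x) < a
        · simp only [hT, hx, if_true, sub_self, mul_zero]
          exact mul_nonneg (Real.exp_pos _).le (hP1pos x).le
        · simp only [hT, hx, if_false, sub_zero, mul_one]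
          push_neg at hx
          have hratio : Real.exp a ≤ P1 x / P0 x := by
            have := Real.exp_le_exp.mpr hx
            rwa [Real.exp_log (div_pos (hP1pos x) (hP0pos x))] at this
          have : P0 x * Real.exp a ≤ P1 x := by
            rw [mul_comm, ← le_div_iff₀ (hP0pos x)]; exact hratio
          calc P0 x = Real.exp (-a) * (P0 x * Real.exp a) := by
                rw [Real.exp_neg]; field_simp
            _ ≤ Real.exp (-a) * P1 x :=
                mul_le_mul_of_nonneg_left this (Real.exp_pos _).le
    _ = Real.exp (-a) := by rw [← Finset.mul_sum, hP1, mul_one]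
end

section
/- Let X be a nonempty finite set and let P0 and P1 be strictly positive probability distributions on X (P0(x) > 0 and P1(x) > 0 for all x). A test is a function T : X → [0,1], and for ε ∈ [0,1] define β_ε(P1‖P0) := inf { Σ_x P0(x)(1 − T(x)) : T a test with Σ_x P1(x) T(x) ≤ ε }. Then for every a ∈ ℝ, ε ∈ [0,1], and δ > 0: if P1{ x : log(P1(x)/P0(x)) < a } ≥ ε + δ, then β_ε(P1‖P0) ≥ δ e^{−a}. -/
open scoped Classical

/-- converse part of the finite-length hypothesis testing lemma:
if the alternative-hypothesis probability of the event `{log(P1/P0) < a}` is at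
least `ε + δ`, then the minimum second-kind error probability `β_ε(P1‖P0)`
is at least `δ e^{-a}`. -/
theorem stmt_10 {X : Type*} [Fintype X] [Nonempty X]
    (P0 P1 : X → ℝ) (hP0pos : ∀ x, 0 < P0 x) (hP1pos : ∀ x, 0 < P1 x)
    (hP0 : ∑ x, P0 x = 1) (hP1 : ∑ x, P1 x = 1)
    (a : ℝ) (ε : ℝ) (hε : ε ∈ Set.Icc (0 : ℝ) 1) (δ : ℝ) (hδ : 0 < δ)
    (h : ε + δ ≤ ∑ x ∈ Finset.univ.filter (fun x => Real.log (P1 x / P0 x) < a), P1 x) :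
    δ * Real.exp (-a) ≤
      sInf {b : ℝ | ∃ T : X → ℝ, (∀ x, T x ∈ Set.Icc (0 : ℝ) 1) ∧
        (∑ x, P1 x * T x ≤ ε) ∧ b = ∑ x, P0 x * (1 - T x)} := by
  set A := Finset.univ.filter (fun x => Real.log (P1 x / P0 x) < a) with hA
  apply le_csInf
  · refine ⟨∑ x, P0 x * (1 - ε), fun _ => ε, fun x => hε, ?_, rfl⟩
    calc ∑ x, P1 x * ε = (∑ x, P1 x) * ε := by rw [Finset.sum_mul]
    _ = ε := by rw [hP1, one_mul]
    _ ≤ ε := le_rfl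
  · rintro b ⟨T, hT, hTε, rfl⟩
    -- key pointwise fact on A : exp (-a) * P1 x ≤ P0 x
    have hkey : ∀ x ∈ A, Real.exp (-a) * P1 x ≤ P0 x := by
      intro x hx
      rw [hA, Finset.mem_filter] at hx
      have hpos : 0 < P1 x / P0 x := div_pos (hP1pos x) (hP0pos x)
      have := (Real.log_lt_iff_lt_exp hpos).mp hx.2
      rw [div_lt_iff₀ (hP0pos x)] at this
      have h2 := mul_le_mul_of_nonneg_left this.le (Real.exp_pos (-a)).le
      calc Real.exp (-a) * P1 x ≤ Real.exp (-a) * (Real.exp a * P0 x) := h2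
      _ = P0 x := by rw [← mul_assoc, ← Real.exp_add, neg_add_cancel, Real.exp_zero, one_mul]
    have h1 : ∀ x, 0 ≤ 1 - T x := fun x => by linarith [(hT x).2]
    have hT0 : ∀ x, 0 ≤ T x := fun x => (hT x).1
    -- ∑_A P1 (1 - T) ≥ δ
    have hsum1 : δ ≤ ∑ x ∈ A, P1 x * (1 - T x) := by
      have e1 : ∑ x ∈ A, P1 x * (1 - T x) = (∑ x ∈ A, P1 x) - ∑ x ∈ A, P1 x * T x := by
        rw [← Finset.sum_sub_distrib]; congr 1; ext x; ring
      have e2 : ∑ x ∈ A, P1 x * T x ≤ ∑ x, P1 x * T x := by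
        apply Finset.sum_le_sum_of_subset_of_nonneg (Finset.subset_univ _)
        intro x _ _
        exact mul_nonneg (hP1pos x).le (hT0 x)
      rw [e1]
      linarith
    -- main chain
    calc δ * Real.exp (-a) = Real.exp (-a) * δ := by ring
    _ ≤ Real.exp (-a) * ∑ x ∈ A, P1 x * (1 - T x) :=
        mul_le_mul_of_nonneg_left hsum1 (Real.exp_pos _).le
    _ = ∑ x ∈ A, (Real.exp (-a) * P1 x) * (1 - T x) := by
        rw [Finset.mul_sum]; congr 1; ext x; ring
    _ ≤ ∑ x ∈ A, P0 x * (1 - T x) := by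
        apply Finset.sum_le_sum
        intro x hx
        exact mul_le_mul_of_nonneg_right (hkey x hx) (h1 x)
    _ ≤ ∑ x, P0 x * (1 - T x) := by
        apply Finset.sum_le_sum_of_subset_of_nonneg (Finset.subset_univ _)
        intro x _ _
        exact mul_nonneg (hP0pos x).le (h1 x)
end

section
/- Let X be a nonempty finite set and let P0 and P1 be strictly positive probability distributions on X with P0 ≠ P1. Define φ(θ) := log Σ_x P0(x)^{1−θ} P1(x)^θ and D(P0‖P1) := Σ_x P0(x) log(P0(x)/P1(x)). A test is a function T : X → [0,1], and for ε ∈ [0,1] define β_ε(P1‖P0) := inf { Σ_x P0(x)(1 − T(x)) : T a test with Σ_x P1(x) T(x) ≤ ε }. Then for every r with 0 ≤ r ≤ D(P0‖P1) and every θ ∈ [0,1): β_{e^{−r}}(P1‖P0) ≤ exp( (θ r + φ(θ)) / (1 − θ) ). -/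
open scoped Classical

/-- direct (achievability) part of the Hoeffding-type bound for
binary hypothesis testing:
`β_{e^{-r}}(P1‖P0) ≤ exp((θr + φ(θ))/(1-θ))` for `0 ≤ r ≤ D(P0‖P1)` and
`θ ∈ [0,1)`, where `φ(θ) = log ∑ P0^{1-θ} P1^θ`. -/
theorem stmt_11 {X : Type*} [Fintype X] [Nonempty X]
    (P0 P1 : X → ℝ) (hP0pos : ∀ x, 0 < P0 x) (hP1pos : ∀ x, 0 < P1 x)
    (hP0 : ∑ x, P0 x = 1) (hP1 : ∑ x, P1 x = 1) (hne : P0 ≠ P1)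
    (φ : ℝ → ℝ) (hφ : ∀ θ, φ θ = Real.log (∑ x, P0 x ^ (1 - θ) * P1 x ^ θ))
    (D : ℝ) (hD : D = ∑ x, P0 x * Real.log (P0 x / P1 x))
    (r : ℝ) (hr0 : 0 ≤ r) (hrD : r ≤ D)
    (θ : ℝ) (hθ : θ ∈ Set.Ico (0 : ℝ) 1) :
    sInf {b : ℝ | ∃ T : X → ℝ, (∀ x, T x ∈ Set.Icc (0 : ℝ) 1) ∧
        (∑ x, P1 x * T x ≤ Real.exp (-r)) ∧ b = ∑ x, P0 x * (1 - T x)}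
      ≤ Real.exp ((θ * r + φ θ) / (1 - θ)) := by
  obtain ⟨hθ0, hθ1⟩ := hθ
  have h1θ : (0:ℝ) < 1 - θ := by linarith
  set s : ℝ := (r + φ θ) / (1 - θ) with hs
  set T : X → ℝ := fun x => if P1 x ≤ Real.exp (-s) * P0 x then 1 else 0 with hT
  have hsum_pos : 0 < ∑ x, P0 x ^ (1 - θ) * P1 x ^ θ :=
    Finset.sum_pos (fun x _ => mul_pos (Real.rpow_pos_of_pos (hP0pos x) _)
      (Real.rpow_pos_of_pos (hP1pos x) _)) Finset.univ_nonempty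
  have hφe : Real.exp (φ θ) = ∑ x, P0 x ^ (1 - θ) * P1 x ^ θ := by
    rw [hφ, Real.exp_log hsum_pos]
  have htypeI : ∑ x, P1 x * T x ≤ Real.exp (-r) := by
    have h1 : ∀ x, P1 x * T x ≤ Real.exp (-(s * (1 - θ))) * (P0 x ^ (1 - θ) * P1 x ^ θ) := by
      intro x
      by_cases h : P1 x ≤ Real.exp (-s) * P0 x
      · simp only [hT, if_pos h, mul_one]
        have key : P1 x ^ (1 - θ) ≤ (Real.exp (-s) * P0 x) ^ (1 - θ) :=
          Real.rpow_le_rpow (hP1pos x).le h h1θ.le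
        calc P1 x = P1 x ^ (1 - θ) * P1 x ^ θ := by
              rw [← Real.rpow_add (hP1pos x)]; simp
          _ ≤ (Real.exp (-s) * P0 x) ^ (1 - θ) * P1 x ^ θ := by
              exact mul_le_mul_of_nonneg_right key (Real.rpow_nonneg (hP1pos x).le _)
          _ = Real.exp (-(s * (1 - θ))) * (P0 x ^ (1 - θ) * P1 x ^ θ) := by
              rw [Real.mul_rpow (Real.exp_nonneg _) (hP0pos x).le, ← Real.exp_mul]
              ring_nf
      · simp only [hT, if_neg h, mul_zero]
        exact mul_nonneg (Real.exp_nonneg _) (mul_nonneg (Real.rpow_nonneg (hP0pos x).le _) (Real.rpow_nonneg (hP1pos x).le _))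
    calc ∑ x, P1 x * T x
        ≤ ∑ x, Real.exp (-(s * (1 - θ))) * (P0 x ^ (1 - θ) * P1 x ^ θ) :=
          Finset.sum_le_sum fun x _ => h1 x
      _ = Real.exp (-(s * (1 - θ))) * Real.exp (φ θ) := by rw [← Finset.mul_sum, hφe]
      _ = Real.exp (-(s * (1 - θ)) + φ θ) := (Real.exp_add _ _).symm
      _ = Real.exp (-r) := by
          congr 1
          rw [hs, div_mul_cancel₀ _ h1θ.ne']
          ring
  have htypeII : ∑ x, P0 x * (1 - T x) ≤ Real.exp ((θ * r + φ θ) / (1 - θ)) := by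
    have h2 : ∀ x, P0 x * (1 - T x) ≤ Real.exp (s * θ) * (P0 x ^ (1 - θ) * P1 x ^ θ) := by
      intro x
      by_cases h : P1 x ≤ Real.exp (-s) * P0 x
      · simp only [hT, if_pos h, sub_self, mul_zero]
        exact mul_nonneg (Real.exp_nonneg _) (mul_nonneg (Real.rpow_nonneg (hP0pos x).le _) (Real.rpow_nonneg (hP1pos x).le _))
      · simp only [hT, if_neg h, sub_zero, mul_one]
        push_neg at h
        have hP0le : P0 x ≤ Real.exp s * P1 x := by
          have h' := (mul_lt_mul_iff_right₀ (Real.exp_pos s)).mpr h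
          rw [← mul_assoc, ← Real.exp_add] at h'
          simpa using h'.le
        have key : P0 x ^ θ ≤ (Real.exp s * P1 x) ^ θ :=
          Real.rpow_le_rpow (hP0pos x).le hP0le hθ0
        calc P0 x = P0 x ^ (1 - θ) * P0 x ^ θ := by
              rw [← Real.rpow_add (hP0pos x)]; simp
          _ ≤ P0 x ^ (1 - θ) * (Real.exp s * P1 x) ^ θ := by
              exact mul_le_mul_of_nonneg_left key (Real.rpow_nonneg (hP0pos x).le _)
          _ = Real.exp (s * θ) * (P0 x ^ (1 - θ) * P1 x ^ θ) := by
              rw [Real.mul_rpow (Real.exp_nonneg _) (hP1pos x).le, ← Real.exp_mul]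
              ring
    calc ∑ x, P0 x * (1 - T x)
        ≤ ∑ x, Real.exp (s * θ) * (P0 x ^ (1 - θ) * P1 x ^ θ) :=
          Finset.sum_le_sum fun x _ => h2 x
      _ = Real.exp (s * θ) * Real.exp (φ θ) := by rw [← Finset.mul_sum, hφe]
      _ = Real.exp (s * θ + φ θ) := (Real.exp_add _ _).symm
      _ = Real.exp ((θ * r + φ θ) / (1 - θ)) := by
          congr 1
          rw [hs]
          field_simp
          ring
  have hmem : (∑ x, P0 x * (1 - T x)) ∈ {b : ℝ | ∃ T : X → ℝ,
      (∀ x, T x ∈ Set.Icc (0 : ℝ) 1) ∧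
      (∑ x, P1 x * T x ≤ Real.exp (-r)) ∧ b = ∑ x, P0 x * (1 - T x)} := by
    refine ⟨T, fun x => ?_, htypeI, rfl⟩
    simp only [hT]
    split_ifs <;> constructor <;> norm_num
  have hbdd : BddBelow {b : ℝ | ∃ T : X → ℝ, (∀ x, T x ∈ Set.Icc (0 : ℝ) 1) ∧
      (∑ x, P1 x * T x ≤ Real.exp (-r)) ∧ b = ∑ x, P0 x * (1 - T x)} := by
    refine ⟨0, ?_⟩
    rintro b ⟨T', hT', -, rfl⟩
    exact Finset.sum_nonneg fun x _ =>
      mul_nonneg (hP0pos x).le (by linarith [(hT' x).2])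
  exact le_trans (csInf_le hbdd hmem) htypeII
end

section
/- Let X be a nonempty finite set and let P0 and P1 be strictly positive probability distributions on X. Define φ(θ) := log Σ_x P0(x)^{1−θ} P1(x)^θ and the exponential family P_θ(x) := P0(x)^{1−θ} P1(x)^θ e^{−φ(θ)}. Then for every r ∈ ℝ, every θ ∈ ℝ, every θ̄ ≥ 0, and every subset S ⊆ X with P1(S) ≤ e^{−r}: P_θ(S) ≤ 2 · exp( ( −(1+θ̄) φ(θ) + φ((1+θ̄)θ − θ̄) − θ̄ r ) / (1+θ̄) ). -/
/-- any rejection region `S` with small alternative-hypothesis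
probability `P1(S) ≤ e^{-r}` has small probability under every member `P_θ` of
the exponential family connecting `P0` and `P1`. -/
theorem stmt_12 {X : Type*} [Fintype X] [Nonempty X]
    (P0 P1 : X → ℝ) (hP0pos : ∀ x, 0 < P0 x) (hP1pos : ∀ x, 0 < P1 x)
    (hP0 : ∑ x, P0 x = 1) (hP1 : ∑ x, P1 x = 1)
    (φ : ℝ → ℝ) (hφ : ∀ θ, φ θ = Real.log (∑ x, P0 x ^ (1 - θ) * P1 x ^ θ))
    (Pθ : ℝ → X → ℝ)
    (hPθ : ∀ θ x, Pθ θ x = P0 x ^ (1 - θ) * P1 x ^ θ * Real.exp (-φ θ))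
    (r : ℝ) (θ : ℝ) (θbar : ℝ) (hθbar : 0 ≤ θbar)
    (S : Finset X) (hS : ∑ x ∈ S, P1 x ≤ Real.exp (-r)) :
    ∑ x ∈ S, Pθ θ x ≤
      2 * Real.exp ((-(1 + θbar) * φ θ + φ ((1 + θbar) * θ - θbar) - θbar * r)
        / (1 + θbar)) := by
  have hsum : ∀ t : ℝ, ∑ x, P0 x ^ (1 - t) * P1 x ^ t = Real.exp (φ t) := by
    intro t
    rw [hφ, Real.exp_log]
    exact Finset.sum_pos (fun x _ => mul_pos (Real.rpow_pos_of_pos (hP0pos x) _)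
      (Real.rpow_pos_of_pos (hP1pos x) _)) Finset.univ_nonempty
  set θ' := (1 + θbar) * θ - θbar with hθ'def
  rcases eq_or_lt_of_le hθbar with h0 | hpos
  · -- θbar = 0 : trivial since ∑_S Pθ ≤ 1 ≤ 2
    subst h0
    have h1 : ∑ x ∈ S, Pθ θ x ≤ 1 := by
      calc ∑ x ∈ S, Pθ θ x ≤ ∑ x, Pθ θ x := by
            apply Finset.sum_le_sum_of_subset_of_nonneg (Finset.subset_univ S)
            intro x _ _
            rw [hPθ]
            have h0x := hP0pos x; have h1x := hP1pos x
            positivity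
        _ = 1 := by
            simp only [hPθ, ← Finset.sum_mul, hsum, ← Real.exp_add]
            simp
    have hθθ : θ' = θ := by rw [hθ'def]; ring
    rw [hθθ]
    have h2 : (-(1 + (0:ℝ)) * φ θ + φ θ - 0 * r) / (1 + 0) = 0 := by ring
    rw [h2, Real.exp_zero]
    linarith
  · set p : ℝ := 1 + θbar with hpdef
    have hp1 : 1 < p := by rw [hpdef]; linarith
    have hp0 : (0:ℝ) < p := by linarith
    set q : ℝ := p / θbar with hqdef
    have hpq : p.HolderConjugate q := by
      rw [Real.holderConjugate_iff_eq_conjExponent hp1, hqdef, hpdef, add_sub_cancel_left]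
    set f : X → ℝ := fun x => (P0 x ^ (1 - θ') * P1 x ^ θ') ^ (1/p) with hfdef
    set g : X → ℝ := fun x => P1 x ^ (θbar / p) with hgdef
    have hfg : ∀ x, P0 x ^ (1 - θ) * P1 x ^ θ = f x * g x := by
      intro x
      rw [hfdef, hgdef]
      simp only
      rw [Real.mul_rpow (Real.rpow_pos_of_pos (hP0pos x) _).le
        (Real.rpow_pos_of_pos (hP1pos x) _).le,
        ← Real.rpow_mul (hP0pos x).le, ← Real.rpow_mul (hP1pos x).le,
        mul_assoc, ← Real.rpow_add (hP1pos x)]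
      have e1 : (1 - θ') * (1/p) = 1 - θ := by rw [hθ'def, hpdef]; field_simp; ring
      have e2 : θ' * (1/p) + θbar / p = θ := by rw [hθ'def, hpdef]; field_simp; ring
      rw [e1, e2]
    have hfp : ∀ x, f x ^ p = P0 x ^ (1 - θ') * P1 x ^ θ' := by
      intro x
      rw [hfdef]
      simp only
      have h0x := hP0pos x; have h1x := hP1pos x
      rw [← Real.rpow_mul (by positivity), one_div, inv_mul_cancel₀ hp0.ne', Real.rpow_one]
    have hgq : ∀ x, g x ^ q = P1 x := by
      intro x
      rw [hgdef]
      simp only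
      rw [← Real.rpow_mul (hP1pos x).le]
      rw [show θbar / p * q = 1 by rw [hqdef]; field_simp, Real.rpow_one]
    have hfnn : ∀ x, 0 ≤ f x := fun x => by
      have h0x := hP0pos x; have h1x := hP1pos x
      rw [hfdef]; positivity
    have hgnn : ∀ x, 0 ≤ g x := fun x => by
      have h1x := hP1pos x
      rw [hgdef]; positivity
    have hH : ∑ x ∈ S, f x * g x ≤
        (∑ x ∈ S, f x ^ p) ^ (1/p) * (∑ x ∈ S, g x ^ q) ^ (1/q) :=
      Real.inner_le_Lp_mul_Lq_of_nonneg S hpq (fun x _ => hfnn x) (fun x _ => hgnn x)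
    have hq0 : (0:ℝ) < q := hpq.symm.pos
    have hA : (∑ x ∈ S, f x ^ p) ^ (1/p) ≤ Real.exp (φ θ' / p) := by
      have h1 : ∑ x ∈ S, f x ^ p ≤ Real.exp (φ θ') := by
        calc ∑ x ∈ S, f x ^ p ≤ ∑ x, f x ^ p := by
              apply Finset.sum_le_sum_of_subset_of_nonneg (Finset.subset_univ S)
              intro x _ _
              exact Real.rpow_nonneg (hfnn x) p
          _ = Real.exp (φ θ') := by
              rw [← hsum θ']
              exact Finset.sum_congr rfl (fun x _ => hfp x)
      calc (∑ x ∈ S, f x ^ p) ^ (1/p) ≤ (Real.exp (φ θ')) ^ (1/p) := by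
            apply Real.rpow_le_rpow (Finset.sum_nonneg (fun x _ => Real.rpow_nonneg (hfnn x) p))
              h1 (by positivity)
        _ = Real.exp (φ θ' / p) := by
            rw [← Real.exp_one_rpow (φ θ'), ← Real.rpow_mul (by positivity),
              Real.exp_one_rpow]
            ring_nf
    have hB : (∑ x ∈ S, g x ^ q) ^ (1/q) ≤ Real.exp (-r / q) := by
      have h1 : ∑ x ∈ S, g x ^ q ≤ Real.exp (-r) := by
        calc ∑ x ∈ S, g x ^ q = ∑ x ∈ S, P1 x := Finset.sum_congr rfl (fun x _ => hgq x)
          _ ≤ Real.exp (-r) := hS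
      calc (∑ x ∈ S, g x ^ q) ^ (1/q) ≤ (Real.exp (-r)) ^ (1/q) := by
            apply Real.rpow_le_rpow (Finset.sum_nonneg
              (fun x _ => Real.rpow_nonneg (hgnn x) q)) h1 (by positivity)
        _ = Real.exp (-r / q) := by
            rw [← Real.exp_one_rpow (-r), ← Real.rpow_mul (by positivity),
              Real.exp_one_rpow]
            ring_nf
    have key : ∑ x ∈ S, Pθ θ x ≤
        Real.exp ((-p * φ θ + φ θ' - θbar * r) / p) := by
      have h1 : ∑ x ∈ S, Pθ θ x = (∑ x ∈ S, f x * g x) * Real.exp (-φ θ) := by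
        rw [Finset.sum_mul]
        exact Finset.sum_congr rfl (fun x _ => by rw [hPθ, hfg])
      rw [h1]
      have h2 : (∑ x ∈ S, f x * g x) * Real.exp (-φ θ) ≤
          (Real.exp (φ θ' / p) * Real.exp (-r / q)) * Real.exp (-φ θ) := by
        apply mul_le_mul_of_nonneg_right _ (Real.exp_nonneg _)
        calc ∑ x ∈ S, f x * g x ≤ (∑ x ∈ S, f x ^ p) ^ (1/p) * (∑ x ∈ S, g x ^ q) ^ (1/q) := hH
          _ ≤ Real.exp (φ θ' / p) * Real.exp (-r / q) := by
              apply mul_le_mul hA hB (Real.rpow_nonneg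
                (Finset.sum_nonneg (fun x _ => Real.rpow_nonneg (hgnn x) q)) _)
                (Real.exp_nonneg _)
      refine h2.trans_eq ?_
      rw [← Real.exp_add, ← Real.exp_add]
      congr 1
      rw [hqdef]
      field_simp
      ring
    calc ∑ x ∈ S, Pθ θ x ≤ Real.exp ((-p * φ θ + φ θ' - θbar * r) / p) := key
      _ ≤ 2 * Real.exp ((-(1 + θbar) * φ θ + φ θ' - θbar * r) / (1 + θbar)) := by
          rw [hpdef]
          nlinarith [Real.exp_pos ((-(1 + θbar) * φ θ + φ θ' - θbar * r) / (1 + θbar))]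
end

section
/- Let X be a nonempty finite set and let P0 and P1 be strictly positive probability distributions on X. Define φ(θ) := log Σ_x P0(x)^{1−θ} P1(x)^θ. A test is a function T : X → [0,1], and for ε ∈ [0,1] define β_ε(P1‖P0) := inf { Σ_x P0(x)(1 − T(x)) : T a test with Σ_x P1(x) T(x) ≤ ε }. Let r ≥ 0, s > 0, θ ∈ (0,1), and θ̄ ≥ 0, and set γ := ( −(1+θ̄) φ(θ) + φ((1+θ̄)θ − θ̄) − θ̄ r ) / (1+θ̄). If 2 e^{γ} < 1, then β_{e^{−r}}(P1‖P0) ≥ (1 − 2 e^{γ})^{(1+s)/s} · exp( −(φ((1+s)θ) − (1+s)φ(θ)) / s ). -/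
open scoped Classical

/-- converse (impossibility) part of the Hoeffding-type bound
for binary hypothesis testing. -/
theorem stmt_13 {X : Type*} [Fintype X] [Nonempty X]
    (P0 P1 : X → ℝ) (hP0pos : ∀ x, 0 < P0 x) (hP1pos : ∀ x, 0 < P1 x)
    (hP0 : ∑ x, P0 x = 1) (hP1 : ∑ x, P1 x = 1)
    (φ : ℝ → ℝ) (hφ : ∀ θ, φ θ = Real.log (∑ x, P0 x ^ (1 - θ) * P1 x ^ θ))
    (r : ℝ) (hr : 0 ≤ r) (s : ℝ) (hs : 0 < s)
    (θ : ℝ) (hθ : θ ∈ Set.Ioo (0 : ℝ) 1) (θbar : ℝ) (hθbar : 0 ≤ θbar)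
    (γ : ℝ)
    (hγ : γ = (-(1 + θbar) * φ θ + φ ((1 + θbar) * θ - θbar) - θbar * r) / (1 + θbar))
    (hsmall : 2 * Real.exp γ < 1) :
    (1 - 2 * Real.exp γ) ^ ((1 + s) / s) *
        Real.exp (-(φ ((1 + s) * θ) - (1 + s) * φ θ) / s)
      ≤ sInf {b : ℝ | ∃ T : X → ℝ, (∀ x, T x ∈ Set.Icc (0 : ℝ) 1) ∧
          (∑ x, P1 x * T x ≤ Real.exp (-r)) ∧ b = ∑ x, P0 x * (1 - T x)} := by
  obtain ⟨hθ0, hθ1⟩ := hθ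
  have h1θ : (0:ℝ) < 1 - θ := by linarith
  have h1θb : (0:ℝ) < 1 + θbar := by linarith
  have h1s : (0:ℝ) < 1 + s := by linarith
  -- the moment formula
  have hsum : ∀ t : ℝ, ∑ x, P0 x ^ (1 - t) * P1 x ^ t = Real.exp (φ t) := by
    intro t
    rw [hφ t, Real.exp_log]
    exact Finset.sum_pos (fun x _ => mul_pos (Real.rpow_pos_of_pos (hP0pos x) _)
      (Real.rpow_pos_of_pos (hP1pos x) _)) Finset.univ_nonempty
  -- the tilted distribution
  set Pt : X → ℝ := fun x => P0 x ^ (1 - θ) * P1 x ^ θ * Real.exp (-φ θ) with hPt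
  have hPtpos : ∀ x, 0 < Pt x := fun x => mul_pos (mul_pos
    (Real.rpow_pos_of_pos (hP0pos x) _) (Real.rpow_pos_of_pos (hP1pos x) _)) (Real.exp_pos _)
  have hPtsum : ∑ x, Pt x = 1 := by
    simp only [hPt, ← Finset.sum_mul, hsum θ, ← Real.exp_add, add_neg_cancel, Real.exp_zero]
  apply le_csInf
  · refine ⟨∑ x, P0 x * (1 - Real.exp (-r)), fun _ => Real.exp (-r), fun x =>
      ⟨(Real.exp_pos _).le, Real.exp_le_one_iff.mpr (neg_nonpos.mpr hr)⟩, ?_, rfl⟩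
    rw [← Finset.sum_mul, hP1, one_mul]
  rintro b ⟨T, hT, hTe, rfl⟩
  -- Step A: Chernoff-type bound on the tilted probability of the rejection region
  set lam : ℝ := θbar * (1 - θ) with hlam
  have hlam0 : 0 ≤ lam := mul_nonneg hθbar h1θ.le
  set θ' : ℝ := (1 + θbar) * θ - θbar with hθ'
  set t : ℝ := (r + φ θ') / ((1 + θbar) * (1 - θ)) with ht
  have hden : (1 + θbar) * (1 - θ) ≠ 0 := by positivity
  have hE1 : (1 - θ) * t - φ θ - r = γ := by
    rw [hγ, ht]; field_simp; ring
  have hE2 : -lam * t - φ θ + φ θ' = γ := by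
    rw [hγ, ht, hlam]; field_simp; ring
  have key : ∀ x, Pt x * T x ≤ Real.exp ((1 - θ) * t - φ θ) * (P1 x * T x)
      + Real.exp (-lam * t - φ θ) * (P0 x ^ (1 - θ') * P1 x ^ θ') := by
    intro x
    obtain ⟨hT0, hT1⟩ := hT x
    have hform : P0 x ^ (1 - θ') * P1 x ^ θ' =
        (P0 x ^ (1 - θ) * P1 x ^ θ) * (P0 x / P1 x) ^ lam := by
      have e1 : 1 - θ' = (1 - θ) + lam := by rw [hθ', hlam]; ring
      have e2 : θ' = θ - lam := by rw [hθ', hlam]; ring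
      rw [e1, e2, Real.rpow_add (hP0pos x), Real.rpow_sub (hP1pos x),
        Real.div_rpow (hP0pos x).le (hP1pos x).le]
      field_simp
    by_cases hc : P0 x ≤ Real.exp t * P1 x
    · have h1 : P0 x ^ (1 - θ) ≤ (Real.exp t * P1 x) ^ (1 - θ) :=
        Real.rpow_le_rpow (hP0pos x).le hc h1θ.le
      have h2 : (Real.exp t * P1 x) ^ (1 - θ) =
          Real.exp ((1 - θ) * t) * P1 x ^ (1 - θ) := by
        rw [Real.mul_rpow (Real.exp_pos t).le (hP1pos x).le, ← Real.exp_mul, mul_comm t]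
      have h3 : Pt x ≤ Real.exp ((1 - θ) * t - φ θ) * P1 x := by
        have : P1 x ^ (1 - θ) * P1 x ^ θ = P1 x := by
          rw [← Real.rpow_add (hP1pos x)]; norm_num
        calc Pt x = P0 x ^ (1 - θ) * P1 x ^ θ * Real.exp (-φ θ) := rfl
          _ ≤ (Real.exp ((1 - θ) * t) * P1 x ^ (1 - θ)) * P1 x ^ θ * Real.exp (-φ θ) := by
              rw [← h2]
              exact mul_le_mul_of_nonneg_right (mul_le_mul_of_nonneg_right h1
                (Real.rpow_nonneg (hP1pos x).le θ)) (Real.exp_pos _).le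
          _ = Real.exp ((1 - θ) * t) * (P1 x ^ (1 - θ) * P1 x ^ θ) * Real.exp (-φ θ) := by
              ring
          _ = Real.exp ((1 - θ) * t) * P1 x * Real.exp (-φ θ) := by rw [this]
          _ = Real.exp ((1 - θ) * t - φ θ) * P1 x := by
              rw [Real.exp_sub, Real.exp_neg]; ring
      have : Pt x * T x ≤ Real.exp ((1 - θ) * t - φ θ) * (P1 x * T x) := by
        rw [← mul_assoc]
        exact mul_le_mul_of_nonneg_right h3 hT0
      refine this.trans (le_add_of_nonneg_right ?_)
      exact mul_nonneg (Real.exp_pos _).le (mul_nonneg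
        (Real.rpow_nonneg (hP0pos x).le _) (Real.rpow_nonneg (hP1pos x).le _))
    · push_neg at hc
      have hlt : Real.exp t < P0 x / P1 x := (lt_div_iff₀ (hP1pos x)).mpr (by linarith [hc])
      have h2 : Real.exp (lam * t) ≤ (P0 x / P1 x) ^ lam := by
        calc Real.exp (lam * t) = Real.exp t ^ lam := by rw [← Real.exp_mul, mul_comm]
          _ ≤ (P0 x / P1 x) ^ lam :=
            Real.rpow_le_rpow (Real.exp_pos t).le hlt.le hlam0
      have h3 : Pt x ≤ Real.exp (-lam * t - φ θ) * (P0 x ^ (1 - θ') * P1 x ^ θ') := by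
        rw [hform]
        have hpos : 0 < P0 x ^ (1 - θ) * P1 x ^ θ := mul_pos
          (Real.rpow_pos_of_pos (hP0pos x) _) (Real.rpow_pos_of_pos (hP1pos x) _)
        have : Real.exp (-φ θ) ≤ Real.exp (-lam * t - φ θ) * (P0 x / P1 x) ^ lam := by
          calc Real.exp (-φ θ) = Real.exp (-lam * t - φ θ) * Real.exp (lam * t) := by
                rw [← Real.exp_add]; ring_nf
            _ ≤ Real.exp (-lam * t - φ θ) * (P0 x / P1 x) ^ lam :=
                mul_le_mul_of_nonneg_left h2 (Real.exp_pos _).le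
        calc Pt x = (P0 x ^ (1 - θ) * P1 x ^ θ) * Real.exp (-φ θ) := rfl
          _ ≤ (P0 x ^ (1 - θ) * P1 x ^ θ) * (Real.exp (-lam * t - φ θ) * (P0 x / P1 x) ^ lam) :=
              mul_le_mul_of_nonneg_left this hpos.le
          _ = Real.exp (-lam * t - φ θ) * ((P0 x ^ (1 - θ) * P1 x ^ θ) * (P0 x / P1 x) ^ lam) := by
              ring
      have : Pt x * T x ≤ Real.exp (-lam * t - φ θ) * (P0 x ^ (1 - θ') * P1 x ^ θ') := by
        calc Pt x * T x ≤ Pt x * 1 := mul_le_mul_of_nonneg_left hT1 (hPtpos x).le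
          _ = Pt x := mul_one _
          _ ≤ _ := h3
      refine this.trans ?_
      have h0 : 0 ≤ Real.exp ((1 - θ) * t - φ θ) * (P1 x * T x) :=
        mul_nonneg (Real.exp_pos _).le (mul_nonneg (hP1pos x).le hT0)
      linarith
  have hA : ∑ x, Pt x * T x ≤ 2 * Real.exp γ := by
    calc ∑ x, Pt x * T x
        ≤ ∑ x, (Real.exp ((1 - θ) * t - φ θ) * (P1 x * T x)
            + Real.exp (-lam * t - φ θ) * (P0 x ^ (1 - θ') * P1 x ^ θ')) :=
          Finset.sum_le_sum fun x _ => key x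
      _ = Real.exp ((1 - θ) * t - φ θ) * (∑ x, P1 x * T x)
            + Real.exp (-lam * t - φ θ) * (∑ x, P0 x ^ (1 - θ') * P1 x ^ θ') := by
          rw [Finset.sum_add_distrib, Finset.mul_sum, Finset.mul_sum]
      _ ≤ Real.exp ((1 - θ) * t - φ θ) * Real.exp (-r)
            + Real.exp (-lam * t - φ θ) * Real.exp (φ θ') := by
          gcongr
          all_goals first
          | exact hTe
          | exact (hsum θ').le
          | exact (Real.exp_pos _).le
      _ = Real.exp ((1 - θ) * t - φ θ - r) + Real.exp (-lam * t - φ θ + φ θ') := by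
          rw [← Real.exp_add, ← Real.exp_add]; ring_nf
      _ = 2 * Real.exp γ := by rw [hE1, hE2]; ring
  -- Step B: tilted probability of the acceptance region
  set a : ℝ := ∑ x, Pt x * (1 - T x) with ha
  have haval : a = 1 - ∑ x, Pt x * T x := by
    have h' : ∑ x, (Pt x * (1 - T x) + Pt x * T x) = ∑ x, Pt x :=
      Finset.sum_congr rfl fun x _ => by ring
    rw [Finset.sum_add_distrib, hPtsum] at h'
    rw [ha]; linarith
  have ha0 : 1 - 2 * Real.exp γ ≤ a := by rw [haval]; linarith
  have hapos : 0 < a := lt_of_lt_of_le (by linarith) ha0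
  -- Step C: Hölder inequality (monotonicity of Rényi divergence)
  set b : ℝ := ∑ x, P0 x * (1 - T x) with hb
  have hbnn : 0 ≤ b := Finset.sum_nonneg fun x _ =>
    mul_nonneg (hP0pos x).le (by linarith [(hT x).2])
  have hinn : ∀ x : X, (0:ℝ) ≤ Pt x ^ (1 + s) * P0 x ^ (-s) := fun x =>
    mul_nonneg (Real.rpow_nonneg (hPtpos x).le _) (Real.rpow_nonneg (hP0pos x).le _)
  set S : ℝ := Real.exp (φ ((1 + s) * θ) - (1 + s) * φ θ) with hS
  have hSval : ∑ x, Pt x ^ (1 + s) * P0 x ^ (-s) = S := by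
    have : ∀ x : X, Pt x ^ (1 + s) * P0 x ^ (-s) =
        P0 x ^ (1 - (1 + s) * θ) * P1 x ^ ((1 + s) * θ) * Real.exp (-(1 + s) * φ θ) := by
      intro x
      have h1 : Pt x ^ (1 + s) = P0 x ^ ((1 - θ) * (1 + s)) * P1 x ^ (θ * (1 + s)) *
          Real.exp (-φ θ * (1 + s)) := by
        rw [hPt]
        rw [Real.mul_rpow (mul_nonneg (Real.rpow_nonneg (hP0pos x).le _)
            (Real.rpow_nonneg (hP1pos x).le _)) (Real.exp_pos _).le,
          Real.mul_rpow (Real.rpow_nonneg (hP0pos x).le _) (Real.rpow_nonneg (hP1pos x).le _),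
          ← Real.rpow_mul (hP0pos x).le, ← Real.rpow_mul (hP1pos x).le, ← Real.exp_mul]
      rw [h1]
      have h2 : P0 x ^ ((1 - θ) * (1 + s)) * P0 x ^ (-s) = P0 x ^ (1 - (1 + s) * θ) := by
        rw [← Real.rpow_add (hP0pos x)]; ring_nf
      have h3 : θ * (1 + s) = (1 + s) * θ := by ring
      have h4 : -φ θ * (1 + s) = -(1 + s) * φ θ := by ring
      rw [h3, h4]
      calc P0 x ^ ((1 - θ) * (1 + s)) * P1 x ^ ((1 + s) * θ) * Real.exp (-(1 + s) * φ θ)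
            * P0 x ^ (-s)
          = (P0 x ^ ((1 - θ) * (1 + s)) * P0 x ^ (-s)) * P1 x ^ ((1 + s) * θ)
            * Real.exp (-(1 + s) * φ θ) := by ring
        _ = _ := by rw [h2]
    rw [Finset.sum_congr rfl fun x _ => this x, ← Finset.sum_mul, hsum ((1 + s) * θ), hS,
      ← Real.exp_add]
    ring_nf
  have hSpos : 0 < S := Real.exp_pos _
  -- Hölder
  set f : X → ℝ := fun x => ((1 - T x) * (Pt x ^ (1 + s) * P0 x ^ (-s))) ^ ((1 + s)⁻¹) with hf
  set g : X → ℝ := fun x => ((1 - T x) * P0 x) ^ (s / (1 + s)) with hg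
  have hpq : Real.HolderConjugate (1 + s) ((1 + s) / s) := by
    constructor
    · field_simp
    · linarith
    · positivity
  have hTnn : ∀ x, 0 ≤ 1 - T x := fun x => by linarith [(hT x).2]
  have hfg : ∀ x, f x * g x = Pt x * (1 - T x) := by
    intro x
    simp only [hf, hg]
    rw [Real.mul_rpow (hTnn x) (hinn x), Real.mul_rpow (hTnn x) (hP0pos x).le,
      Real.mul_rpow (Real.rpow_nonneg (hPtpos x).le _) (Real.rpow_nonneg (hP0pos x).le _),
      ← Real.rpow_mul (hPtpos x).le, ← Real.rpow_mul (hP0pos x).le]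
    have e1 : (1 + s) * (1 + s)⁻¹ = 1 := mul_inv_cancel₀ (by positivity)
    have e2 : (1 - T x) ^ ((1 + s)⁻¹) * (1 - T x) ^ (s / (1 + s)) = 1 - T x := by
      have hsum1 : (1 + s)⁻¹ + s / (1 + s) = 1 := by field_simp
      rw [← Real.rpow_add' (hTnn x) (by rw [hsum1]; norm_num), hsum1, Real.rpow_one]
    have e3 : P0 x ^ (-s * (1 + s)⁻¹) * P0 x ^ (s / (1 + s)) = 1 := by
      rw [← Real.rpow_add (hP0pos x)]
      have : -s * (1 + s)⁻¹ + s / (1 + s) = 0 := by field_simp; ring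
      rw [this, Real.rpow_zero]
    calc (1 - T x) ^ ((1 + s)⁻¹) * (Pt x ^ ((1 + s) * (1 + s)⁻¹) * P0 x ^ (-s * (1 + s)⁻¹)) *
          ((1 - T x) ^ (s / (1 + s)) * P0 x ^ (s / (1 + s)))
        = ((1 - T x) ^ ((1 + s)⁻¹) * (1 - T x) ^ (s / (1 + s))) * Pt x ^ ((1 + s) * (1 + s)⁻¹) *
          (P0 x ^ (-s * (1 + s)⁻¹) * P0 x ^ (s / (1 + s))) := by ring
      _ = Pt x * (1 - T x) := by rw [e2, e3, e1, Real.rpow_one]; ring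
  have hfp : ∀ x, f x ^ (1 + s) = (1 - T x) * (Pt x ^ (1 + s) * P0 x ^ (-s)) := by
    intro x
    simp only [hf]
    rw [← Real.rpow_mul (mul_nonneg (hTnn x) (hinn x)),
      inv_mul_cancel₀ (by positivity : (1:ℝ) + s ≠ 0), Real.rpow_one]
  have hgq : ∀ x, g x ^ ((1 + s) / s) = (1 - T x) * P0 x := by
    intro x
    simp only [hg]
    rw [← Real.rpow_mul (mul_nonneg (hTnn x) (hP0pos x).le)]
    have : s / (1 + s) * ((1 + s) / s) = 1 := by field_simp
    rw [this, Real.rpow_one]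
  have hfnn : ∀ x ∈ Finset.univ, (0:ℝ) ≤ f x := fun x _ =>
    Real.rpow_nonneg (mul_nonneg (hTnn x) (hinn x)) _
  have hgnn : ∀ x ∈ Finset.univ, (0:ℝ) ≤ g x := fun x _ =>
    Real.rpow_nonneg (mul_nonneg (hTnn x) (hP0pos x).le) _
  have hHolder := Real.inner_le_Lp_mul_Lq_of_nonneg (f := f) (g := g) Finset.univ hpq hfnn hgnn
  rw [Finset.sum_congr rfl fun x _ => hfg x,
    Finset.sum_congr rfl fun x _ => hfp x,
    Finset.sum_congr rfl fun x _ => hgq x] at hHolder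
  have hsumfp : ∑ x, (1 - T x) * (Pt x ^ (1 + s) * P0 x ^ (-s)) ≤ S := by
    rw [← hSval]
    refine Finset.sum_le_sum fun x _ => ?_
    nlinarith [(hT x).1, hinn x]
  have hsumg : ∑ x, (1 - T x) * P0 x = b := by
    rw [hb]; congr 1; ext x; ring
  have haholder : a ≤ S ^ (1 / (1 + s)) * b ^ (s / (1 + s)) := by
    rw [ha]
    refine hHolder.trans ?_
    rw [hsumg]
    have h1 : (1:ℝ) / ((1 + s) / s) = s / (1 + s) := by field_simp
    rw [h1]
    gcongr
    exact Finset.sum_nonneg fun x _ => mul_nonneg (hTnn x) (hinn x)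
  -- Final algebra
  have ha0' : (0:ℝ) < 1 - 2 * Real.exp γ := by linarith
  have hfinal : (1 - 2 * Real.exp γ) ^ ((1 + s) / s) ≤ S ^ (1 / s) * b := by
    have h1 : (1 - 2 * Real.exp γ) ^ ((1 + s) / s) ≤
        (S ^ (1 / (1 + s)) * b ^ (s / (1 + s))) ^ ((1 + s) / s) :=
      Real.rpow_le_rpow ha0'.le (le_trans ha0 haholder) (div_nonneg h1s.le hs.le)
    refine h1.trans (le_of_eq ?_)
    rw [Real.mul_rpow (Real.rpow_nonneg hSpos.le _) (Real.rpow_nonneg hbnn _),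
      ← Real.rpow_mul hSpos.le, ← Real.rpow_mul hbnn]
    have e1 : 1 / (1 + s) * ((1 + s) / s) = 1 / s := by field_simp
    have e2 : s / (1 + s) * ((1 + s) / s) = 1 := by field_simp
    rw [e1, e2, Real.rpow_one]
  have hSs : S ^ (1 / s) = Real.exp ((φ ((1 + s) * θ) - (1 + s) * φ θ) / s) := by
    rw [hS, ← Real.exp_mul]
    congr 1; ring
  rw [hSs] at hfinal
  have hneg : Real.exp (-(φ ((1 + s) * θ) - (1 + s) * φ θ) / s)
      = (Real.exp ((φ ((1 + s) * θ) - (1 + s) * φ θ) / s))⁻¹ := by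
    rw [← Real.exp_neg]; congr 1; ring
  rw [hneg, ← div_eq_mul_inv, div_le_iff₀ (Real.exp_pos _), mul_comm b]
  exact hfinal
end

section
/- Let φ : ℝ → ℝ be differentiable and strictly convex with φ(0) = 0. (i) Suppose a ∈ ℝ satisfies a > φ'(0) and a = φ'(θ_a) for some θ_a ∈ ℝ (necessarily θ_a > 0 and unique). Then inf { (φ((1+s)θ) − (1+s)φ(θ))/s : s > 0, θ > θ_a } = θ_a · a − φ(θ_a) = sup_{θ ≥ 0} ( θ a − φ(θ) ). (ii) Suppose a ∈ ℝ satisfies a < φ'(0) and a = φ'(θ_a) for some θ_a ∈ ℝ (necessarily θ_a < 0 and unique). Then inf { (φ((1+s)θ) − (1+s)φ(θ))/s : s > 0, θ < θ_a } = θ_a · a − φ(θ_a) = sup_{θ ≤ 0} ( θ a − φ(θ) ). -/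
open Set Filter Topology

/-- Tangent line inequality for a differentiable convex function. -/
private lemma tangent_le {φ φ' : ℝ → ℝ} (hderiv : ∀ θ, HasDerivAt φ (φ' θ) θ)
    (hconv : StrictConvexOn ℝ Set.univ φ) (x y : ℝ) :
    φ x + φ' x * (y - x) ≤ φ y := by
  rcases lt_trichotomy x y with h | h | h
  · have h1 := hconv.lt_slope_of_hasDerivAt (mem_univ x) (mem_univ y) h (hderiv x)
    rw [slope_def_field] at h1
    have hx : 0 < y - x := by linarith
    have h2 := (lt_div_iff₀ hx).mp h1
    linarith
  · simp [h]
  · have h1 := hconv.slope_lt_of_hasDerivAt (mem_univ y) (mem_univ x) h (hderiv x)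
    rw [slope_def_field] at h1
    have hx : 0 < x - y := by linarith
    have h2 := (div_lt_iff₀ hx).mp h1
    nlinarith

private lemma phi'_strictMono {φ φ' : ℝ → ℝ} (hderiv : ∀ θ, HasDerivAt φ (φ' θ) θ)
    (hconv : StrictConvexOn ℝ Set.univ φ) : StrictMono φ' := by
  intro x y hxy
  exact (hconv.lt_slope_of_hasDerivAt (mem_univ x) (mem_univ y) hxy (hderiv x)).trans
    (hconv.slope_lt_of_hasDerivAt (mem_univ x) (mem_univ y) hxy (hderiv y))

private lemma key (φ φ' : ℝ → ℝ) (hderiv : ∀ θ, HasDerivAt φ (φ' θ) θ)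
    (hconv : StrictConvexOn ℝ Set.univ φ)
    (a θa : ℝ) (ha : φ' 0 < a) (hθa : φ' θa = a) :
    IsGLB {y : ℝ | ∃ s : ℝ, 0 < s ∧ ∃ θ : ℝ, θa < θ ∧
        y = (φ ((1 + s) * θ) - (1 + s) * φ θ) / s} (θa * a - φ θa) ∧
    IsLUB {y : ℝ | ∃ θ : ℝ, 0 ≤ θ ∧ y = θ * a - φ θ} (θa * a - φ θa) := by
  have hmono : StrictMono φ' := phi'_strictMono hderiv hconv
  have hθapos : 0 < θa := hmono.lt_iff_lt.mp (by rw [hθa]; exact ha)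
  constructor
  · constructor
    · -- lower bound
      rintro y ⟨s, hs, θ, hθ, rfl⟩
      have t1 := tangent_le hderiv hconv θ ((1 + s) * θ)
      have t2 := tangent_le hderiv hconv θ θa
      have hfa : a < φ' θ := hθa ▸ hmono hθ
      rw [le_div_iff₀ hs]
      nlinarith [mul_nonneg hθapos.le (sub_nonneg.2 hfa.le),
        mul_nonneg hs.le (sub_nonneg.2 hfa.le), mul_pos hs hθapos]
    · -- greatest lower bound
      intro b hb
      have hG : ∀ θ : ℝ, Tendsto (fun s => (φ ((1 + s) * θ) - (1 + s) * φ θ) / s)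
          (𝓝[>] (0:ℝ)) (𝓝 (θ * φ' θ - φ θ)) := by
        intro θ
        have h1 : HasDerivAt (fun s : ℝ => (1 + s) * θ) θ 0 := by
          simpa using ((hasDerivAt_id (0:ℝ)).const_add 1).mul_const θ
        have hF : HasDerivAt (fun s : ℝ => φ ((1 + s) * θ)) (θ * φ' θ) 0 := by
          have := (hderiv ((1 + 0) * θ)).comp 0 h1
          simpa [Function.comp_def, mul_comm] using this
        have h2 := hasDerivAt_iff_tendsto_slope.mp hF
        have h3 := h2.sub (tendsto_const_nhds (x := φ θ))
        have h4 := h3.mono_left (nhdsWithin_mono (0:ℝ) (fun s hs => ne_of_gt hs))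
        refine Tendsto.congr' ?_ h4
        filter_upwards [self_mem_nhdsWithin] with s hs
        have hs' : (s : ℝ) ≠ 0 := ne_of_gt hs
        rw [slope_def_field]
        have e0 : (1 + (0:ℝ)) * θ = θ := by ring
        rw [e0]
        field_simp
        ring
      have hbθ : ∀ θ, θa < θ → b ≤ θ * φ' θ - φ θ := by
        intro θ hθ
        refine ge_of_tendsto (hG θ) ?_
        filter_upwards [self_mem_nhdsWithin] with s hs
        exact hb ⟨s, hs, θ, hθ, rfl⟩
      have hslope : Tendsto (slope φ θa) (𝓝[≠] θa) (𝓝 a) := by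
        have := hasDerivAt_iff_tendsto_slope.mp (hderiv θa); rwa [hθa] at this
      have hmap : Tendsto (fun θ => 2 * θ - θa) (𝓝[>] θa) (𝓝[≠] θa) := by
        rw [tendsto_nhdsWithin_iff]
        constructor
        · have : Tendsto (fun θ : ℝ => 2 * θ - θa) (𝓝 θa) (𝓝 (2 * θa - θa)) := by
            exact ((tendsto_id.const_mul 2).sub tendsto_const_nhds)
          rw [show 2 * θa - θa = θa by ring] at this
          exact this.mono_left nhdsWithin_le_nhds
        · filter_upwards [self_mem_nhdsWithin] with θ hθ
          have : θa < θ := hθ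
          show (2 * θ - θa) ∈ {x | x ≠ θa}
          simp only [mem_setOf_eq]
          intro hcon; nlinarith
      have hU : Tendsto (fun θ => (φ (2 * θ - θa) - φ θ) / (θ - θa)) (𝓝[>] θa) (𝓝 a) := by
        have h1 : Tendsto (fun θ => 2 * slope φ θa (2 * θ - θa) - slope φ θa θ)
            (𝓝[>] θa) (𝓝 (2 * a - a)) :=
          ((hslope.comp hmap).const_mul 2).sub
            (hslope.mono_left (nhdsWithin_mono _ (fun x hx => ne_of_gt hx)))
        rw [show 2 * a - a = a by ring] at h1
        refine Tendsto.congr' ?_ h1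
        filter_upwards [self_mem_nhdsWithin] with θ hθ
        have hθ' : θa < θ := hθ
        have hne : θ - θa ≠ 0 := by intro h; nlinarith
        have hne2 : 2 * θ - θa - θa ≠ 0 := by intro h; nlinarith
        rw [slope_def_field, slope_def_field]
        field_simp
        ring
      have hphi'le : ∀ θ, θa < θ → φ' θ ≤ (φ (2 * θ - θa) - φ θ) / (θ - θa) := by
        intro θ hθ
        have h1 := hconv.convexOn.le_slope_of_hasDerivAt (mem_univ θ)
          (mem_univ (2 * θ - θa)) (by linarith) (hderiv θ)
        rw [slope_def_field] at h1
        rw [show 2 * θ - θa - θ = θ - θa by ring] at h1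
        exact h1
      have hphi' : Tendsto φ' (𝓝[>] θa) (𝓝 a) := by
        refine tendsto_of_tendsto_of_tendsto_of_le_of_le' tendsto_const_nhds hU ?_ ?_
        · filter_upwards [self_mem_nhdsWithin] with θ hθ
          have : φ' θa < φ' θ := hmono hθ
          linarith [hθa ▸ this]
        · filter_upwards [self_mem_nhdsWithin] with θ hθ
          exact hphi'le θ hθ
      have hφcont : Tendsto φ (𝓝[>] θa) (𝓝 (φ θa)) :=
        ((hderiv θa).continuousAt.tendsto).mono_left nhdsWithin_le_nhds
      have hid : Tendsto (fun θ : ℝ => θ) (𝓝[>] θa) (𝓝 θa) :=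
        tendsto_id.mono_left nhdsWithin_le_nhds
      have hh : Tendsto (fun θ => θ * φ' θ - φ θ) (𝓝[>] θa) (𝓝 (θa * a - φ θa)) :=
        (hid.mul hphi').sub hφcont
      refine ge_of_tendsto hh ?_
      filter_upwards [self_mem_nhdsWithin] with θ hθ
      exact hbθ θ hθ
  · constructor
    · rintro y ⟨θ, _, rfl⟩
      have t := tangent_le hderiv hconv θa θ
      rw [hθa] at t
      nlinarith
    · intro b hb
      exact hb ⟨θa, hθapos.le, rfl⟩

/-- Legendre transform of a strictly convex potential function
`φ` with `φ(0) = 0` as an infimum of Rényi-type quantities. -/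
theorem stmt_14 (φ : ℝ → ℝ) (φ' : ℝ → ℝ)
    (hderiv : ∀ θ, HasDerivAt φ (φ' θ) θ)
    (hconv : StrictConvexOn ℝ Set.univ φ) (h0 : φ 0 = 0) :
    (∀ a θa : ℝ, φ' 0 < a → φ' θa = a →
      IsGLB {y : ℝ | ∃ s : ℝ, 0 < s ∧ ∃ θ : ℝ, θa < θ ∧
          y = (φ ((1 + s) * θ) - (1 + s) * φ θ) / s}
        (θa * a - φ θa) ∧
      IsLUB {y : ℝ | ∃ θ : ℝ, 0 ≤ θ ∧ y = θ * a - φ θ} (θa * a - φ θa)) ∧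
    (∀ a θa : ℝ, a < φ' 0 → φ' θa = a →
      IsGLB {y : ℝ | ∃ s : ℝ, 0 < s ∧ ∃ θ : ℝ, θ < θa ∧
          y = (φ ((1 + s) * θ) - (1 + s) * φ θ) / s}
        (θa * a - φ θa) ∧
      IsLUB {y : ℝ | ∃ θ : ℝ, θ ≤ 0 ∧ y = θ * a - φ θ} (θa * a - φ θa)) := by
  constructor
  · intro a θa ha hθa
    exact key φ φ' hderiv hconv a θa ha hθa
  · intro a θa ha hθa
    have hderivψ : ∀ x : ℝ, HasDerivAt (fun x : ℝ => φ (-x)) ((fun x : ℝ => -φ' (-x)) x) x := by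
      intro x
      have := (hderiv (-x)).comp x (hasDerivAt_neg x)
      simpa [Function.comp_def] using this
    have hconvψ : StrictConvexOn ℝ Set.univ (fun x : ℝ => φ (-x)) := by
      refine ⟨convex_univ, fun x _ y _ hxy p q hp hq hpq => ?_⟩
      have h := hconv.2 (Set.mem_univ (-x)) (Set.mem_univ (-y))
        (fun h => hxy (neg_injective h)) hp hq hpq
      have e : p • (-x) + q • (-y) = -(p • x + q • y) := by
        simp [smul_eq_mul]; ring
      rw [e] at h
      exact h
    obtain ⟨hg, hl⟩ := key (fun x : ℝ => φ (-x)) (fun x : ℝ => -φ' (-x)) hderivψ hconvψ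
      (-a) (-θa)
      (by show -φ' (-0) < -a; rw [neg_zero]; linarith)
      (by show -φ' (-(-θa)) = -a; rw [neg_neg, hθa])
    have hval : -θa * -a - (fun x : ℝ => φ (-x)) (-θa) = θa * a - φ θa := by
      simp [neg_neg]
    have hset1 : {y : ℝ | ∃ s : ℝ, 0 < s ∧ ∃ θ : ℝ, -θa < θ ∧
        y = ((fun x : ℝ => φ (-x)) ((1 + s) * θ) - (1 + s) * (fun x : ℝ => φ (-x)) θ) / s}
        = {y : ℝ | ∃ s : ℝ, 0 < s ∧ ∃ θ : ℝ, θ < θa ∧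
        y = (φ ((1 + s) * θ) - (1 + s) * φ θ) / s} := by
      ext y
      simp only [Set.mem_setOf_eq]
      constructor
      · rintro ⟨s, hs, θ, hθ, rfl⟩
        exact ⟨s, hs, -θ, by linarith, by rw [mul_neg]⟩
      · rintro ⟨s, hs, θ, hθ, rfl⟩
        refine ⟨s, hs, -θ, by linarith, ?_⟩
        simp only [mul_neg, neg_neg]
    have hset2 : {y : ℝ | ∃ θ : ℝ, 0 ≤ θ ∧ y = θ * -a - (fun x : ℝ => φ (-x)) θ}
        = {y : ℝ | ∃ θ : ℝ, θ ≤ 0 ∧ y = θ * a - φ θ} := by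
      ext y
      simp only [Set.mem_setOf_eq]
      constructor
      · rintro ⟨θ, hθ, rfl⟩
        exact ⟨-θ, by linarith, by ring_nf⟩
      · rintro ⟨θ, hθ, rfl⟩
        refine ⟨-θ, by linarith, ?_⟩
        rw [neg_neg]; ring
    rw [hval, hset1] at hg
    rw [hval, hset2] at hl
    exact ⟨hg, hl⟩
end

section
/- Let φ : ℝ → ℝ be differentiable and strictly convex with φ(0) = 0 and φ(1) = 0. Let r satisfy 0 < r ≤ −φ'(0), and let θ̂ ∈ [0,1) satisfy (θ̂ − 1) φ'(θ̂) − φ(θ̂) = r (such θ̂ exists and is unique in [0,1) since θ ↦ (θ−1)φ'(θ) − φ(θ) is continuous and strictly decreasing on [0,1)). Then sup_{θ ∈ [0,1)} ( −θ r − φ(θ) ) / (1 − θ) = θ̂ φ'(θ̂) − φ(θ̂) = inf { (φ((1+s)θ) − (1+s)φ(θ))/s : s > 0, θ ∈ [θ̂, 1) }. -/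
/-- Tangent line inequality for a differentiable convex function. -/
lemma tangent_le_aux (φ : ℝ → ℝ) (φ' : ℝ → ℝ)
    (hderiv : ∀ θ, HasDerivAt φ (φ' θ) θ)
    (hconv : ConvexOn ℝ Set.univ φ) (x y : ℝ) :
    φ x + φ' x * (y - x) ≤ φ y := by
  rcases lt_trichotomy x y with h | h | h
  · have hs := hconv.le_slope_of_hasDerivAt (Set.mem_univ x) (Set.mem_univ y) h (hderiv x)
    rw [slope_def_field, le_div_iff₀ (by linarith : (0:ℝ) < y - x)] at hs
    linarith
  · simp [h]
  · have hs := hconv.slope_le_of_hasDerivAt (Set.mem_univ y) (Set.mem_univ x) h (hderiv x)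
    rw [slope_def_field, div_le_iff₀ (by linarith : (0:ℝ) < x - y)] at hs
    nlinarith

/-- identification of the Hoeffding exponent
`sup_{0 ≤ θ < 1} (−θr − φ(θ))/(1−θ)` with `θ̂ φ'(θ̂) − φ(θ̂)` and with an
infimum of Rényi-type quantities, for a strictly convex potential `φ` with
`φ(0) = φ(1) = 0`. -/
theorem stmt_15 (φ : ℝ → ℝ) (φ' : ℝ → ℝ)
    (hderiv : ∀ θ, HasDerivAt φ (φ' θ) θ)
    (hconv : StrictConvexOn ℝ Set.univ φ) (h0 : φ 0 = 0) (h1 : φ 1 = 0)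
    (r : ℝ) (hr0 : 0 < r) (hr1 : r ≤ -φ' 0)
    (θhat : ℝ) (hθhat : θhat ∈ Set.Ico (0 : ℝ) 1)
    (heq : (θhat - 1) * φ' θhat - φ θhat = r) :
    IsLUB {y : ℝ | ∃ θ ∈ Set.Ico (0 : ℝ) 1, y = (-θ * r - φ θ) / (1 - θ)}
      (θhat * φ' θhat - φ θhat) ∧
    IsGLB {y : ℝ | ∃ s : ℝ, 0 < s ∧ ∃ θ ∈ Set.Ico θhat 1,
        y = (φ ((1 + s) * θ) - (1 + s) * φ θ) / s}
      (θhat * φ' θhat - φ θhat) := by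
  obtain ⟨hθ0, hθ1⟩ := hθhat
  have hcv : ConvexOn ℝ Set.univ φ := hconv.convexOn
  have htan : ∀ x y : ℝ, φ x + φ' x * (y - x) ≤ φ y :=
    tangent_le_aux φ φ' hderiv hcv
  set L := θhat * φ' θhat - φ θhat with hL
  constructor
  · -- LUB part
    apply IsGreatest.isLUB
    constructor
    · exact ⟨θhat, ⟨hθ0, hθ1⟩, by
        rw [eq_div_iff (by linarith : (1:ℝ) - θhat ≠ 0)]
        nlinarith⟩
    · rintro y ⟨θ, ⟨h0', h1'⟩, rfl⟩
      rw [div_le_iff₀ (by linarith : (0:ℝ) < 1 - θ)]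
      have := htan θhat θ
      nlinarith
  · -- GLB part
    constructor
    · rintro y ⟨s, hs, θ, ⟨hθl, hθr⟩, rfl⟩
      rw [le_div_iff₀ hs]
      have t1 := htan θ ((1 + s) * θ)
      have t2 := htan θ θhat
      have t3 := htan θhat θ
      rcases eq_or_lt_of_le hθl with rfl | hlt
      · nlinarith
      · nlinarith [mul_nonneg hθ0 (by nlinarith : (0:ℝ) ≤ φ' θ - φ' θhat)]
    · intro b hb
      have hmem : ∀ s : ℝ, 0 < s →
          (φ ((1 + s) * θhat) - (1 + s) * φ θhat) / s ∈
            {y : ℝ | ∃ s : ℝ, 0 < s ∧ ∃ θ ∈ Set.Ico θhat 1,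
              y = (φ ((1 + s) * θ) - (1 + s) * φ θ) / s} := by
        intro s hs
        exact ⟨s, hs, θhat, ⟨le_refl _, hθ1⟩, rfl⟩
      -- the function s ↦ φ((1+s)θhat) has derivative φ' θhat * θhat at 0
      have hψ : HasDerivAt (fun s : ℝ => φ ((1 + s) * θhat)) (φ' θhat * θhat) 0 := by
        have hg : HasDerivAt (fun s : ℝ => (1 + s) * θhat) θhat 0 := by
          simpa using ((hasDerivAt_id (0:ℝ)).const_add 1).mul_const θhat
        have := (hderiv ((1 + (0:ℝ)) * θhat)).comp 0 hg
        simp only [add_zero, one_mul] at this; exact this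
      have hslope : Filter.Tendsto
          (fun s : ℝ => (φ ((1 + s) * θhat) - (1 + s) * φ θhat) / s)
          (nhdsWithin 0 (Set.Ioi 0)) (nhds L) := by
        have h1' := hasDerivAt_iff_tendsto_slope.mp hψ
        have h2' : Filter.Tendsto (slope (fun s : ℝ => φ ((1 + s) * θhat)) 0)
            (nhdsWithin 0 (Set.Ioi 0)) (nhds (φ' θhat * θhat)) :=
          h1'.mono_left (nhdsWithin_mono _ (fun x hx => ne_of_gt hx))
        have heqf : ∀ s ∈ Set.Ioi (0:ℝ),
            slope (fun s : ℝ => φ ((1 + s) * θhat)) 0 s - φ θhat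
              = (φ ((1 + s) * θhat) - (1 + s) * φ θhat) / s := by
          intro s hs
          have hs0 : s ≠ 0 := ne_of_gt hs
          rw [slope_def_field]
          field_simp
          ring
        have := h2'.sub (tendsto_const_nhds (x := φ θhat))
        have hfinal : Filter.Tendsto
            (fun s : ℝ => slope (fun s : ℝ => φ ((1 + s) * θhat)) 0 s - φ θhat)
            (nhdsWithin 0 (Set.Ioi 0)) (nhds (φ' θhat * θhat - φ θhat)) := this
        have : Filter.Tendsto
            (fun s : ℝ => (φ ((1 + s) * θhat) - (1 + s) * φ θhat) / s)
            (nhdsWithin 0 (Set.Ioi 0)) (nhds (φ' θhat * θhat - φ θhat)) := by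
          apply hfinal.congr'
          filter_upwards [self_mem_nhdsWithin] with s hs
          exact heqf s hs
        simpa [hL, mul_comm] using this
      refine ge_of_tendsto hslope ?_
      filter_upwards [self_mem_nhdsWithin] with s hs
      exact hb (hmem s hs)
end

section
/- Let X be a nonempty finite set, let W0 and W1 be transition matrices on X with all entries strictly positive (Σ_x W_i(x|x̄) = 1 for every x̄, and W_i(x|x̄) > 0 for all x, x̄), and let P0 and P1 be strictly positive probability distributions on X. For n ≥ 1 and i ∈ {0,1} let Q_i^n be the distribution on X^{n+1} defined by Q_i^n(x_1, …, x_{n+1}) := P_i(x_1) ∏_{j=1}^n W_i(x_{j+1}|x_j). Let s ∈ (−1, ∞) with s ≠ 0, and define D_{1+s}(Q‖Q') := (1/s) log Σ_z Q(z)^{1+s} Q'(z)^{−s} for strictly positive distributions Q, Q' on the same finite set. Suppose λ > 0 and v : X → ℝ with v(x) ≥ 1 for all x satisfy Σ_x W0(x|x̄)^{1+s} W1(x|x̄)^{−s} v(x) = λ v(x̄) for every x̄ ∈ X. Then lim_{n→∞} (1/n) · D_{1+s}( Q_0^n ‖ Q_1^n ) = (log λ)/s. -/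
lemma aux_chain {X : Type*} [Fintype X] (M : X → X → ℝ) (v : X → ℝ) (lam : ℝ)
    (heig : ∀ x', ∑ x, M x x' * v x = lam * v x') :
    ∀ (n : ℕ) (h : X → ℝ),
      ∑ z : Fin (n + 1) → X,
        h (z 0) * (∏ j : Fin n, M (z j.succ) (z j.castSucc)) * v (z (Fin.last n))
      = lam ^ n * ∑ x, h x * v x := by
  intro n
  induction n with
  | zero =>
    intro h
    rw [← (Equiv.funUnique (Fin 1) X).symm.sum_comp]
    simp [Fin.last]
  | succ n ih =>
    intro h
    rw [← (Fin.consEquiv (fun _ : Fin (n + 2) => X)).sum_comp]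
    rw [Fintype.sum_prod_type]
    simp only [Fin.consEquiv_apply, Fin.cons_zero, Fin.prod_univ_succ, Fin.cons_succ,
      Fin.castSucc_zero, ← Fin.succ_last, ← Fin.succ_castSucc]
    rw [Finset.sum_comm]
    have h2 : ∀ z : Fin (n + 1) → X,
        (∑ x : X, h x * (M (z 0) x * ∏ j : Fin n, M (z j.succ) (z j.castSucc)) *
          v (z (Fin.last n)))
        = ((fun y => ∑ x : X, h x * M y x) (z 0) *
            ∏ j : Fin n, M (z j.succ) (z j.castSucc)) * v (z (Fin.last n)) := by
      intro z
      simp only []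
      rw [Finset.sum_mul, Finset.sum_mul]
      exact Finset.sum_congr rfl fun x _ => by ring
    rw [Finset.sum_congr rfl fun z _ => h2 z, ih (fun y => ∑ x : X, h x * M y x)]
    have h3 : ∑ y, (∑ x, h x * M y x) * v y = lam * ∑ x, h x * v x := by
      calc ∑ y, (∑ x, h x * M y x) * v y = ∑ y, ∑ x, h x * (M y x * v y) := by
            refine Finset.sum_congr rfl fun y _ => ?_
            rw [Finset.sum_mul]
            exact Finset.sum_congr rfl fun x _ => by ring
        _ = ∑ x, ∑ y, h x * (M y x * v y) := Finset.sum_comm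
        _ = ∑ x, h x * (lam * v x) := by
            refine Finset.sum_congr rfl fun x _ => ?_
            rw [← Finset.mul_sum]
            congr 1
            rw [← heig x]
        _ = lam * ∑ x, h x * v x := by
            rw [Finset.mul_sum]
            exact Finset.sum_congr rfl fun x _ => by ring
    rw [h3]
    ring




/-- the normalized relative Rényi entropy between two Markov
chains converges to `(log λ)/s`, where `λ` is the Perron–Frobenius eigenvalue
of the matrix `W0(x|x̄)^{1+s} W1(x|x̄)^{-s}`, for any initial distributions. -/
theorem stmt_19 {X : Type*} [Fintype X] [Nonempty X]
    (W0 W1 : X → X → ℝ)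
    (hW0pos : ∀ x x', 0 < W0 x x') (hW1pos : ∀ x x', 0 < W1 x x')
    (hW0 : ∀ x', ∑ x, W0 x x' = 1) (hW1 : ∀ x', ∑ x, W1 x x' = 1)
    (P0 P1 : X → ℝ) (hP0pos : ∀ x, 0 < P0 x) (hP1pos : ∀ x, 0 < P1 x)
    (hP0 : ∑ x, P0 x = 1) (hP1 : ∑ x, P1 x = 1)
    (Q0 Q1 : (n : ℕ) → (Fin (n + 1) → X) → ℝ)
    (hQ0 : ∀ n (x : Fin (n + 1) → X),
      Q0 n x = P0 (x 0) * ∏ j : Fin n, W0 (x j.succ) (x j.castSucc))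
    (hQ1 : ∀ n (x : Fin (n + 1) → X),
      Q1 n x = P1 (x 0) * ∏ j : Fin n, W1 (x j.succ) (x j.castSucc))
    (s : ℝ) (hs1 : -1 < s) (hs0 : s ≠ 0)
    (lam : ℝ) (hlam : 0 < lam)
    (v : X → ℝ) (hv : ∀ x, 1 ≤ v x)
    (heig : ∀ x', ∑ x, W0 x x' ^ (1 + s) * W1 x x' ^ (-s) * v x = lam * v x') :
    Filter.Tendsto
      (fun n : ℕ => (1 / (n : ℝ)) *
        ((1 / s) * Real.log (∑ z : Fin (n + 1) → X, Q0 n z ^ (1 + s) * Q1 n z ^ (-s))))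
      Filter.atTop (nhds (Real.log lam / s)) := by
  classical
  set g : X → ℝ := fun x => P0 x ^ (1 + s) * P1 x ^ (-s) with hg
  set Mf : X → X → ℝ := fun x x' => W0 x x' ^ (1 + s) * W1 x x' ^ (-s) with hMfdef
  have hgpos : ∀ x, 0 < g x := fun x =>
    mul_pos (Real.rpow_pos_of_pos (hP0pos x) _) (Real.rpow_pos_of_pos (hP1pos x) _)
  have hMfpos : ∀ x x', 0 < Mf x x' := fun x x' =>
    mul_pos (Real.rpow_pos_of_pos (hW0pos x x') _) (Real.rpow_pos_of_pos (hW1pos x x') _)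
  -- rewrite the summand
  have hterm : ∀ n (z : Fin (n + 1) → X),
      Q0 n z ^ (1 + s) * Q1 n z ^ (-s)
        = g (z 0) * ∏ j : Fin n, Mf (z j.succ) (z j.castSucc) := by
    intro n z
    rw [hQ0, hQ1,
      Real.mul_rpow (hP0pos _).le (Finset.prod_nonneg fun j _ => (hW0pos _ _).le),
      Real.mul_rpow (hP1pos _).le (Finset.prod_nonneg fun j _ => (hW1pos _ _).le),
      ← Real.finset_prod_rpow _ _ (fun j _ => (hW0pos _ _).le) (1 + s),
      ← Real.finset_prod_rpow _ _ (fun j _ => (hW1pos _ _).le) (-s)]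
    simp only [hg, hMfdef]
    rw [Finset.prod_mul_distrib]
    ring
  set Zf : ℕ → ℝ := fun n => ∑ z : Fin (n + 1) → X,
    g (z 0) * ∏ j : Fin n, Mf (z j.succ) (z j.castSucc) with hZf
  set c : ℝ := ∑ x, g x * v x with hc
  have hcpos : 0 < c :=
    Finset.sum_pos (fun x _ => mul_pos (hgpos x) (lt_of_lt_of_le one_pos (hv x)))
      Finset.univ_nonempty
  have hFn : ∀ n : ℕ,
      ∑ z : Fin (n + 1) → X,
        g (z 0) * (∏ j : Fin n, Mf (z j.succ) (z j.castSucc)) * v (z (Fin.last n))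
      = lam ^ n * c := fun n => aux_chain Mf v lam heig n g
  obtain ⟨xm, hxm⟩ := Finite.exists_max v
  set V : ℝ := v xm with hV
  have hV1 : 1 ≤ V := hv xm
  have hVpos : 0 < V := lt_of_lt_of_le one_pos hV1
  have htpos : ∀ n (z : Fin (n + 1) → X),
      0 < g (z 0) * ∏ j : Fin n, Mf (z j.succ) (z j.castSucc) := fun n z =>
    mul_pos (hgpos _) (Finset.prod_pos fun j _ => hMfpos _ _)
  have hZpos : ∀ n, 0 < Zf n := fun n =>
    Finset.sum_pos (fun z _ => htpos n z) Finset.univ_nonempty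
  have hupper : ∀ n, Zf n ≤ lam ^ n * c := by
    intro n
    rw [← hFn n]
    exact Finset.sum_le_sum fun z _ => le_mul_of_one_le_right (htpos n z).le (hv _)
  have hlower : ∀ n, lam ^ n * c ≤ V * Zf n := by
    intro n
    rw [← hFn n, hZf]
    rw [Finset.mul_sum]
    refine Finset.sum_le_sum fun z _ => ?_
    calc g (z 0) * (∏ j : Fin n, Mf (z j.succ) (z j.castSucc)) * v (z (Fin.last n))
        ≤ g (z 0) * (∏ j : Fin n, Mf (z j.succ) (z j.castSucc)) * V :=
          mul_le_mul_of_nonneg_left (hxm _) (htpos n z).le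
      _ = V * (g (z 0) * ∏ j : Fin n, Mf (z j.succ) (z j.castSucc)) := by ring
  set L : ℕ → ℝ := fun n => Real.log (Zf n) with hL
  have hLup : ∀ n : ℕ, L n ≤ n * Real.log lam + Real.log c := by
    intro n
    have h1 : L n ≤ Real.log (lam ^ n * c) := Real.log_le_log (hZpos n) (hupper n)
    rwa [Real.log_mul (pow_ne_zero n hlam.ne') hcpos.ne', Real.log_pow] at h1
  have hLlo : ∀ n : ℕ, n * Real.log lam + Real.log c - Real.log V ≤ L n := by
    intro n
    have h1 : lam ^ n * c / V ≤ Zf n := (div_le_iff₀' hVpos).mpr (hlower n)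
    have h2 : Real.log (lam ^ n * c / V) ≤ L n :=
      Real.log_le_log (by positivity) h1
    rwa [Real.log_div (by positivity) hVpos.ne',
      Real.log_mul (pow_ne_zero n hlam.ne') hcpos.ne', Real.log_pow] at h2
  -- reduce the goal
  have hfun : (fun n : ℕ => (1 / (n : ℝ)) *
      ((1 / s) * Real.log (∑ z : Fin (n + 1) → X, Q0 n z ^ (1 + s) * Q1 n z ^ (-s))))
      = fun n : ℕ => (1 / s) * ((1 / (n : ℝ)) * L n) := by
    funext n
    rw [Finset.sum_congr rfl fun z _ => hterm n z]
    simp only [hL, hZf]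
    ring
  rw [hfun]
  have hmain : Filter.Tendsto (fun n : ℕ => (1 / (n : ℝ)) * L n)
      Filter.atTop (nhds (Real.log lam)) := by
    have h0 : Filter.Tendsto (fun n : ℕ => 1 / (n : ℝ)) Filter.atTop (nhds 0) :=
      tendsto_one_div_atTop_nhds_zero_nat
    refine tendsto_of_tendsto_of_tendsto_of_le_of_le'
      (g := fun n : ℕ => Real.log lam + (1 / (n : ℝ)) * (Real.log c - Real.log V))
      (h := fun n : ℕ => Real.log lam + (1 / (n : ℝ)) * Real.log c)
      ?_ ?_ ?_ ?_
    · simpa using tendsto_const_nhds.add (h0.mul_const (Real.log c - Real.log V))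
    · simpa using tendsto_const_nhds.add (h0.mul_const (Real.log c))
    · filter_upwards [Filter.eventually_ge_atTop 1] with n hn
      have hnpos : (0:ℝ) < (n:ℝ) := by exact_mod_cast hn
      have h1 := mul_le_mul_of_nonneg_left (hLlo n) (le_of_lt (one_div_pos.mpr hnpos))
      calc Real.log lam + (1 / (n : ℝ)) * (Real.log c - Real.log V)
          = (1 / (n : ℝ)) * ((n : ℝ) * Real.log lam + Real.log c - Real.log V) := by
            field_simp
            ring
        _ ≤ (1 / (n : ℝ)) * L n := h1
    · filter_upwards [Filter.eventually_ge_atTop 1] with n hn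
      have hnpos : (0:ℝ) < (n:ℝ) := by exact_mod_cast hn
      have h1 := mul_le_mul_of_nonneg_left (hLup n) (le_of_lt (one_div_pos.mpr hnpos))
      calc (1 / (n : ℝ)) * L n ≤ (1 / (n : ℝ)) * ((n : ℝ) * Real.log lam + Real.log c) := h1
        _ = Real.log lam + (1 / (n : ℝ)) * Real.log c := by
            field_simp
  have := hmain.const_mul (1 / s)
  simpa [one_div, div_eq_inv_mul] using this
end
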